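/- arXiv:2301.08469 — 7 statements merged into one kernel-verified Lean document; each statement's English description precedes it below -/
import Mathlib

section
/- For every computably enumerable transitive relation ≺ on ℕ there exists a computable relation ⊏ on ℕ that is a strict partial order (irreflexive and transitive) such that the space of ideals I(≺) is homeomorphic to the space of ideals I(⊏). -/
/-- An ideal of a (transitive) relation `r` on `S`: a nonempty, downward closed,
directed subset of `S`. -/
def IsIdeal {S : Type*} (r : S → S → Prop) (I : Set S) : Prop :=
  I.Nonempty ∧ (∀ a ∈ I, ∀ b, r b a → b ∈ I) ∧
    ∀ a ∈ I, ∀ b ∈ I, ∃ c ∈ I, r a c ∧ r b c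

/-- The space of ideals of a relation `r`. -/
def IdealSpace {S : Type*} (r : S → S → Prop) : Type _ :=
  {I : Set S // IsIdeal r I}

/-- The topology on the space of ideals, generated by the basic sets
`[a] = {I | a ∈ I}` for `a : S`. -/
instance {S : Type*} (r : S → S → Prop) : TopologicalSpace (IdealSpace r) :=
  TopologicalSpace.generateFrom {U | ∃ a : S, U = {I : IdealSpace r | a ∈ I.1}}

/-- A predicate is recursively enumerable (computably enumerable) if the partial
function `fun a => Part.assert (p a) fun _ => Part.some ()` is partial recursive.
(This is Mathlib's `REPred`, absent from this Mathlib version.) -/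
def REPredOld {α : Type*} [Primcodable α] (p : α → Prop) : Prop :=
  Partrec fun a => Part.assert (p a) fun _ => Part.some ()

open Nat.Partrec (Code)
open Nat.Partrec.Code

namespace Stmt0Aux

def Rb (c : Code) (s m : ℕ) : Bool := (evaln s c m).isSome

def Gl (c : Code) (s : ℕ) : ℕ → List ℕ
  | 0 => (List.range (s * s)).filter (Rb c s)
  | n + 1 => (List.range (s * s)).filter fun m =>
      decide (m ∈ Gl c s n) ||
      decide (0 < ((List.range s).filter fun x =>
          decide (Nat.pair m.unpair.1 x ∈ Gl c s n) && Rb c s (Nat.pair x m.unpair.2)).length)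

def Gb (c : Code) (s n a b : ℕ) : Bool := decide (Nat.pair a b ∈ Gl c s n)

lemma pair_lt_sq {a b s : ℕ} (ha : a < s) (hb : b < s) : Nat.pair a b < s * s := by
  rcases Nat.lt_or_ge a b with h | h
  · have : b * b + a < s * s := by nlinarith
    simpa [Nat.pair, h]
  · have : a * a + a + b < s * s := by nlinarith
    simpa [Nat.pair, Nat.not_lt.mpr h]

lemma lt_of_pair_lt_sq {a b s : ℕ} (h : Nat.pair a b < s * s) : a < s ∧ b < s := by
  rcases Nat.lt_or_ge a b with h' | h'
  · simp only [Nat.pair, h', if_pos] at h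
    constructor <;> nlinarith
  · simp only [Nat.pair, Nat.not_lt.mpr h', if_neg, if_false] at h
    constructor <;> nlinarith

lemma Rb_bound {c s m} (h : Rb c s m = true) : m < s := by
  simp only [Rb, Option.isSome_iff_exists] at h
  obtain ⟨x, hx⟩ := h
  exact evaln_bound hx

lemma Rb_mono {c s s' m} (hs : s ≤ s') (h : Rb c s m = true) : Rb c s' m = true := by
  simp only [Rb, Option.isSome_iff_exists] at h ⊢
  obtain ⟨x, hx⟩ := h
  exact ⟨x, evaln_mono hs hx⟩

/-- Prop version. -/
def GP (c : Code) (s n a b : ℕ) : Prop := Gb c s n a b = true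

lemma GP_zero_iff {c s a b} : GP c s 0 a b ↔ Rb c s (Nat.pair a b) = true := by
  constructor
  · intro h
    exact (by simpa [GP, Gb, Gl, List.mem_filter] using h : _ ∧ _).2
  · intro h
    have hm := Rb_bound h
    have hs : 1 ≤ s := by omega
    have : Nat.pair a b < s * s := lt_of_lt_of_le hm (Nat.le_mul_of_pos_left s hs)
    simp [GP, Gb, Gl, List.mem_filter, this, h]

lemma GP_succ_iff {c s n a b} : GP c s (n + 1) a b ↔
    (a < s ∧ b < s) ∧ (GP c s n a b ∨ ∃ x < s, GP c s n a x ∧ Rb c s (Nat.pair x b) = true) := by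
  simp only [GP, Gb, Gl, List.mem_filter, List.mem_range, decide_eq_true_eq,
    Bool.or_eq_true, List.length_pos_iff_exists_mem,
    Bool.and_eq_true, Nat.unpair_pair]
  constructor
  · rintro ⟨hlt, h⟩
    refine ⟨lt_of_pair_lt_sq hlt, ?_⟩
    rcases h with h | ⟨x, hx⟩
    · exact Or.inl h
    · exact Or.inr ⟨x, hx.1, hx.2.1, hx.2.2⟩
  · rintro ⟨⟨ha, hb⟩, h⟩
    refine ⟨pair_lt_sq ha hb, ?_⟩
    rcases h with h | ⟨x, hx, h1, h2⟩
    · exact Or.inl h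
    · exact Or.inr ⟨x, by simp [List.mem_filter, List.mem_range, hx, h1, h2]⟩

lemma GP_bound {c s n a b} (h : GP c s n a b) : a < s ∧ b < s := by
  cases n with
  | zero =>
    have := Rb_bound (GP_zero_iff.mp h)
    exact ⟨lt_of_le_of_lt (Nat.left_le_pair a b) this, lt_of_le_of_lt (Nat.right_le_pair a b) this⟩
  | succ n => exact (GP_succ_iff.mp h).1

lemma GP_mono_n {c s n a b} (h : GP c s n a b) : GP c s (n + 1) a b :=
  GP_succ_iff.mpr ⟨GP_bound h, Or.inl h⟩

lemma GP_mono_n' {c s n n' a b} (hn : n ≤ n') (h : GP c s n a b) : GP c s n' a b := by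
  induction hn with
  | refl => exact h
  | step _ ih => exact GP_mono_n (by exact ih)

lemma GP_mono_s {c s s' n a b} (hs : s ≤ s') (h : GP c s n a b) : GP c s' n a b := by
  induction n generalizing a b with
  | zero => exact GP_zero_iff.mpr (Rb_mono hs (GP_zero_iff.mp h))
  | succ n ih =>
    obtain ⟨⟨ha, hb⟩, h⟩ := GP_succ_iff.mp h
    refine GP_succ_iff.mpr ⟨⟨ha.trans_le hs, hb.trans_le hs⟩, ?_⟩
    rcases h with h | ⟨x, hx, h1, h2⟩
    · exact Or.inl (ih h)
    · exact Or.inr ⟨x, hx.trans_le hs, ih h1, Rb_mono hs h2⟩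

lemma GP_compose {c s n m a x b} (h1 : GP c s n a x) (h2 : GP c s m x b) :
    GP c s (n + m + 1) a b := by
  induction m generalizing b with
  | zero =>
    have hr := GP_zero_iff.mp h2
    have hb : b < s := lt_of_le_of_lt (Nat.right_le_pair x b) (Rb_bound hr)
    exact GP_succ_iff.mpr ⟨⟨(GP_bound h1).1, hb⟩, Or.inr ⟨x, (GP_bound h1).2, h1, hr⟩⟩
  | succ m ih =>
    obtain ⟨⟨hx, hb⟩, h⟩ := GP_succ_iff.mp h2
    rcases h with h | ⟨y, hy, hg, hr⟩
    · exact GP_mono_n (ih h)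
    · exact GP_succ_iff.mpr ⟨⟨(GP_bound h1).1, hb⟩, Or.inr ⟨y, hy, ih hg, hr⟩⟩

/-! ### Computability -/

lemma primrec_filter {α β : Type*} [Primcodable α] [Primcodable β]
    {f : α → List β} {p : α → β → Bool} (hf : Primrec f) (hp : Primrec₂ p) :
    Primrec fun a => (f a).filter (p a) := by
  have h : Primrec fun a => (f a).flatMap fun b => if p a b = true then [b] else [] := by
    refine Primrec.list_flatMap hf ?_
    refine Primrec.ite ?_ ?_ (Primrec.const [])
    · exact Primrec.primrecPred ((hp.comp Primrec.fst Primrec.snd).of_eq fun a => by simp)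
    · exact (Primrec.list_cons.comp Primrec.snd (Primrec.const [])).of_eq fun a => by simp
  refine h.of_eq fun a => ?_
  induction f a with
  | nil => simp
  | cons b l ih =>
    by_cases hb : p a b = true <;> simp [hb, List.filter_cons, ih]

lemma primrec_mem : Primrec₂ fun (m : ℕ) (l : List ℕ) => decide (m ∈ l) := by
  have : Primrec fun p : ℕ × List ℕ => decide (p.2.idxOf p.1 < p.2.length) :=
    (Primrec.nat_lt.comp (Primrec.list_idxOf.comp Primrec.fst Primrec.snd)
      (Primrec.list_length.comp Primrec.snd)).decide
  exact this.to₂.of_eq fun m l => by simp [List.idxOf_lt_length_iff]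

lemma primrec_Rb (c : Code) : Primrec₂ (Rb c) := by
  have h : Primrec fun p : ℕ × ℕ => evaln p.1 c p.2 :=
    primrec_evaln.comp ((Primrec.fst.pair (Primrec.const c)).pair Primrec.snd)
  exact (Primrec.option_isSome.comp h).to₂

lemma primrec_Gl (c : Code) : Primrec₂ (Gl c) := by
  have hbase : Primrec fun s : ℕ => Gl c s 0 := by
    refine primrec_filter (Primrec.list_range.comp (Primrec.nat_mul.comp .id .id)) ?_
    exact (primrec_Rb c)
  have hstep : Primrec fun q : ℕ × (ℕ × (ℕ × List ℕ)) =>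
      (List.range (q.1 * q.1)).filter fun m =>
        decide (m ∈ q.2.2.2) ||
        decide (0 < ((List.range q.1).filter fun x =>
            decide (Nat.pair m.unpair.1 x ∈ q.2.2.2) && Rb c q.1 (Nat.pair x m.unpair.2)).length) := by
    set π : ℕ × (ℕ × (ℕ × List ℕ)) → ℕ := fun q => q.1 with hπ
    have hs : Primrec π := Primrec.fst
    have hprev : Primrec fun q : ℕ × (ℕ × (ℕ × List ℕ)) => q.2.2.2 :=
      Primrec.snd.comp (Primrec.snd.comp Primrec.snd)
    refine primrec_filter (Primrec.list_range.comp (Primrec.nat_mul.comp hs hs)) ?_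
    have h1 : Primrec₂ fun (q : ℕ × (ℕ × (ℕ × List ℕ))) (m : ℕ) => decide (m ∈ q.2.2.2) :=
      primrec_mem.comp₂ Primrec₂.right (hprev.comp Primrec.fst).to₂
    have hinner : Primrec fun t : (ℕ × (ℕ × (ℕ × List ℕ))) × ℕ =>
        ((List.range t.1.1).filter fun x =>
          decide (Nat.pair t.2.unpair.1 x ∈ t.1.2.2.2) && Rb c t.1.1 (Nat.pair x t.2.unpair.2)).length := by
      refine Primrec.list_length.comp (primrec_filter (Primrec.list_range.comp (hs.comp Primrec.fst)) ?_)
      have ha : Primrec₂ fun (t : (ℕ × (ℕ × (ℕ × List ℕ))) × ℕ) (x : ℕ) =>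
          decide (Nat.pair t.2.unpair.1 x ∈ t.1.2.2.2) :=
        primrec_mem.comp₂
          (Primrec₂.natPair.comp₂ ((Primrec.fst.comp (Primrec.unpair.comp (Primrec.snd.comp Primrec.fst))).to₂) Primrec₂.right)
          ((hprev.comp (Primrec.fst.comp Primrec.fst)).to₂)
      have hb : Primrec₂ fun (t : (ℕ × (ℕ × (ℕ × List ℕ))) × ℕ) (x : ℕ) =>
          Rb c t.1.1 (Nat.pair x t.2.unpair.2) :=
        (primrec_Rb c).comp₂ ((hs.comp (Primrec.fst.comp Primrec.fst)).to₂)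
          (Primrec₂.natPair.comp₂ Primrec₂.right
            ((Primrec.snd.comp (Primrec.unpair.comp (Primrec.snd.comp Primrec.fst))).to₂))
      exact (Primrec.dom_bool₂ (· && ·)).comp₂ ha hb
    have h2 : Primrec₂ fun (q : ℕ × (ℕ × (ℕ × List ℕ))) (m : ℕ) =>
        decide (0 < ((List.range q.1).filter fun x =>
          decide (Nat.pair m.unpair.1 x ∈ q.2.2.2) && Rb c q.1 (Nat.pair x m.unpair.2)).length) :=
      (Primrec.nat_lt.comp (Primrec.const 0) hinner).decide.to₂
    exact (Primrec.dom_bool₂ (· || ·)).comp₂ h1 h2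
  have hg : Primrec₂ fun (s : ℕ) (p : ℕ × List ℕ) =>
      (List.range (s * s)).filter fun m =>
        decide (m ∈ p.2) ||
        decide (0 < ((List.range s).filter fun x =>
            decide (Nat.pair m.unpair.1 x ∈ p.2) && Rb c s (Nat.pair x m.unpair.2)).length) := by
    have := hstep.comp (Primrec.pair (Primrec.fst (α := ℕ) (β := ℕ × List ℕ))
      (Primrec.pair (Primrec.fst.comp Primrec.snd)
        (Primrec.pair (Primrec.fst.comp Primrec.snd) (Primrec.snd.comp Primrec.snd))))
    exact this.to₂
  have H := Primrec.nat_rec hbase hg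
  refine H.of_eq fun s n => ?_
  induction n with
  | zero => rfl
  | succ n ih => simp only [Gl]; rw [← ih]; rfl

/-! ### The strict order -/

section
variable {prec : ℕ → ℕ → Prop} {c : Code}

/-- The computable strict order. -/
def sqP (c : Code) (p q : ℕ) : Prop :=
  p.unpair.2 < q.unpair.2 ∧
    GP c q.unpair.2 (q.unpair.2 - p.unpair.2 - 1) p.unpair.1 q.unpair.1

lemma sqP_irrefl (c : Code) : Irreflexive (sqP c) := fun _ h => lt_irrefl _ h.1

lemma sqP_trans (c : Code) : Transitive (sqP c) := by
  rintro p q r ⟨h1, g1⟩ ⟨h2, g2⟩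
  refine ⟨h1.trans h2, ?_⟩
  have g1' := GP_mono_s h2.le g1
  have := GP_compose g1' g2
  have harith : (q.unpair.2 - p.unpair.2 - 1) + (r.unpair.2 - q.unpair.2 - 1) + 1
      = r.unpair.2 - p.unpair.2 - 1 := by omega
  rwa [harith] at this

variable (hsound : ∀ s a b, Rb c s (Nat.pair a b) = true → prec a b)
  (hcomp : ∀ a b, prec a b → ∃ s, Rb c s (Nat.pair a b) = true)
  (htrans : Transitive prec)

include hsound htrans in
lemma GP_sound {s n a b} (h : GP c s n a b) : prec a b := by
  induction n generalizing b with
  | zero => exact hsound _ _ _ (GP_zero_iff.mp h)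
  | succ n ih =>
    obtain ⟨_, h | ⟨x, _, h1, h2⟩⟩ := GP_succ_iff.mp h
    · exact ih h
    · exact htrans (ih h1) (hsound _ _ _ h2)

include hcomp in
lemma GP_comp {a b} (h : prec a b) : ∃ s₀, ∀ s ≥ s₀, ∀ n, GP c s n a b := by
  obtain ⟨s, hs⟩ := hcomp a b h
  exact ⟨s, fun s' hs' n => GP_mono_n' (Nat.zero_le n)
    (GP_zero_iff.mpr (Rb_mono hs' hs))⟩

include hsound htrans in
lemma sqP_sound {p q} (h : sqP c p q) : prec p.unpair.1 q.unpair.1 :=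
  GP_sound hsound htrans h.2

/-! ### Ideal correspondence -/

/-- The forward map on sets. -/
def ψs (I : Set ℕ) : Set ℕ := {p | p.unpair.1 ∈ I}

/-- The backward map on sets. -/
def φs (J : Set ℕ) : Set ℕ := {a | ∃ s, Nat.pair a s ∈ J}

include hsound htrans hcomp in
lemma ψs_ideal {I : Set ℕ} (hI : IsIdeal prec I) : IsIdeal (sqP c) (ψs I) := by
  obtain ⟨⟨a0, ha0⟩, hlow, hdir⟩ := hI
  refine ⟨⟨Nat.pair a0 0, by simp [ψs, ha0]⟩, ?_, ?_⟩
  · intro p hp q hq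
    exact hlow _ hp _ (sqP_sound hsound htrans hq)
  · intro p hp q hq
    obtain ⟨e, he, hpe, hqe⟩ := hdir _ hp _ hq
    obtain ⟨s₁, hs₁⟩ := GP_comp hcomp hpe
    obtain ⟨s₂, hs₂⟩ := GP_comp hcomp hqe
    set u := max (max s₁ s₂) (max p.unpair.2 q.unpair.2) + 1 with hu
    refine ⟨Nat.pair e u, by simp [ψs, he], ?_, ?_⟩
    · exact ⟨by simp [Nat.unpair_pair]; omega,
        by simpa [Nat.unpair_pair] using hs₁ u (by omega) _⟩
    · exact ⟨by simp [Nat.unpair_pair]; omega,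
        by simpa [Nat.unpair_pair] using hs₂ u (by omega) _⟩

lemma bigstage {J : Set ℕ} (hJ : IsIdeal (sqP c) J) {p} (hp : p ∈ J) (n : ℕ) :
    ∃ q ∈ J, sqP c p q ∧ n < q.unpair.2 := by
  obtain ⟨_, _, hdir⟩ := hJ
  induction n with
  | zero =>
    obtain ⟨q, hq, hpq, -⟩ := hdir _ hp _ hp
    exact ⟨q, hq, hpq, by have := hpq.1; omega⟩
  | succ n ih =>
    obtain ⟨q, hq, hpq, hn⟩ := ih
    obtain ⟨r, hr, hqr, -⟩ := hdir _ hq _ hq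
    exact ⟨r, hr, sqP_trans c hpq hqr, by have := hqr.1; omega⟩

include hsound htrans hcomp in
/-- The key lemma: from an element of an `sqP`-ideal one can reach, at every stage,
any `b` dominated by everything `prec`-above `p.unpair.1`. -/
lemma reach {J : Set ℕ} (hJ : IsIdeal (sqP c) J) {p b} (hp : p ∈ J)
    (hb : ∀ e, prec p.unpair.1 e → prec b e) (t : ℕ) : Nat.pair b t ∈ J := by
  obtain ⟨q, hq, hpq, hqt⟩ := bigstage hJ hp t
  have hbq : prec b q.unpair.1 := hb _ (sqP_sound hsound htrans hpq)
  obtain ⟨k, hk⟩ := hcomp _ _ hbq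
  obtain ⟨r, hr, hqr, hrk⟩ := bigstage hJ hq k
  -- compose
  have h0 : GP c r.unpair.2 0 b q.unpair.1 :=
    GP_zero_iff.mpr (Rb_mono (by omega) hk)
  have h1 : GP c r.unpair.2 (r.unpair.2 - q.unpair.2 - 1) q.unpair.1 r.unpair.1 := hqr.2
  have h2 := GP_compose h0 h1
  have hlt : q.unpair.2 < r.unpair.2 := hqr.1
  have harr : (0 + (r.unpair.2 - q.unpair.2 - 1) + 1) ≤ r.unpair.2 - t - 1 := by omega
  have h3 : GP c r.unpair.2 (r.unpair.2 - t - 1) b r.unpair.1 := GP_mono_n' harr h2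
  have hsq : sqP c (Nat.pair b t) r := by
    refine ⟨?_, ?_⟩ <;> simp [Nat.unpair_pair]
    · omega
    · exact h3
  exact hJ.2.1 _ hr _ hsq

include hsound htrans hcomp in
lemma φs_ideal {J : Set ℕ} (hJ : IsIdeal (sqP c) J) : IsIdeal prec (φs J) := by
  obtain ⟨⟨p0, hp0⟩, hlow, hdir⟩ := hJ
  refine ⟨⟨p0.unpair.1, p0.unpair.2, by simpa [Nat.pair_unpair] using hp0⟩, ?_, ?_⟩
  · rintro a ⟨s, hs⟩ b hba
    refine ⟨0, reach hsound hcomp htrans ⟨⟨p0, hp0⟩, hlow, hdir⟩ hs ?_ 0⟩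
    intro e he
    rw [Nat.unpair_pair] at he
    exact htrans hba he
  · rintro a ⟨s, hs⟩ b ⟨t, ht⟩
    obtain ⟨q, hq, hq1, hq2⟩ := hdir _ hs _ ht
    refine ⟨q.unpair.1, ⟨q.unpair.2, by simpa [Nat.pair_unpair] using hq⟩, ?_, ?_⟩
    · simpa [Nat.unpair_pair] using sqP_sound hsound htrans hq1
    · simpa [Nat.unpair_pair] using sqP_sound hsound htrans hq2

lemma φs_ψs {I : Set ℕ} : φs (ψs I) = I := by
  ext a
  simp [φs, ψs, Nat.unpair_pair]

include hsound htrans hcomp in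
lemma ψs_φs {J : Set ℕ} (hJ : IsIdeal (sqP c) J) : ψs (φs J) = J := by
  ext p
  simp only [ψs, φs, Set.mem_setOf_eq]
  constructor
  · rintro ⟨s, hs⟩
    have := reach hsound hcomp htrans hJ hs
      (fun e he => by rwa [Nat.unpair_pair] at he) p.unpair.2
    simpa [Nat.pair_unpair] using this
  · intro hp
    exact ⟨p.unpair.2, by simpa [Nat.pair_unpair] using hp⟩

end

end Stmt0Aux
-- appended to full.lean (test version includes the computable_sq from d.lean)
namespace Stmt0Aux
lemma computable_sq (c : Code) :
    Computable fun pq : ℕ × ℕ =>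
      decide (pq.1.unpair.2 < pq.2.unpair.2) &&
        Gb c pq.2.unpair.2 (pq.2.unpair.2 - pq.1.unpair.2 - 1) pq.1.unpair.1 pq.2.unpair.1 := by
  have hu1 : Primrec fun pq : ℕ × ℕ => pq.1.unpair := Primrec.unpair.comp Primrec.fst
  have hu2 : Primrec fun pq : ℕ × ℕ => pq.2.unpair := Primrec.unpair.comp Primrec.snd
  have hlt : Primrec fun pq : ℕ × ℕ => decide (pq.1.unpair.2 < pq.2.unpair.2) :=
    (Primrec.nat_lt.comp (Primrec.snd.comp hu1) (Primrec.snd.comp hu2)).decide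
  have hG : Primrec fun pq : ℕ × ℕ =>
      Gb c pq.2.unpair.2 (pq.2.unpair.2 - pq.1.unpair.2 - 1) pq.1.unpair.1 pq.2.unpair.1 := by
    have hGl : Primrec fun pq : ℕ × ℕ =>
        Gl c pq.2.unpair.2 (pq.2.unpair.2 - pq.1.unpair.2 - 1) :=
      (primrec_Gl c).comp (Primrec.snd.comp hu2)
        (Primrec.nat_sub.comp
          (Primrec.nat_sub.comp (Primrec.snd.comp hu2) (Primrec.snd.comp hu1))
          (Primrec.const 1))
    exact (primrec_mem.comp
      (Primrec₂.natPair.comp (Primrec.fst.comp hu1) (Primrec.fst.comp hu2)) hGl).of_eq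
      fun pq => rfl
  exact ((Primrec.dom_bool₂ (· && ·)).comp hlt hG).to_comp
end Stmt0Aux

open Stmt0Aux
theorem stmt0 (prec : ℕ → ℕ → Prop)
    (hce : REPredOld fun p : ℕ × ℕ => prec p.1 p.2)
    (htrans : Transitive prec) :
    ∃ sq : ℕ → ℕ → Prop,
      ComputablePred (fun p : ℕ × ℕ => sq p.1 p.2) ∧
      Irreflexive sq ∧ Transitive sq ∧
      Nonempty (IdealSpace prec ≃ₜ IdealSpace sq) := by
  classical
  -- extract a code for the c.e. relation
  have h1 : Partrec fun n : ℕ =>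
      Part.assert (prec n.unpair.1 n.unpair.2) fun _ => Part.some () :=
    hce.comp Primrec.unpair.to_comp
  have h2 : Partrec fun n : ℕ =>
      (Part.assert (prec n.unpair.1 n.unpair.2) fun _ => Part.some ()).map fun _ => (0 : ℕ) :=
    h1.map ((Computable.const 0).comp Computable.fst).to₂
  obtain ⟨c, hc⟩ := exists_code.mp (Partrec.nat_iff.mp h2)
  have hsound : ∀ s a b, Rb c s (Nat.pair a b) = true → prec a b := by
    intro s a b h
    rw [Rb, Option.isSome_iff_exists] at h
    obtain ⟨x, hx⟩ := h
    have := evaln_sound hx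
    rw [hc] at this
    simp only [Part.mem_map_iff, Part.mem_assert_iff, Nat.unpair_pair] at this
    obtain ⟨_, ⟨h, _⟩, _⟩ := this
    exact h
  have hcomp : ∀ a b, prec a b → ∃ s, Rb c s (Nat.pair a b) = true := by
    intro a b h
    have h0 : (0 : ℕ) ∈ eval c (Nat.pair a b) := by
      rw [hc]
      simp [Part.mem_map_iff, Part.mem_assert_iff, Nat.unpair_pair, h]
    obtain ⟨k, hk⟩ := evaln_complete.mp h0
    exact ⟨k, by rw [Rb, Option.isSome_iff_exists]; exact ⟨0, hk⟩⟩
  refine ⟨sqP c, ?_, sqP_irrefl c, sqP_trans c, ?_⟩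
  · refine ComputablePred.computable_iff.mpr ⟨_, computable_sq c, ?_⟩
    funext pq
    apply propext
    simp only [sqP, GP, Bool.and_eq_true, decide_eq_true_eq]
  · refine ⟨Homeomorph.mk ⟨fun I => ⟨ψs I.1, ψs_ideal hsound hcomp htrans I.2⟩,
      fun J => ⟨φs J.1, φs_ideal hsound hcomp htrans J.2⟩,
      fun I => Subtype.ext φs_ψs, fun J => Subtype.ext (ψs_φs hsound hcomp htrans J.2)⟩
      ?_ ?_⟩
    · rw [continuous_generateFrom_iff]
      rintro U ⟨p, rfl⟩
      show IsOpen {I : IdealSpace prec | p.unpair.1 ∈ I.1}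
      exact TopologicalSpace.isOpen_generateFrom_of_mem ⟨p.unpair.1, rfl⟩
    · rw [continuous_generateFrom_iff]
      rintro U ⟨a, rfl⟩
      show IsOpen {J : IdealSpace (sqP c) | ∃ s, Nat.pair a s ∈ J.1}
      have : {J : IdealSpace (sqP c) | ∃ s, Nat.pair a s ∈ J.1} =
          ⋃ s : ℕ, {J : IdealSpace (sqP c) | Nat.pair a s ∈ J.1} := by
        ext J
        simp
      rw [this]
      exact isOpen_iUnion fun s => TopologicalSpace.isOpen_generateFrom_of_mem ⟨Nat.pair a s, rfl⟩
end

section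
/- For every computably enumerable transitive relation ≺ on ℕ there exists a computable relation ⊑ on ℕ that is a partial order (reflexive, transitive, antisymmetric) such that the space of ideals I(≺) is homeomorphic to the topological subspace of I(⊑) consisting of the non-principal ideals, i.e. those ideals I of ⊑ that contain no greatest element (no m ∈ I with k ⊑ m for all k ∈ I). -/
/-- A predicate is recursively enumerable (computably enumerable) if the partial
function `fun a => Part.assert (p a) fun _ => Part.some ()` is partial recursive.
(This is Mathlib's `REPred`, absent from this Mathlib version.) -/
def REPred' {α : Type*} [Primcodable α] (p : α → Prop) : Prop :=
  Partrec fun a => Part.assert (p a) fun _ => Part.some ()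

namespace Stmt1Aux
open Nat.Partrec (Code)
open Nat.Partrec.Code

/-- Pairs `(a,b)` with `a, b < u` confirmed by stage `u`. -/
def base (c : Code) (u : ℕ) : List (ℕ × ℕ) :=
  (List.range (u*u)).filterMap fun k =>
    if (Nat.unpair k).1 < u ∧ (Nat.unpair k).2 < u ∧ (evaln u c k).isSome
    then some (Nat.unpair k) else none

def stepL (R : List (ℕ × ℕ)) : List (ℕ × ℕ) :=
  R ++ R.flatMap fun p => R.filterMap fun q => if p.2 = q.1 then some (p.1, q.2) else none

def closN (c : Code) (u : ℕ) (n : ℕ) : List (ℕ × ℕ) :=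
  Nat.rec (base c u) (fun _ ih => stepL ih) n

def clos (c : Code) (u : ℕ) : List (ℕ × ℕ) := closN c u (u*u+1)

lemma pair_lt_mul {a b u : ℕ} (ha : a < u) (hb : b < u) : Nat.pair a b < u * u := by
  unfold Nat.pair
  split <;> nlinarith

lemma mem_base {c : Code} {u a b : ℕ} :
    (a, b) ∈ base c u ↔ a < u ∧ b < u ∧ (evaln u c (Nat.pair a b)).isSome := by
  constructor
  · intro h
    simp only [base, List.mem_filterMap, List.mem_range] at h
    obtain ⟨k, hk, hif⟩ := h
    split_ifs at hif with hcond
    · obtain ⟨h1, h2, h3⟩ := hcond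
      have he : Nat.unpair k = (a, b) := Option.some.inj hif
      have ha : (Nat.unpair k).1 = a := by rw [he]
      have hb : (Nat.unpair k).2 = b := by rw [he]
      have hk' : Nat.pair a b = k := by rw [← ha, ← hb, Nat.pair_unpair]
      rw [ha] at h1; rw [hb] at h2; rw [hk']
      exact ⟨h1, h2, h3⟩
  · rintro ⟨h1, h2, h3⟩
    simp only [base, List.mem_filterMap, List.mem_range]
    exact ⟨Nat.pair a b, pair_lt_mul h1 h2, by simp [Nat.unpair_pair, h1, h2, h3]⟩

lemma mem_stepL {R : List (ℕ × ℕ)} {a b : ℕ} :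
    (a, b) ∈ stepL R ↔ (a, b) ∈ R ∨ ∃ x, (a, x) ∈ R ∧ (x, b) ∈ R := by
  simp only [stepL, List.mem_append, List.mem_flatMap, List.mem_filterMap]
  constructor
  · rintro (h | ⟨p, hp, q, hq, hif⟩)
    · exact Or.inl h
    · split_ifs at hif with he
      · have h := Option.some.inj hif
        have h1 : p.1 = a := congrArg Prod.fst h
        have h2 : q.2 = b := congrArg Prod.snd h
        refine Or.inr ⟨p.2, ?_, ?_⟩
        · rw [← h1]; simpa using hp
        · rw [← h2, he]; simpa using hq
  · rintro (h | ⟨x, h1, h2⟩)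
    · exact Or.inl h
    · exact Or.inr ⟨(a, x), h1, (x, b), h2, by simp⟩


lemma closN_succ {c : Code} {u n : ℕ} : closN c u (n+1) = stepL (closN c u n) := rfl

lemma closN_zero {c : Code} {u : ℕ} : closN c u 0 = base c u := rfl

lemma closN_mono_n {c : Code} {u : ℕ} {m n : ℕ} (h : m ≤ n) {a b : ℕ}
    (hab : (a, b) ∈ closN c u m) : (a, b) ∈ closN c u n := by
  induction n with
  | zero => rwa [Nat.le_zero.1 h] at hab
  | succ n ih =>
    rcases Nat.eq_or_lt_of_le h with h' | h'
    · rwa [h'] at hab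
    · rw [closN_succ, mem_stepL]
      exact Or.inl (ih (Nat.lt_succ_iff.1 h'))

lemma closN_le {c : Code} {u : ℕ} {r : ℕ → ℕ → Prop} (hr : Transitive r)
    (hb : ∀ a b, (a, b) ∈ base c u → r a b) :
    ∀ n a b, (a, b) ∈ closN c u n → r a b := by
  intro n
  induction n with
  | zero => exact hb
  | succ n ih =>
    intro a b hab
    rw [closN_succ, mem_stepL] at hab
    rcases hab with h | ⟨x, h1, h2⟩
    · exact ih a b h
    · exact hr (ih a x h1) (ih x b h2)

lemma closN_lt {c : Code} {u n a b : ℕ} (h : (a, b) ∈ closN c u n) : a < u ∧ b < u := by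
  induction n generalizing a b with
  | zero => exact ⟨(mem_base.1 h).1, (mem_base.1 h).2.1⟩
  | succ n ih =>
    rw [closN_succ, mem_stepL] at h
    rcases h with h | ⟨x, h1, h2⟩
    · exact ih h
    · exact ⟨(ih h1).1, (ih h2).2⟩

lemma stepL_congr {R R' : List (ℕ × ℕ)} (h : ∀ p : ℕ × ℕ, p ∈ R ↔ p ∈ R') :
    ∀ p : ℕ × ℕ, p ∈ stepL R ↔ p ∈ stepL R' := by
  rintro ⟨a, b⟩
  rw [mem_stepL, mem_stepL]
  constructor
  · rintro (hh | ⟨x, h1, h2⟩)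
    · exact Or.inl ((h _).1 hh)
    · exact Or.inr ⟨x, (h _).1 h1, (h _).1 h2⟩
  · rintro (hh | ⟨x, h1, h2⟩)
    · exact Or.inl ((h _).2 hh)
    · exact Or.inr ⟨x, (h _).2 h1, (h _).2 h2⟩

lemma exists_fix (c : Code) (u : ℕ) :
    ∃ n ≤ u * u, ∀ p : ℕ × ℕ, p ∈ closN c u (n+1) ↔ p ∈ closN c u n := by
  by_contra hcon
  push_neg at hcon
  have hstrict : ∀ n ≤ u * u,
      (closN c u n).toFinset ⊂ (closN c u (n+1)).toFinset := by
    intro n hn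
    obtain ⟨p, hp⟩ := hcon n hn
    have hsub : (closN c u n).toFinset ⊆ (closN c u (n+1)).toFinset := by
      intro q hq
      rcases q with ⟨a, b⟩
      rw [List.mem_toFinset] at *
      exact closN_mono_n (Nat.le_succ n) hq
    refine Finset.ssubset_iff_of_subset hsub |>.2 ?_
    have hp1 : p ∈ closN c u (n+1) ∧ p ∉ closN c u n := by
      rcases hp with h | h
      · exact h
      · exact absurd (by rcases p with ⟨a,b⟩; exact closN_mono_n (Nat.le_succ n) h.2) h.1
    exact ⟨p, List.mem_toFinset.2 hp1.1, fun h => hp1.2 (List.mem_toFinset.1 h)⟩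
  have hcard : ∀ n ≤ u * u + 1, n ≤ ((closN c u n).toFinset).card := by
    intro n hn
    induction n with
    | zero => exact Nat.zero_le _
    | succ n ih =>
      have h1 := ih (Nat.le_of_succ_le hn)
      have h2 := Finset.card_lt_card (hstrict n (Nat.lt_succ_iff.1 hn))
      omega
  have hT : (closN c u (u*u+1)).toFinset ⊆ Finset.range u ×ˢ Finset.range u := by
    intro p hp
    rcases p with ⟨a, b⟩
    have := closN_lt (List.mem_toFinset.1 hp)
    simp [Finset.mem_product, this.1, this.2]
  have := Finset.card_le_card hT
  rw [Finset.card_product, Finset.card_range] at this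
  have := hcard (u*u+1) le_rfl
  omega

lemma clos_trans {c : Code} {u : ℕ} : Transitive fun a b => (a, b) ∈ clos c u := by
  intro a x b hax hxb
  obtain ⟨n, hn, hfix⟩ := exists_fix c u
  have hstable : ∀ m, n ≤ m → ∀ p : ℕ × ℕ, p ∈ closN c u m ↔ p ∈ closN c u n := by
    intro m hm
    induction m, hm using Nat.le_induction with
    | base => exact fun p => Iff.rfl
    | succ m hm ih =>
      intro p
      have := stepL_congr ih p
      rw [closN_succ]
      exact this.trans (hfix p)
  have h1 : (a, x) ∈ closN c u n := (hstable (u*u+1) (Nat.le_succ_of_le hn) _).1 hax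
  have h2 : (x, b) ∈ closN c u n := (hstable (u*u+1) (Nat.le_succ_of_le hn) _).1 hxb
  have h3 : (a, b) ∈ closN c u (n+1) := by
    rw [closN_succ, mem_stepL]; exact Or.inr ⟨x, h1, h2⟩
  exact closN_mono_n (by omega : n ≤ u*u+1) ((hfix _).1 h3)

lemma base_subset_clos {c : Code} {u a b : ℕ} (h : (a, b) ∈ base c u) :
    (a, b) ∈ clos c u := closN_mono_n (Nat.zero_le _) h

lemma base_mono {c : Code} {u v a b : ℕ} (huv : u ≤ v) (h : (a, b) ∈ base c u) :
    (a, b) ∈ base c v := by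
  rw [mem_base] at h ⊢
  refine ⟨lt_of_lt_of_le h.1 huv, lt_of_lt_of_le h.2.1 huv, ?_⟩
  obtain ⟨x, hx⟩ := Option.isSome_iff_exists.1 h.2.2
  exact Option.isSome_iff_exists.2 ⟨x, evaln_mono huv hx⟩

lemma clos_mono {c : Code} {u v a b : ℕ} (huv : u ≤ v) (h : (a, b) ∈ clos c u) :
    (a, b) ∈ clos c v :=
  closN_le clos_trans (fun a b hb => base_subset_clos (base_mono huv hb)) _ a b h

lemma clos_sound {c : Code} {prec : ℕ → ℕ → Prop} (htrans : Transitive prec)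
    (hbase : ∀ a b u, (a, b) ∈ base c u → prec a b) {u a b : ℕ}
    (h : (a, b) ∈ clos c u) : prec a b :=
  closN_le htrans (fun a b hb => hbase a b u hb) _ a b h

lemma clos_lt {c : Code} {u a b : ℕ} (h : (a, b) ∈ clos c u) : a < u ∧ b < u :=
  closN_lt h


open Primrec in
lemma primrec_base (c : Code) : Primrec (base c) := by
  have h1 : Primrec fun u : ℕ => List.range (u*u) :=
    Primrec.list_range.comp (Primrec.nat_mul.comp Primrec.id Primrec.id)
  refine Primrec.listFilterMap h1 ?_
  have hev : Primrec fun p : ℕ × ℕ => evaln p.1 c p.2 :=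
    primrec_evaln.comp ((fst.pair (const c)).pair snd)
  have hcond : PrimrecPred fun p : ℕ × ℕ =>
      (Nat.unpair p.2).1 < p.1 ∧ (Nat.unpair p.2).2 < p.1 ∧ (evaln p.1 c p.2).isSome := by
    refine PrimrecPred.and ?_ (PrimrecPred.and ?_ ?_)
    · exact nat_lt.comp (fst.comp (Primrec.unpair.comp snd)) fst
    · exact nat_lt.comp (snd.comp (Primrec.unpair.comp snd)) fst
    · exact PrimrecPred.of_eq (Primrec.eq.comp (option_isSome.comp hev) (const true))
        (fun p => by simp)
  exact (Primrec.ite hcond (option_some.comp (Primrec.unpair.comp snd)) (const none)).to₂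

open Primrec in
lemma primrec_stepL : Primrec stepL := by
  have hinner : Primrec₂ fun (Rp : List (ℕ × ℕ) × (ℕ × ℕ)) (q : ℕ × ℕ) =>
      if Rp.2.2 = q.1 then some (Rp.2.1, q.2) else none := by
    have hcond : PrimrecPred fun x : (List (ℕ × ℕ) × (ℕ × ℕ)) × (ℕ × ℕ) =>
        x.1.2.2 = x.2.1 :=
      Primrec.eq.comp (snd.comp (snd.comp fst)) (fst.comp snd)
    exact (Primrec.ite hcond
      (option_some.comp ((fst.comp (snd.comp fst)).pair (snd.comp snd)))
      (const (none : Option (ℕ × ℕ)))).to₂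
  have hflat : Primrec fun R : List (ℕ × ℕ) =>
      R.flatMap fun p => R.filterMap fun q => if p.2 = q.1 then some (p.1, q.2) else none :=
    Primrec.list_flatMap Primrec.id (Primrec.listFilterMap fst hinner)
  exact Primrec.list_append.comp Primrec.id hflat

lemma primrec_closN (c : Code) : Primrec₂ (closN c) :=
  Primrec.nat_rec (primrec_base c)
    ((primrec_stepL.comp (Primrec.snd.comp Primrec.snd)).to₂)

lemma primrec_clos (c : Code) : Primrec (clos c) :=
  (primrec_closN c).comp Primrec.id
    (Primrec.succ.comp (Primrec.nat_mul.comp Primrec.id Primrec.id))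

open Primrec in
lemma primrec_mem_clos (c : Code) :
    PrimrecPred fun x : (ℕ × ℕ) × ℕ => x.1 ∈ clos c x.2 := by
  have h := nat_lt.comp (Primrec.list_idxOf.comp (Primrec.fst (α := ℕ × ℕ) (β := ℕ))
      ((primrec_clos c).comp snd))
    (list_length.comp ((primrec_clos c).comp snd))
  exact PrimrecPred.of_eq h fun x => @List.idxOf_lt_length_iff _ instBEqOfDecidableEq _ _ _

end Stmt1Aux

namespace Stmt1Aux
open Nat.Partrec (Code)
open Nat.Partrec.Code

def sqRel (c : Code) (p q : ℕ) : Prop :=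
  p = q ∨ ((Nat.unpair p).2 < (Nat.unpair q).2 ∧
    ((Nat.unpair p).1, (Nat.unpair q).1) ∈ clos c (Nat.unpair q).2)

lemma sqRel_refl (c : Code) : Reflexive (sqRel c) := fun _ => Or.inl rfl

lemma sqRel_stamp {c : Code} {p q : ℕ} (h : sqRel c p q) (hne : p ≠ q) :
    (Nat.unpair p).2 < (Nat.unpair q).2 ∧
      ((Nat.unpair p).1, (Nat.unpair q).1) ∈ clos c (Nat.unpair q).2 :=
  h.resolve_left hne

lemma sqRel_trans (c : Code) : Transitive (sqRel c) := by
  rintro p q r (rfl | ⟨h1, h2⟩) hqr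
  · exact hqr
  · rcases hqr with rfl | ⟨h3, h4⟩
    · exact Or.inr ⟨h1, h2⟩
    · refine Or.inr ⟨h1.trans h3, ?_⟩
      exact clos_trans (clos_mono (le_of_lt h3) h2) h4

lemma sqRel_antisymm (c : Code) : ∀ p q, sqRel c p q → sqRel c q p → p = q := by
  rintro p q (rfl | ⟨h1, _⟩) hqp
  · rfl
  · rcases hqp with rfl | ⟨h3, _⟩
    · rfl
    · omega

lemma computable_sqRel (c : Code) :
    ComputablePred fun pr : ℕ × ℕ => sqRel c pr.1 pr.2 := by
  have hP : PrimrecPred fun pr : ℕ × ℕ => pr.1 = pr.2 ∨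
      ((Nat.unpair pr.1).2 < (Nat.unpair pr.2).2 ∧
        ((Nat.unpair pr.1).1, (Nat.unpair pr.2).1) ∈ clos c (Nat.unpair pr.2).2) := by
    refine PrimrecPred.or (Primrec.eq.comp Primrec.fst Primrec.snd) (PrimrecPred.and ?_ ?_)
    · exact Primrec.nat_lt.comp (Primrec.snd.comp (Primrec.unpair.comp Primrec.fst))
        (Primrec.snd.comp (Primrec.unpair.comp Primrec.snd))
    · exact (primrec_mem_clos c).comp
        (Primrec.pair
          (Primrec.pair (Primrec.fst.comp (Primrec.unpair.comp Primrec.fst))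
            (Primrec.fst.comp (Primrec.unpair.comp Primrec.snd)))
          (Primrec.snd.comp (Primrec.unpair.comp Primrec.snd)))
  exact ComputablePred.of_eq hP.computablePred fun pr => Iff.rfl

def Jset (I : Set ℕ) : Set ℕ := {p | (Nat.unpair p).1 ∈ I}

def Iset (J : Set ℕ) : Set ℕ := {a | ∃ s, Nat.pair a s ∈ J}

lemma above {c : Code} {J : Set ℕ} (hJ : IsIdeal (sqRel c) J)
    (hnp : ¬∃ m ∈ J, ∀ k ∈ J, sqRel c k m) :
    ∀ p ∈ J, ∃ q ∈ J, sqRel c p q ∧ p ≠ q := by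
  push_neg at hnp
  intro p hp
  obtain ⟨k, hk, hks⟩ := hnp p hp
  obtain ⟨r, hr, hpr, hkr⟩ := hJ.2.2 p hp k hk
  exact ⟨r, hr, hpr, fun he => hks (he ▸ hkr)⟩

lemma grow {c : Code} {J : Set ℕ} (hJ : IsIdeal (sqRel c) J)
    (hnp : ¬∃ m ∈ J, ∀ k ∈ J, sqRel c k m) :
    ∀ n : ℕ, ∀ p ∈ J, ∃ q ∈ J, sqRel c p q ∧ p ≠ q ∧
      n + (Nat.unpair p).2 < (Nat.unpair q).2 := by
  intro n
  induction n with
  | zero =>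
    intro p hp
    obtain ⟨q, hq, hpq, hne⟩ := above hJ hnp p hp
    exact ⟨q, hq, hpq, hne, by have := (sqRel_stamp hpq hne).1; omega⟩
  | succ n ih =>
    intro p hp
    obtain ⟨q, hq, hpq, hne, hst⟩ := ih p hp
    obtain ⟨r, hr, hqr, hne2⟩ := above hJ hnp q hq
    have hst2 := (sqRel_stamp hqr hne2).1
    refine ⟨r, hr, sqRel_trans c hpq hqr, ?_, by omega⟩
    intro he
    rw [← he] at hst2
    omega

lemma grow' {c : Code} {J : Set ℕ} (hJ : IsIdeal (sqRel c) J)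
    (hnp : ¬∃ m ∈ J, ∀ k ∈ J, sqRel c k m) :
    ∀ a s, Nat.pair a s ∈ J → ∀ v : ℕ, ∃ b u, Nat.pair b u ∈ J ∧
      (a, b) ∈ clos c u ∧ v < u := by
  intro a s hs v
  obtain ⟨q, hq, hpq, hne, hst⟩ := grow hJ hnp v (Nat.pair a s) hs
  have h2 := sqRel_stamp hpq hne
  refine ⟨(Nat.unpair q).1, (Nat.unpair q).2, ?_, ?_, ?_⟩
  · rwa [Nat.pair_unpair]
  · simpa [Nat.unpair_pair] using h2.2
  · simp only [Nat.unpair_pair] at hst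
    omega

section Ideals

variable {c : Code} {prec : ℕ → ℕ → Prop}
  (htrans : Transitive prec)
  (hsound : ∀ u a b, (a, b) ∈ clos c u → prec a b)
  (hcomplete : ∀ a b, prec a b → ∃ u, (a, b) ∈ clos c u)

include htrans hsound hcomplete

omit htrans hcomplete in
lemma Jset_lower {I : Set ℕ} (hI : IsIdeal prec I) :
    ∀ p ∈ Jset I, ∀ q, sqRel c q p → q ∈ Jset I := by
  rintro p hp q (rfl | ⟨h1, h2⟩)
  · exact hp
  · exact hI.2.1 _ hp _ (hsound _ _ _ h2)

omit htrans in
lemma Jset_ideal {I : Set ℕ} (hI : IsIdeal prec I) : IsIdeal (sqRel c) (Jset I) := by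
  obtain ⟨⟨a0, ha0⟩, hlow, hdir⟩ := hI
  refine ⟨⟨Nat.pair a0 0, ?_⟩, Jset_lower hsound ⟨⟨a0, ha0⟩, hlow, hdir⟩, ?_⟩
  · show (Nat.unpair (Nat.pair a0 0)).1 ∈ I
    simpa using ha0
  · intro p hp q hq
    obtain ⟨d, hd, had, hbd⟩ := hdir _ hp _ hq
    obtain ⟨u1, hu1⟩ := hcomplete _ _ had
    obtain ⟨u2, hu2⟩ := hcomplete _ _ hbd
    set u := max (max u1 u2) (max (Nat.unpair p).2 (Nat.unpair q).2) + 1 with hu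
    refine ⟨Nat.pair d u, ?_, Or.inr ?_, Or.inr ?_⟩
    · show (Nat.unpair (Nat.pair d u)).1 ∈ I
      simpa using hd
    · simp only [Nat.unpair_pair]
      exact ⟨by omega, clos_mono (by omega) hu1⟩
    · simp only [Nat.unpair_pair]
      exact ⟨by omega, clos_mono (by omega) hu2⟩

omit htrans hsound hcomplete in
lemma Jset_nonprincipal {I : Set ℕ} :
    ¬∃ m ∈ Jset I, ∀ k ∈ Jset I, sqRel c k m := by
  rintro ⟨m, hm, hmax⟩
  set a := (Nat.unpair m).1
  set s := (Nat.unpair m).2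
  have hk : Nat.pair a (s+1) ∈ Jset I := by
    show (Nat.unpair (Nat.pair a (s+1))).1 ∈ I
    simpa using (show a ∈ I from hm)
  have := hmax _ hk
  rcases this with he | ⟨h1, _⟩
  · have : (Nat.unpair (Nat.pair a (s+1))).2 = s := by rw [he]
    simp at this
  · simp only [Nat.unpair_pair] at h1
    omega

omit htrans in
lemma Iset_ideal {J : Set ℕ} (hJ : IsIdeal (sqRel c) J)
    (hnp : ¬∃ m ∈ J, ∀ k ∈ J, sqRel c k m) : IsIdeal prec (Iset J) := by
  refine ⟨?_, ?_, ?_⟩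
  · obtain ⟨p, hp⟩ := hJ.1
    exact ⟨(Nat.unpair p).1, (Nat.unpair p).2, by rwa [Nat.pair_unpair]⟩
  · rintro a ⟨s, hs⟩ b hba
    obtain ⟨v0, hv0⟩ := hcomplete _ _ hba
    obtain ⟨b', u, hbu, hab', hvu⟩ := grow' hJ hnp a s hs v0
    have hbb' : (b, b') ∈ clos c u := clos_trans (clos_mono (le_of_lt hvu) hv0) hab'
    have : sqRel c (Nat.pair b 0) (Nat.pair b' u) := by
      refine Or.inr ?_
      simp only [Nat.unpair_pair]
      exact ⟨by omega, hbb'⟩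
    exact ⟨0, hJ.2.1 _ hbu _ this⟩
  · rintro a ⟨s, hs⟩ b ⟨t, ht⟩
    obtain ⟨r, hr, har, hbr⟩ := hJ.2.2 _ hs _ ht
    obtain ⟨r', hr', hrr', hner'⟩ := above hJ hnp r hr
    have har' : sqRel c (Nat.pair a s) r' := sqRel_trans c har hrr'
    have hbr' : sqRel c (Nat.pair b t) r' := sqRel_trans c hbr hrr'
    have hne1 : Nat.pair a s ≠ r' := by
      intro he
      exact hner' (sqRel_antisymm c _ _ hrr' (he ▸ har))
    have hne2 : Nat.pair b t ≠ r' := by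
      intro he
      exact hner' (sqRel_antisymm c _ _ hrr' (he ▸ hbr))
    have h1 := sqRel_stamp har' hne1
    have h2 := sqRel_stamp hbr' hne2
    simp only [Nat.unpair_pair] at h1 h2
    refine ⟨(Nat.unpair r').1, ⟨(Nat.unpair r').2, by rwa [Nat.pair_unpair]⟩,
      hsound _ _ _ h1.2, hsound _ _ _ h2.2⟩

omit htrans hsound hcomplete in
lemma Iset_Jset (I : Set ℕ) : Iset (Jset I) = I := by
  ext a
  simp [Iset, Jset]

omit htrans hsound hcomplete in
lemma Jset_Iset {J : Set ℕ} (hJ : IsIdeal (sqRel c) J)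
    (hnp : ¬∃ m ∈ J, ∀ k ∈ J, sqRel c k m) : Jset (Iset J) = J := by
  ext p
  constructor
  · rintro ⟨t, ht⟩
    obtain ⟨b', u, hbu, hab', hvu⟩ := grow' hJ hnp _ t ht (Nat.unpair p).2
    have : sqRel c p (Nat.pair b' u) := by
      refine Or.inr ?_
      simp only [Nat.unpair_pair]
      exact ⟨hvu, hab'⟩
    exact hJ.2.1 _ hbu _ this
  · intro hp
    exact ⟨(Nat.unpair p).2, by rwa [Nat.pair_unpair]⟩

end Ideals

end Stmt1Aux



theorem stmt1 (prec : ℕ → ℕ → Prop)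
    (hce : REPred' fun p : ℕ × ℕ => prec p.1 p.2)
    (htrans : Transitive prec) :
    ∃ sq : ℕ → ℕ → Prop,
      ComputablePred (fun p : ℕ × ℕ => sq p.1 p.2) ∧
      Reflexive sq ∧ Transitive sq ∧ (∀ a b, sq a b → sq b a → a = b) ∧
      Nonempty (IdealSpace prec ≃ₜ
        {J : IdealSpace sq // ¬ ∃ m ∈ J.1, ∀ k ∈ J.1, sq k m}) := by
  classical
  obtain ⟨c, hc⟩ := Nat.Partrec.Code.exists_code.1 hce
  have hkey : ∀ a b : ℕ, prec a b ↔ ∃ k, (Nat.Partrec.Code.evaln k c (Nat.pair a b)).isSome := by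
    intro a b
    have h1 : Nat.Partrec.Code.eval c (Nat.pair a b) =
        (Part.assert (prec a b) fun _ => Part.some ()).map Encodable.encode := by
      have h2 := congrFun hc (Nat.pair a b)
      rw [h2]
      have hdec : (Encodable.decode (Nat.pair a b) : Option (ℕ × ℕ)) = some (a, b) := by
        have h3 : Encodable.encode ((a, b) : ℕ × ℕ) = Nat.pair a b := rfl
        rw [← h3, Encodable.encodek]
      rw [hdec]
      simp
    constructor
    · intro h
      have hmem : Encodable.encode () ∈ Nat.Partrec.Code.eval c (Nat.pair a b) := by
        rw [h1]
        exact Part.mem_map _ (Part.mem_assert h (Part.mem_some ()))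
      obtain ⟨k, hk⟩ := Nat.Partrec.Code.evaln_complete.1 hmem
      exact ⟨k, Option.isSome_iff_exists.2 ⟨_, hk⟩⟩
    · rintro ⟨k, hk⟩
      obtain ⟨x, hx⟩ := Option.isSome_iff_exists.1 hk
      have hmem : x ∈ Nat.Partrec.Code.eval c (Nat.pair a b) :=
        Nat.Partrec.Code.evaln_complete.2 ⟨k, hx⟩
      rw [h1] at hmem
      obtain ⟨y, hy, _⟩ := Part.mem_map_iff _ |>.1 hmem
      exact (Part.mem_assert_iff.1 hy).1
  have hsound : ∀ u a b, (a, b) ∈ Stmt1Aux.clos c u → prec a b := by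
    intro u a b h
    refine Stmt1Aux.clos_sound htrans ?_ h
    intro a b u hb
    exact (hkey a b).2 ⟨u, (Stmt1Aux.mem_base.1 hb).2.2⟩
  have hcomplete : ∀ a b, prec a b → ∃ u, (a, b) ∈ Stmt1Aux.clos c u := by
    intro a b h
    obtain ⟨k, hk⟩ := (hkey a b).1 h
    refine ⟨max k (max a b) + 1,
      Stmt1Aux.base_subset_clos (Stmt1Aux.mem_base.2 ⟨by omega, by omega, ?_⟩)⟩
    obtain ⟨x, hx⟩ := Option.isSome_iff_exists.1 hk
    exact Option.isSome_iff_exists.2 ⟨x, Nat.Partrec.Code.evaln_mono (by omega) hx⟩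
  refine ⟨Stmt1Aux.sqRel c, Stmt1Aux.computable_sqRel c, Stmt1Aux.sqRel_refl c,
    Stmt1Aux.sqRel_trans c, Stmt1Aux.sqRel_antisymm c, ?_⟩
  refine ⟨Homeomorph.mk (Equiv.mk
      (fun I => ⟨⟨Stmt1Aux.Jset I.1, Stmt1Aux.Jset_ideal hsound hcomplete I.2⟩,
        Stmt1Aux.Jset_nonprincipal⟩)
      (fun J => ⟨Stmt1Aux.Iset J.1.1, Stmt1Aux.Iset_ideal hsound hcomplete J.1.2 J.2⟩)
      (fun I => Subtype.ext (Stmt1Aux.Iset_Jset I.1))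
      (fun J => Subtype.ext (Subtype.ext (Stmt1Aux.Jset_Iset J.1.2 J.2))))
    ?_ ?_⟩
  · apply Continuous.subtype_mk
    apply continuous_generateFrom_iff.2
    rintro U ⟨q, rfl⟩
    exact TopologicalSpace.isOpen_generateFrom_of_mem ⟨(Nat.unpair q).1, rfl⟩
  · apply continuous_generateFrom_iff.2
    rintro U ⟨a, rfl⟩
    have hequ : (fun J : {J : IdealSpace (Stmt1Aux.sqRel c) //
          ¬ ∃ m ∈ J.1, ∀ k ∈ J.1, Stmt1Aux.sqRel c k m} =>
          (⟨Stmt1Aux.Iset J.1.1, Stmt1Aux.Iset_ideal hsound hcomplete J.1.2 J.2⟩ :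
            IdealSpace prec)) ⁻¹' {I | a ∈ I.1} =
        ⋃ s : ℕ, Subtype.val ⁻¹'
          {K : IdealSpace (Stmt1Aux.sqRel c) | Nat.pair a s ∈ K.1} := by
      ext J
      constructor
      · rintro ⟨s, hs⟩
        exact Set.mem_iUnion.2 ⟨s, hs⟩
      · intro h
        obtain ⟨s, hs⟩ := Set.mem_iUnion.1 h
        exact ⟨s, hs⟩
    show IsOpen ((fun J : {J : IdealSpace (Stmt1Aux.sqRel c) //
          ¬ ∃ m ∈ J.1, ∀ k ∈ J.1, Stmt1Aux.sqRel c k m} =>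
          (⟨Stmt1Aux.Iset J.1.1, Stmt1Aux.Iset_ideal hsound hcomplete J.1.2 J.2⟩ :
            IdealSpace prec)) ⁻¹' {I | a ∈ I.1})
    rw [hequ]
    exact isOpen_iUnion fun s => (continuous_subtype_val).isOpen_preimage _
      (TopologicalSpace.isOpen_generateFrom_of_mem ⟨Nat.pair a s, rfl⟩)
end

section
/- Let ≺ be a computably enumerable transitive relation on ℕ and let U ⊆ ℕ be a computably enumerable set. Let A = {I ∈ I(≺) | ∀ x ∈ U, x ∉ I}. Then there exists a computably enumerable transitive relation ⊏ on ℕ such that I(⊏) is homeomorphic to the topological space whose underlying set is I(≺) and whose topology is generated by the open sets of I(≺) together with the additional set A. -/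
open Nat.Partrec (Code)
open Nat.Partrec.Code

theorem REPred'.exists_approx {α : Type*} [Primcodable α] {p : α → Prop} (hp : REPred' p) :
    ∃ B : ℕ → α → Bool, (∀ {s s' : ℕ} {a}, s ≤ s' → B s a = true → B s' a = true) ∧
      (∀ {s : ℕ} {a}, B s a = true → Encodable.encode a < s) ∧
      (∀ a, p a ↔ ∃ s, B s a = true) ∧
      Primrec fun x : ℕ × α => B x.1 x.2 := by
  unfold REPred' Partrec at hp
  obtain ⟨c, hc⟩ := exists_code.1 hp
  refine ⟨fun s a => (evaln s c (Encodable.encode a)).isSome, ?_, ?_, ?_, ?_⟩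
  · intro s s' a hs h
    rw [Option.isSome_iff_exists] at h ⊢
    obtain ⟨x, hx⟩ := h
    exact ⟨x, evaln_mono hs hx⟩
  · intro s a h
    rw [Option.isSome_iff_exists] at h
    obtain ⟨x, hx⟩ := h
    exact evaln_bound hx
  · intro a
    have he : eval c (Encodable.encode a) =
        (Part.assert (p a) fun _ => Part.some ()).map Encodable.encode := by
      rw [hc]; simp [Encodable.encodek]
    have hdom : p a ↔ (eval c (Encodable.encode a)).Dom := by
      rw [he]; simp [Part.assert]
    rw [hdom, Part.dom_iff_mem]
    constructor
    · rintro ⟨x, hx⟩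
      obtain ⟨k, hk⟩ := evaln_complete.1 hx
      exact ⟨k, by rw [Option.isSome_iff_exists]; exact ⟨x, hk⟩⟩
    · rintro ⟨s, hs⟩
      rw [Option.isSome_iff_exists] at hs
      obtain ⟨x, hx⟩ := hs
      exact ⟨x, evaln_complete.2 ⟨s, hx⟩⟩
  · exact Primrec.option_isSome.comp (primrec_evaln.comp
      ((Primrec.fst.pair (Primrec.const c)).pair (Primrec.encode.comp Primrec.snd)))

theorem rePred_of_bool {α : Type*} [Primcodable α] {p : α → Prop} {B : α → Bool}
    (hB : Computable B) (h : ∀ a, p a ↔ B a = true) : REPred' p := by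
  have h1 : Partrec fun a => ((cond (B a) (some ()) (none : Option Unit) : Option Unit) : Part Unit) :=
    (Computable.cond hB (Computable.const (some ())) (Computable.const none)).ofOption
  refine h1.of_eq fun a => ?_
  by_cases hb : B a = true
  · rw [hb, Part.assert_pos ((h a).2 hb)]; simp
  · rw [Bool.not_eq_true] at hb
    rw [hb, Part.assert_neg (fun hpa => by simp [(h a).1 hpa] at hb)]; simp

namespace Stmt3Aux

/-- Bundle of hypotheses about stage-wise approximations of `prec` and `U`. -/
structure Approx (prec : ℕ → ℕ → Prop) (U : Set ℕ) (P : ℕ → ℕ → ℕ → Bool)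
    (Q : ℕ → ℕ → Bool) : Prop where
  pmono : ∀ {s s' a b : ℕ}, s ≤ s' → P s a b = true → P s' a b = true
  pbound : ∀ {s a b : ℕ}, P s a b = true → Nat.pair a b < s
  piff : ∀ a b, prec a b ↔ ∃ s, P s a b = true
  qmono : ∀ {s s' y : ℕ}, s ≤ s' → Q s y = true → Q s' y = true
  qbound : ∀ {s y : ℕ}, Q s y = true → y < s
  qiff : ∀ x, x ∈ U ↔ ∃ s, Q s x = true

variable {prec : ℕ → ℕ → Prop} {U : Set ℕ} {P : ℕ → ℕ → ℕ → Bool} {Q : ℕ → ℕ → Bool}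

/-- The stage-`s` transitively closed approximation of `prec`. -/
def Rs (P : ℕ → ℕ → ℕ → Bool) (s b a : ℕ) : Prop :=
  Relation.TransGen (fun x y => P s x y = true) b a

/-- Stage-`s` certificate that nothing enumerated into `U` is below (or equal to) `a`. -/
def Cert (P : ℕ → ℕ → ℕ → Bool) (Q : ℕ → ℕ → Bool) (a s : ℕ) : Prop :=
  ∀ y, Q s y = true → ¬(y = a ∨ Rs P s y a)

/-- Code of a "dirty" element. -/
def dd (a t : ℕ) : ℕ := 2 * Nat.pair a t
/-- Code of a "flagged/clean" element. -/
def ffe (a t : ℕ) : ℕ := 2 * Nat.pair a t + 1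

/-- The new relation. -/
def sqR (P : ℕ → ℕ → ℕ → Bool) (Q : ℕ → ℕ → Bool) (m n : ℕ) : Prop :=
  if m % 2 = 0 then
    if n % 2 = 0 then
      Rs P (n / 2).unpair.2 (m / 2).unpair.1 (n / 2).unpair.1 ∧
        (m / 2).unpair.2 < (n / 2).unpair.2 ∧ ¬ Cert P Q (n / 2).unpair.1 (n / 2).unpair.2
    else
      ((m / 2).unpair.1 = (n / 2).unpair.1 ∨
        Rs P (n / 2).unpair.2 (m / 2).unpair.1 (n / 2).unpair.1) ∧
        (m / 2).unpair.2 < (n / 2).unpair.2 ∧ Cert P Q (n / 2).unpair.1 (n / 2).unpair.2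
  else
    if n % 2 = 0 then False
    else
      Rs P (n / 2).unpair.2 (m / 2).unpair.1 (n / 2).unpair.1 ∧
        (m / 2).unpair.2 < (n / 2).unpair.2 ∧ Cert P Q (n / 2).unpair.1 (n / 2).unpair.2

@[simp] lemma dd_mod : dd a t % 2 = 0 := by simp [dd, Nat.mul_mod_right]
@[simp] lemma ffe_mod : ffe a t % 2 = 1 := by unfold ffe; omega
@[simp] lemma dd_div : dd a t / 2 = Nat.pair a t := by simp [dd, Nat.mul_div_cancel_left]
@[simp] lemma ffe_div : ffe a t / 2 = Nat.pair a t := by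
  simp [ffe]; omega

lemma code_cases (m : ℕ) : (∃ a t, m = dd a t) ∨ (∃ a t, m = ffe a t) := by
  rcases Nat.even_or_odd m with h | h
  · obtain ⟨k, hk⟩ := h
    exact Or.inl ⟨k.unpair.1, k.unpair.2, by simp [dd, Nat.pair_unpair]; omega⟩
  · obtain ⟨k, hk⟩ := h
    exact Or.inr ⟨k.unpair.1, k.unpair.2, by simp [ffe, Nat.pair_unpair]; omega⟩

@[simp] lemma sq_dd_dd : sqR P Q (dd b t) (dd a s) ↔ (Rs P s b a ∧ t < s ∧ ¬ Cert P Q a s) := by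
  simp [sqR]
@[simp] lemma sq_dd_ffe : sqR P Q (dd b t) (ffe a s) ↔
    ((b = a ∨ Rs P s b a) ∧ t < s ∧ Cert P Q a s) := by
  simp [sqR]
@[simp] lemma sq_ffe_ffe : sqR P Q (ffe b t) (ffe a s) ↔ (Rs P s b a ∧ t < s ∧ Cert P Q a s) := by
  simp [sqR]
@[simp] lemma sq_ffe_dd : ¬ sqR P Q (ffe b t) (dd a s) := by
  simp [sqR]

section Basic

lemma Rs_mono (H : Approx prec U P Q) {s s' b a : ℕ} (hs : s ≤ s') (h : Rs P s b a) : Rs P s' b a :=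
  Relation.TransGen.mono (fun _ _ hxy => H.pmono hs hxy) _ _ h

lemma Rs_trans {s b a c : ℕ} (h1 : Rs P s b a) (h2 : Rs P s a c) : Rs P s b c :=
  Relation.TransGen.trans h1 h2

lemma Rs_prec (H : Approx prec U P Q) (htrans : Transitive prec) {s b a : ℕ} (h : Rs P s b a) : prec b a := by
  induction h with
  | single h => exact (H.piff _ _).2 ⟨s, h⟩
  | tail _ h ih => exact htrans ih ((H.piff _ _).2 ⟨s, h⟩)

lemma prec_Rs (H : Approx prec U P Q) {b a : ℕ} (h : prec b a) : ∃ s, Rs P s b a :=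
  ((H.piff b a).1 h).imp fun _ hs => Relation.TransGen.single hs

lemma Rs_bound_left (H : Approx prec U P Q) {s b a : ℕ} (h : Rs P s b a) : b < s := by
  have : ∃ x, P s b x = true := by
    induction h with
    | single h => exact ⟨_, h⟩
    | tail _ _ ih => exact ih
  obtain ⟨x, hx⟩ := this
  exact lt_of_le_of_lt (Nat.left_le_pair b x) (H.pbound hx)

lemma Rs_bound_right (H : Approx prec U P Q) {s b a : ℕ} (h : Rs P s b a) : a < s := by
  have : ∃ x, P s x a = true := by
    induction h with
    | single h => exact ⟨_, h⟩
    | tail _ h _ => exact ⟨_, h⟩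
  obtain ⟨x, hx⟩ := this
  exact lt_of_le_of_lt (Nat.right_le_pair x a) (H.pbound hx)

lemma not_cert_witness (H : Approx prec U P Q) (htrans : Transitive prec) {a s : ℕ} (h : ¬ Cert P Q a s) :
    ∃ y, y ∈ U ∧ (y = a ∨ prec y a) := by
  unfold Cert at h
  push_neg at h
  obtain ⟨y, hy, hya⟩ := h
  exact ⟨y, (H.qiff y).2 ⟨s, hy⟩, hya.imp_right (Rs_prec H htrans)⟩

lemma cert_of_ideal (H : Approx prec U P Q) (htrans : Transitive prec) {I : Set ℕ} (hI : IsIdeal prec I) (hdisj : ∀ x ∈ U, x ∉ I)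
    {a : ℕ} (ha : a ∈ I) (s : ℕ) : Cert P Q a s := by
  intro y hy hya
  have hyU : y ∈ U := (H.qiff y).2 ⟨s, hy⟩
  have hyI : y ∈ I := by
    rcases hya with rfl | h
    · exact ha
    · exact hI.2.1 a ha y (Rs_prec H htrans h)
  exact hdisj y hyU hyI

lemma sqR_trans (H : Approx prec U P Q) : Transitive (sqR P Q) := by
  intro x y z hxy hyz
  rcases code_cases x with ⟨c, t', rfl⟩ | ⟨c, t', rfl⟩ <;>
    rcases code_cases y with ⟨b, t, rfl⟩ | ⟨b, t, rfl⟩ <;>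
      rcases code_cases z with ⟨a, s, rfl⟩ | ⟨a, s, rfl⟩ <;>
        simp only [sq_dd_dd, sq_dd_ffe, sq_ffe_ffe, sq_ffe_dd] at hxy hyz ⊢
  · -- D D D
    obtain ⟨h1, h2, _⟩ := hxy
    obtain ⟨h4, h5, h6⟩ := hyz
    exact ⟨Rs_trans (Rs_mono H (le_of_lt h5) h1) h4, lt_trans h2 h5, h6⟩
  · -- D D F
    obtain ⟨h1, h2, _⟩ := hxy
    obtain ⟨h4, h5, h6⟩ := hyz
    refine ⟨Or.inr ?_, lt_trans h2 h5, h6⟩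
    rcases h4 with rfl | h4
    · exact Rs_mono H (le_of_lt h5) h1
    · exact Rs_trans (Rs_mono H (le_of_lt h5) h1) h4
  · -- D F F
    obtain ⟨h1, h2, _⟩ := hxy
    obtain ⟨h4, h5, h6⟩ := hyz
    refine ⟨Or.inr ?_, lt_trans h2 h5, h6⟩
    rcases h1 with rfl | h1
    · exact h4
    · exact Rs_trans (Rs_mono H (le_of_lt h5) h1) h4
  · -- F F F
    obtain ⟨h1, h2, _⟩ := hxy
    obtain ⟨h4, h5, h6⟩ := hyz
    exact ⟨Rs_trans (Rs_mono H (le_of_lt h5) h1) h4, lt_trans h2 h5, h6⟩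

end Basic

end Stmt3Aux
namespace Stmt3Aux

variable {prec : ℕ → ℕ → Prop} {U : Set ℕ} {P : ℕ → ℕ → ℕ → Bool} {Q : ℕ → ℕ → Bool}

/-- The underlying ideal of `prec` associated to an ideal of `sqR`. -/
def piSet (J : Set ℕ) : Set ℕ := {a | ∃ t, dd a t ∈ J ∨ ffe a t ∈ J}

/-- The ideal of `sqR` associated to an ideal of `prec`. -/
def FJ (U : Set ℕ) (I : Set ℕ) : Set ℕ :=
  {m | (m / 2).unpair.1 ∈ I ∧ (m % 2 = 1 → ∀ x ∈ U, x ∉ I)}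

@[simp] lemma mem_dd_FJ {I : Set ℕ} {a t : ℕ} : dd a t ∈ FJ U I ↔ a ∈ I := by
  simp [FJ, dd_div, dd_mod]

@[simp] lemma mem_ffe_FJ {I : Set ℕ} {a t : ℕ} :
    ffe a t ∈ FJ U I ↔ (a ∈ I ∧ ∀ x ∈ U, x ∉ I) := by
  simp [FJ, ffe_div, ffe_mod]

section IdealLemmas

variable {J : Set ℕ}

lemma F_step (hJ : IsIdeal (sqR P Q) J) {d v : ℕ} (h : ffe d v ∈ J) :
    ∃ d' v', ffe d' v' ∈ J ∧ Rs P v' d d' ∧ v < v' ∧ Cert P Q d' v' := by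
  obtain ⟨z, hz, hsq, -⟩ := hJ.2.2 _ h _ h
  rcases code_cases z with ⟨a, s, rfl⟩ | ⟨a, s, rfl⟩
  · exact absurd hsq sq_ffe_dd
  · rw [sq_ffe_ffe] at hsq
    exact ⟨a, s, hz, hsq.1, hsq.2.1, hsq.2.2⟩

lemma F_climb (H : Approx prec U P Q) (hJ : IsIdeal (sqR P Q) J) {d v : ℕ}
    (h : ffe d v ∈ J) (N : ℕ) :
    ∃ d' v', ffe d' v' ∈ J ∧ N < v' ∧ Rs P v' d d' ∧ Cert P Q d' v' := by
  have aux : ∀ k, ∃ d' v', ffe d' v' ∈ J ∧ v + k < v' ∧ Rs P v' d d' ∧ Cert P Q d' v' := by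
    intro k
    induction k with
    | zero =>
      obtain ⟨d', v', h1, h2, h3, h4⟩ := F_step hJ h
      exact ⟨d', v', h1, by omega, h2, h4⟩
    | succ k ih =>
      obtain ⟨d₁, v₁, h1, h2, h3, h4⟩ := ih
      obtain ⟨d₂, v₂, g1, g2, g3, g4⟩ := F_step hJ h1
      exact ⟨d₂, v₂, g1, by omega, Rs_trans (Rs_mono H (le_of_lt g3) h3) g2, g4⟩
  obtain ⟨d', v', h1, h2, h3, h4⟩ := aux N
  exact ⟨d', v', h1, by omega, h3, h4⟩

lemma D_step_noF (hJ : IsIdeal (sqR P Q) J) (hF : ∀ a t, ffe a t ∉ J) {d v : ℕ}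
    (h : dd d v ∈ J) :
    ∃ d' v', dd d' v' ∈ J ∧ Rs P v' d d' ∧ v < v' ∧ ¬ Cert P Q d' v' := by
  obtain ⟨z, hz, hsq, -⟩ := hJ.2.2 _ h _ h
  rcases code_cases z with ⟨a, s, rfl⟩ | ⟨a, s, rfl⟩
  · rw [sq_dd_dd] at hsq
    exact ⟨a, s, hz, hsq.1, hsq.2.1, hsq.2.2⟩
  · exact absurd hz (hF a s)

lemma D_climb_noF (H : Approx prec U P Q) (hJ : IsIdeal (sqR P Q) J)
    (hF : ∀ a t, ffe a t ∉ J) {d v : ℕ} (h : dd d v ∈ J) (N : ℕ) :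
    ∃ d' v', dd d' v' ∈ J ∧ N < v' ∧ Rs P v' d d' ∧ ¬ Cert P Q d' v' := by
  have aux : ∀ k, ∃ d' v', dd d' v' ∈ J ∧ v + k < v' ∧ Rs P v' d d' ∧ ¬ Cert P Q d' v' := by
    intro k
    induction k with
    | zero =>
      obtain ⟨d', v', h1, h2, h3, h4⟩ := D_step_noF hJ hF h
      exact ⟨d', v', h1, by omega, h2, h4⟩
    | succ k ih =>
      obtain ⟨d₁, v₁, h1, h2, h3, h4⟩ := ih
      obtain ⟨d₂, v₂, g1, g2, g3, g4⟩ := D_step_noF hJ hF h1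
      exact ⟨d₂, v₂, g1, by omega, Rs_trans (Rs_mono H (le_of_lt g3) h3) g2, g4⟩
  obtain ⟨d', v', h1, h2, h3, h4⟩ := aux N
  exact ⟨d', v', h1, by omega, h3, h4⟩

/-- Any element of `piSet J` attaches below some flagged element of `J`, if there is one. -/
lemma attach_ffe (hJ : IsIdeal (sqR P Q) J) {e w a : ℕ} (he : ffe e w ∈ J)
    (ha : a ∈ piSet J) : ∃ d v, ffe d v ∈ J ∧ (a = d ∨ Rs P v a d) := by
  obtain ⟨t, hd | hf⟩ := ha
  · obtain ⟨z, hz, hsq1, hsq2⟩ := hJ.2.2 _ hd _ he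
    rcases code_cases z with ⟨c, u, rfl⟩ | ⟨c, u, rfl⟩
    · exact absurd hsq2 sq_ffe_dd
    · rw [sq_dd_ffe] at hsq1
      exact ⟨c, u, hz, hsq1.1⟩
  · obtain ⟨z, hz, hsq1, hsq2⟩ := hJ.2.2 _ hf _ he
    rcases code_cases z with ⟨c, u, rfl⟩ | ⟨c, u, rfl⟩
    · exact absurd hsq2 sq_ffe_dd
    · rw [sq_ffe_ffe] at hsq1
      exact ⟨c, u, hz, Or.inr hsq1.1⟩

/-- If the ideal `J` contains a flagged element, then `piSet J` avoids `U`. -/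
lemma disjoint_of_ffe (H : Approx prec U P Q) (hJ : IsIdeal (sqR P Q) J)
    {e w : ℕ} (he : ffe e w ∈ J) : ∀ x ∈ U, x ∉ piSet J := by
  intro x hxU hx
  obtain ⟨s₀, hs₀⟩ := (H.qiff x).1 hxU
  obtain ⟨d, v, hdv, hrel⟩ := attach_ffe hJ he hx
  obtain ⟨d', v', h1, h2, h3, h4⟩ := F_climb H hJ hdv (max s₀ v)
  have hQ : Q v' x = true := H.qmono (le_of_lt (lt_of_le_of_lt (le_max_left _ _) h2)) hs₀
  refine h4 x hQ ?_
  rcases hrel with rfl | hrel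
  · exact Or.inr h3
  · exact Or.inr (Rs_trans (Rs_mono H (le_of_lt (lt_of_le_of_lt (le_max_right _ _) h2)) hrel) h3)

/-- In the flagged case, all stages of all elements of `piSet J` belong to `J`. -/
lemma all_mem_F (H : Approx prec U P Q) (hJ : IsIdeal (sqR P Q) J) {e w a : ℕ}
    (he : ffe e w ∈ J) (ha : a ∈ piSet J) (s : ℕ) : ffe a s ∈ J ∧ dd a s ∈ J := by
  obtain ⟨d, v, hdv, hrel⟩ := attach_ffe hJ he ha
  obtain ⟨d', v', h1, h2, h3, h4⟩ := F_climb H hJ hdv (max s v)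
  have hs : s < v' := lt_of_le_of_lt (le_max_left _ _) h2
  have hRs : Rs P v' a d' := by
    rcases hrel with rfl | hrel
    · exact h3
    · exact Rs_trans (Rs_mono H (le_of_lt (lt_of_le_of_lt (le_max_right _ _) h2)) hrel) h3
  constructor
  · exact hJ.2.1 _ h1 _ (sq_ffe_ffe.2 ⟨hRs, hs, h4⟩)
  · exact hJ.2.1 _ h1 _ (sq_dd_ffe.2 ⟨Or.inr hRs, hs, h4⟩)

lemma piSet_ideal (H : Approx prec U P Q) (htrans : Transitive prec)
    (hJ : IsIdeal (sqR P Q) J) : IsIdeal prec (piSet J) := by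
  by_cases hFm : ∃ e w, ffe e w ∈ J
  · obtain ⟨e, w, he⟩ := hFm
    refine ⟨⟨e, w, Or.inr he⟩, ?_, ?_⟩
    · -- downward closed
      intro a ha b hba
      obtain ⟨w₁, hw₁⟩ := prec_Rs H hba
      obtain ⟨d, v, hdv, hrel⟩ := attach_ffe hJ he ha
      obtain ⟨d', v', h1, h2, h3, h4⟩ := F_climb H hJ hdv (max w₁ v)
      have hRa : Rs P v' a d' := by
        rcases hrel with rfl | hrel
        · exact h3
        · exact Rs_trans (Rs_mono H (le_of_lt (lt_of_le_of_lt (le_max_right _ _) h2)) hrel) h3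
      have hRb : Rs P v' b d' :=
        Rs_trans (Rs_mono H (le_of_lt (lt_of_le_of_lt (le_max_left _ _) h2)) hw₁) hRa
      have : dd b 0 ∈ J :=
        hJ.2.1 _ h1 _ (sq_dd_ffe.2 ⟨Or.inr hRb, by omega, h4⟩)
      exact ⟨0, Or.inl this⟩
    · -- directed
      intro a ha b hb
      have hfa : ffe a 0 ∈ J := (all_mem_F H hJ he ha 0).1
      have hfb : ffe b 0 ∈ J := (all_mem_F H hJ he hb 0).1
      obtain ⟨z, hz, hsq1, hsq2⟩ := hJ.2.2 _ hfa _ hfb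
      rcases code_cases z with ⟨c, u, rfl⟩ | ⟨c, u, rfl⟩
      · exact absurd hsq1 sq_ffe_dd
      · rw [sq_ffe_ffe] at hsq1 hsq2
        exact ⟨c, ⟨u, Or.inr hz⟩, Rs_prec H htrans hsq1.1, Rs_prec H htrans hsq2.1⟩
  · push_neg at hFm
    have hF : ∀ a t, ffe a t ∉ J := hFm
    obtain ⟨z, hz⟩ := hJ.1
    rcases code_cases z with ⟨a0, t0, rfl⟩ | ⟨a0, t0, rfl⟩
    swap
    · exact absurd hz (hF a0 t0)
    refine ⟨⟨a0, t0, Or.inl hz⟩, ?_, ?_⟩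
    · intro a ha b hba
      obtain ⟨w₁, hw₁⟩ := prec_Rs H hba
      obtain ⟨t, hd | hf⟩ := ha
      swap
      · exact absurd hf (hF a t)
      obtain ⟨d', v', h1, h2, h3, h4⟩ := D_climb_noF H hJ hF hd w₁
      have hRb : Rs P v' b d' := Rs_trans (Rs_mono H (le_of_lt h2) hw₁) h3
      have : dd b 0 ∈ J := hJ.2.1 _ h1 _ (sq_dd_dd.2 ⟨hRb, by omega, h4⟩)
      exact ⟨0, Or.inl this⟩
    · intro a ha b hb
      obtain ⟨t, hda | hfa⟩ := ha
      swap; · exact absurd hfa (hF a t)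
      obtain ⟨t₂, hdb | hfb⟩ := hb
      swap; · exact absurd hfb (hF b t₂)
      obtain ⟨z, hz, hsq1, hsq2⟩ := hJ.2.2 _ hda _ hdb
      rcases code_cases z with ⟨c, u, rfl⟩ | ⟨c, u, rfl⟩
      swap; · exact absurd hz (hF c u)
      rw [sq_dd_dd] at hsq1 hsq2
      exact ⟨c, ⟨u, Or.inl hz⟩, Rs_prec H htrans hsq1.1, Rs_prec H htrans hsq2.1⟩

lemma mem_dd_iff (H : Approx prec U P Q) (hJ : IsIdeal (sqR P Q) J) {a s : ℕ} :
    dd a s ∈ J ↔ a ∈ piSet J := by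
  refine ⟨fun h => ⟨s, Or.inl h⟩, fun ha => ?_⟩
  by_cases hFm : ∃ e w, ffe e w ∈ J
  · obtain ⟨e, w, he⟩ := hFm
    exact (all_mem_F H hJ he ha s).2
  · push_neg at hFm
    obtain ⟨t, hd | hf⟩ := ha
    swap; · exact absurd hf (hFm a t)
    obtain ⟨d', v', h1, h2, h3, h4⟩ := D_climb_noF H hJ hFm hd s
    exact hJ.2.1 _ h1 _ (sq_dd_dd.2 ⟨h3, h2, h4⟩)

lemma mem_ffe_iff (H : Approx prec U P Q) (htrans : Transitive prec)
    (hJ : IsIdeal (sqR P Q) J) {a s : ℕ} :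
    ffe a s ∈ J ↔ (a ∈ piSet J ∧ ∀ x ∈ U, x ∉ piSet J) := by
  constructor
  · intro h
    exact ⟨⟨s, Or.inr h⟩, disjoint_of_ffe H hJ h⟩
  · rintro ⟨ha, hdisj⟩
    by_cases hFm : ∃ e w, ffe e w ∈ J
    · obtain ⟨e, w, he⟩ := hFm
      exact (all_mem_F H hJ he ha s).1
    · push_neg at hFm
      exfalso
      obtain ⟨t, hd | hf⟩ := ha
      swap; · exact absurd hf (hFm a t)
      obtain ⟨d', v', h1, h2, h3, h4⟩ := D_step_noF hJ hFm hd
      obtain ⟨y, hyU, hrel⟩ := not_cert_witness H htrans h4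
      have hd' : d' ∈ piSet J := ⟨v', Or.inl h1⟩
      have hy : y ∈ piSet J := by
        rcases hrel with rfl | hrel
        · exact hd'
        · exact (piSet_ideal H htrans hJ).2.1 d' hd' y hrel
      exact hdisj y hyU hy

lemma FJ_piSet (H : Approx prec U P Q) (htrans : Transitive prec)
    (hJ : IsIdeal (sqR P Q) J) : FJ U (piSet J) = J := by
  ext m
  rcases code_cases m with ⟨a, t, rfl⟩ | ⟨a, t, rfl⟩
  · rw [mem_dd_FJ, mem_dd_iff H hJ]
  · rw [mem_ffe_FJ, mem_ffe_iff H htrans hJ]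

end IdealLemmas

section FJLemmas

variable {I : Set ℕ}

lemma piSet_FJ (hI : IsIdeal prec I) : piSet (FJ U I) = I := by
  ext a
  constructor
  · rintro ⟨t, hd | hf⟩
    · exact mem_dd_FJ.1 hd
    · exact (mem_ffe_FJ.1 hf).1
  · intro ha
    exact ⟨0, Or.inl (mem_dd_FJ.2 ha)⟩

lemma FJ_ideal (H : Approx prec U P Q) (htrans : Transitive prec)
    (hI : IsIdeal prec I) : IsIdeal (sqR P Q) (FJ U I) := by
  obtain ⟨⟨a0, ha0⟩, hlow, hdir⟩ := hI
  have hIdeal : IsIdeal prec I := ⟨⟨a0, ha0⟩, hlow, hdir⟩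
  by_cases hd : ∀ x ∈ U, x ∉ I
  · -- clean case
    refine ⟨⟨dd a0 0, mem_dd_FJ.2 ha0⟩, ?_, ?_⟩
    · intro n hn m hmn
      rcases code_cases n with ⟨a, s, rfl⟩ | ⟨a, s, rfl⟩
      · rcases code_cases m with ⟨b, t, rfl⟩ | ⟨b, t, rfl⟩
        · rw [sq_dd_dd] at hmn
          exact absurd (cert_of_ideal H htrans hIdeal hd (mem_dd_FJ.1 hn) s) hmn.2.2
        · exact absurd hmn sq_ffe_dd
      · have haI : a ∈ I := (mem_ffe_FJ.1 hn).1
        rcases code_cases m with ⟨b, t, rfl⟩ | ⟨b, t, rfl⟩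
        · rw [sq_dd_ffe] at hmn
          refine mem_dd_FJ.2 ?_
          rcases hmn.1 with rfl | h
          · exact haI
          · exact hlow a haI b (Rs_prec H htrans h)
        · rw [sq_ffe_ffe] at hmn
          exact mem_ffe_FJ.2 ⟨hlow a haI b (Rs_prec H htrans hmn.1), hd⟩
    · intro m hm n hn
      rcases code_cases m with ⟨a, s, rfl⟩ | ⟨a, s, rfl⟩ <;>
        rcases code_cases n with ⟨b, t, rfl⟩ | ⟨b, t, rfl⟩ <;>
        [ (have haI : a ∈ I := mem_dd_FJ.1 hm; have hbI : b ∈ I := mem_dd_FJ.1 hn);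
          (have haI : a ∈ I := mem_dd_FJ.1 hm; have hbI : b ∈ I := (mem_ffe_FJ.1 hn).1);
          (have haI : a ∈ I := (mem_ffe_FJ.1 hm).1; have hbI : b ∈ I := mem_dd_FJ.1 hn);
          (have haI : a ∈ I := (mem_ffe_FJ.1 hm).1; have hbI : b ∈ I := (mem_ffe_FJ.1 hn).1)] <;>
      · obtain ⟨c, hcI, hac, hbc⟩ := hdir a haI b hbI
        obtain ⟨u₁, hu₁⟩ := prec_Rs H hac
        obtain ⟨u₂, hu₂⟩ := prec_Rs H hbc
        set u := max (max u₁ u₂) (max s t) + 1 with hu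
        have h1 : Rs P u a c := Rs_mono H (by omega) hu₁
        have h2 : Rs P u b c := Rs_mono H (by omega) hu₂
        have hcert : Cert P Q c u := cert_of_ideal H htrans hIdeal hd hcI u
        refine ⟨ffe c u, mem_ffe_FJ.2 ⟨hcI, hd⟩, ?_, ?_⟩ <;>
          first
            | exact sq_dd_ffe.2 ⟨Or.inr ‹_›, by omega, hcert⟩
            | exact sq_ffe_ffe.2 ⟨‹_›, by omega, hcert⟩
  · -- dirty case
    push_neg at hd
    obtain ⟨x, hxU, hxI⟩ := hd
    have hnoffe : ∀ a t, ffe a t ∉ FJ U I := by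
      intro a t h
      exact (mem_ffe_FJ.1 h).2 x hxU hxI
    refine ⟨⟨dd a0 0, mem_dd_FJ.2 ha0⟩, ?_, ?_⟩
    · intro n hn m hmn
      rcases code_cases n with ⟨a, s, rfl⟩ | ⟨a, s, rfl⟩
      swap; · exact absurd hn (hnoffe a s)
      rcases code_cases m with ⟨b, t, rfl⟩ | ⟨b, t, rfl⟩
      swap; · exact absurd hmn sq_ffe_dd
      rw [sq_dd_dd] at hmn
      exact mem_dd_FJ.2 (hlow a (mem_dd_FJ.1 hn) b (Rs_prec H htrans hmn.1))
    · intro m hm n hn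
      rcases code_cases m with ⟨a, s, rfl⟩ | ⟨a, s, rfl⟩
      swap; · exact absurd hm (hnoffe a s)
      rcases code_cases n with ⟨b, t, rfl⟩ | ⟨b, t, rfl⟩
      swap; · exact absurd hn (hnoffe b t)
      have haI : a ∈ I := mem_dd_FJ.1 hm
      have hbI : b ∈ I := mem_dd_FJ.1 hn
      obtain ⟨c₁, hc₁, hac₁, hbc₁⟩ := hdir a haI b hbI
      obtain ⟨c, hcI, hc₁c, hxc⟩ := hdir c₁ hc₁ x hxI
      obtain ⟨u₁, hu₁⟩ := prec_Rs H (htrans hac₁ hc₁c)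
      obtain ⟨u₂, hu₂⟩ := prec_Rs H (htrans hbc₁ hc₁c)
      obtain ⟨u₃, hu₃⟩ := prec_Rs H hxc
      obtain ⟨s₀, hs₀⟩ := (H.qiff x).1 hxU
      set u := max (max u₁ u₂) (max (max u₃ s₀) (max s t)) + 1 with hu
      have h1 : Rs P u a c := Rs_mono H (by omega) hu₁
      have h2 : Rs P u b c := Rs_mono H (by omega) hu₂
      have hnc : ¬ Cert P Q c u := by
        intro hc
        exact hc x (H.qmono (by omega) hs₀) (Or.inr (Rs_mono H (by omega) hu₃))
      exact ⟨dd c u, mem_dd_FJ.2 hcI, sq_dd_dd.2 ⟨h1, by omega, hnc⟩,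
        sq_dd_dd.2 ⟨h2, by omega, hnc⟩⟩

end FJLemmas

end Stmt3Aux

namespace Stmt3Aux

/-! ### Computability of the construction -/

section Comp

lemma foldr_or_iff {β : Type*} (f : β → Bool) (L : List β) :
    L.foldr (fun q acc => f q || acc) false = true ↔ ∃ q ∈ L, f q = true := by
  induction L with
  | nil => simp
  | cons q L ih => simp [ih]

lemma foldr_and_iff {β : Type*} (f : β → Bool) (L : List β) :
    L.foldr (fun q acc => f q && acc) true = true ↔ ∀ q ∈ L, f q = true := by
  induction L with
  | nil => simp
  | cons q L ih => simp [ih]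

lemma foldr_filter_mem {β : Type*} (f : β → Bool) (L : List β) (p : β) :
    p ∈ L.foldr (fun q acc => if f q then q :: acc else acc) [] ↔ p ∈ L ∧ f p = true := by
  induction L with
  | nil => simp
  | cons q L ih =>
    by_cases h : f q = true
    · rw [List.foldr_cons, if_pos h]
      rw [List.mem_cons, List.mem_cons, ih]
      constructor
      · rintro (rfl | ⟨hp, hfp⟩)
        exacts [⟨Or.inl rfl, h⟩, ⟨Or.inr hp, hfp⟩]
      · rintro ⟨rfl | hp, hfp⟩
        exacts [Or.inl rfl, Or.inr ⟨hp, hfp⟩]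
    · rw [List.foldr_cons, if_neg h, ih, List.mem_cons]
      constructor
      · rintro ⟨hp, hfp⟩
        exact ⟨Or.inr hp, hfp⟩
      · rintro ⟨rfl | hp, hfp⟩
        exacts [absurd hfp h, ⟨hp, hfp⟩]

def memB (L : List (ℕ × ℕ)) (p : ℕ × ℕ) : Bool :=
  L.foldr (fun q acc => (decide (q = p)) || acc) false

lemma memB_iff {L : List (ℕ × ℕ)} {p : ℕ × ℕ} : memB L p = true ↔ p ∈ L := by
  rw [memB, foldr_or_iff]
  constructor
  · rintro ⟨q, hq, h⟩
    rw [decide_eq_true_eq] at h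
    rwa [← h]
  · intro h
    exact ⟨p, h, by simp⟩

def univL (s : ℕ) : List (ℕ × ℕ) :=
  (List.range s).flatMap fun a => (List.range s).map fun b => (a, b)

lemma mem_univL {s : ℕ} {p : ℕ × ℕ} : p ∈ univL s ↔ p.1 < s ∧ p.2 < s := by
  cases p with
  | mk a b =>
    simp only [univL, List.mem_flatMap, List.mem_map, List.mem_range]
    constructor
    · rintro ⟨x, hx, y, hy, he⟩
      cases he
      exact ⟨hx, hy⟩
    · rintro ⟨ha, hb⟩
      exact ⟨a, ha, b, hb, rfl⟩

lemma length_univL (s : ℕ) : (univL s).length = s * s := by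
  rw [univL, List.length_flatMap]
  have : ∀ L : List ℕ, (L.map fun a => ((List.range s).map fun b => (a, b)).length).sum
      = L.length * s := by
    intro L
    induction L with
    | nil => simp
    | cons x L ih => simp [ih, Nat.succ_mul, Nat.add_comm]
  rw [this, List.length_range]

def linkB (L : List (ℕ × ℕ)) (q : ℕ × ℕ) : Bool :=
  L.foldr (fun r acc => ((decide (r.1 = q.1)) && memB L (r.2, q.2)) || acc) false

lemma linkB_iff {L : List (ℕ × ℕ)} {q : ℕ × ℕ} :
    linkB L q = true ↔ ∃ c, (q.1, c) ∈ L ∧ (c, q.2) ∈ L := by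
  rw [linkB, foldr_or_iff]
  constructor
  · rintro ⟨r, hr, hrq⟩
    rw [Bool.and_eq_true, decide_eq_true_eq] at hrq
    exact ⟨r.2, by rwa [← hrq.1, Prod.mk.eta], memB_iff.1 hrq.2⟩
  · rintro ⟨c, h1, h2⟩
    exact ⟨(q.1, c), h1, by simp [memB_iff.2 h2]⟩

def stepL (s : ℕ) (L : List (ℕ × ℕ)) : List (ℕ × ℕ) :=
  L ++ (univL s).foldr (fun q acc => if linkB L q then q :: acc else acc) []

lemma mem_stepL {s : ℕ} {L : List (ℕ × ℕ)} {p : ℕ × ℕ} :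
    p ∈ stepL s L ↔ p ∈ L ∨ (p ∈ univL s ∧ linkB L p = true) := by
  simp [stepL, foldr_filter_mem]

lemma stepL_congr {s : ℕ} {L L' : List (ℕ × ℕ)} (h : ∀ p, p ∈ L ↔ p ∈ L') (p : ℕ × ℕ) :
    p ∈ stepL s L ↔ p ∈ stepL s L' := by
  have hlink : ∀ q, linkB L q = linkB L' q := by
    intro q
    by_cases hq : linkB L q = true
    · rw [hq]; symm
      rw [linkB_iff] at hq ⊢
      obtain ⟨c, h1, h2⟩ := hq
      exact ⟨c, (h _).1 h1, (h _).1 h2⟩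
    · rcases hq' : linkB L' q with _ | _
      · simpa using hq
      · exfalso; apply hq
        rw [linkB_iff] at hq' ⊢
        obtain ⟨c, h1, h2⟩ := hq'
        exact ⟨c, (h _).2 h1, (h _).2 h2⟩
  rw [mem_stepL, mem_stepL, h p, hlink p]

variable (P : ℕ → ℕ → ℕ → Bool)

def baseL (s : ℕ) : List (ℕ × ℕ) :=
  (univL s).foldr (fun q acc => if P s q.1 q.2 then q :: acc else acc) []

def iterL (s k : ℕ) : List (ℕ × ℕ) :=
  Nat.rec (baseL P s) (fun _ ih => stepL s ih) k

@[simp] lemma iterL_zero {s : ℕ} : iterL P s 0 = baseL P s := rfl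
@[simp] lemma iterL_succ {s k : ℕ} : iterL P s (k + 1) = stepL s (iterL P s k) := rfl

def reachL (s : ℕ) : List (ℕ × ℕ) := iterL P s (s * s + 1)

def reachB (s b a : ℕ) : Bool := memB (reachL P s) (b, a)

def certB (Q : ℕ → ℕ → Bool) (a s : ℕ) : Bool :=
  (List.range s).foldr
    (fun y acc => (!(Q s y && ((decide (y = a)) || reachB P s y a))) && acc) true

variable {P}

lemma mem_baseL {s : ℕ} {p : ℕ × ℕ} :
    p ∈ baseL P s ↔ p ∈ univL s ∧ P s p.1 p.2 = true := foldr_filter_mem _ _ _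

lemma iterL_subset_univ {s k : ℕ} {p : ℕ × ℕ} (h : p ∈ iterL P s k) : p ∈ univL s := by
  induction k with
  | zero => exact (mem_baseL.1 h).1
  | succ k ih =>
    rw [iterL_succ, mem_stepL] at h
    rcases h with h | h
    · exact ih h
    · exact h.1

lemma iterL_mono {s k j : ℕ} (hkj : k ≤ j) {p : ℕ × ℕ} (h : p ∈ iterL P s k) :
    p ∈ iterL P s j := by
  induction j with
  | zero => rwa [Nat.le_zero.1 hkj] at h
  | succ j ih =>
    rcases Nat.lt_or_ge k (j+1) with hk | hk
    · exact mem_stepL.2 (Or.inl (ih (Nat.lt_succ_iff.1 hk)))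
    · rwa [Nat.le_antisymm hkj hk] at h

lemma iterL_sound {s : ℕ} : ∀ {k : ℕ} (p : ℕ × ℕ), p ∈ iterL P s k → Rs P s p.1 p.2 := by
  intro k
  induction k with
  | zero =>
    intro p h
    exact Relation.TransGen.single (mem_baseL.1 h).2
  | succ k ih =>
    intro p h
    rw [iterL_succ, mem_stepL] at h
    rcases h with h | ⟨-, hl⟩
    · exact ih p h
    · obtain ⟨c, h1, h2⟩ := linkB_iff.1 hl
      exact Rs_trans (ih (p.1, c) h1) (ih (c, p.2) h2)

lemma iterL_stab {s : ℕ} : ∀ p, p ∈ stepL s (reachL P s) ↔ p ∈ reachL P s := by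
  -- there is a stabilization point k ≤ s*s
  have hstab : ∃ k, k ≤ s * s ∧ ∀ p, p ∈ iterL P s (k+1) ↔ p ∈ iterL P s k := by
    by_contra hcon
    have hgrow : ∀ k, k ≤ s * s + 1 → k ≤ (iterL P s k).toFinset.card := by
      intro k hk
      induction k with
      | zero => exact Nat.zero_le _
      | succ k ih =>
        have hk' : k ≤ s * s := Nat.lt_succ_iff.1 hk
        have hsub : (iterL P s k).toFinset ⊆ (iterL P s (k+1)).toFinset := by
          intro p hp
          rw [List.mem_toFinset] at hp ⊢
          exact iterL_mono (Nat.le_succ k) hp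
        have hne : (iterL P s k).toFinset ≠ (iterL P s (k+1)).toFinset := by
          intro he
          refine hcon ⟨k, hk', fun p => ?_⟩
          constructor
          · intro h1
            rw [← List.mem_toFinset, ← he, List.mem_toFinset] at h1
            exact h1
          · intro h1
            exact iterL_mono (Nat.le_succ k) h1
        have : (iterL P s k).toFinset.card < (iterL P s (k+1)).toFinset.card :=
          Finset.card_lt_card (lt_of_le_of_ne hsub hne)
        omega
    have h1 : s * s + 1 ≤ (iterL P s (s*s+1)).toFinset.card := hgrow _ le_rfl
    have h2 : (iterL P s (s*s+1)).toFinset.card ≤ s * s := by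
      calc (iterL P s (s*s+1)).toFinset.card
          ≤ (univL s).toFinset.card := by
            apply Finset.card_le_card
            intro p hp
            rw [List.mem_toFinset] at hp ⊢
            exact iterL_subset_univ hp
        _ ≤ (univL s).length := (univL s).toFinset_card_le
        _ = s * s := length_univL s
    omega
  obtain ⟨k, hk, hfix⟩ := hstab
  -- all iterates from k on have the same members
  have hsame : ∀ j, k ≤ j → ∀ p, p ∈ iterL P s j ↔ p ∈ iterL P s k := by
    intro j hj
    induction j with
    | zero => rw [Nat.le_zero.1 hj]; intro p; rfl
    | succ j ih =>
      rcases Nat.lt_or_ge k (j+1) with hkj | hkj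
      · intro p
        have hjk : k ≤ j := Nat.lt_succ_iff.1 hkj
        have : ∀ q, q ∈ iterL P s j ↔ q ∈ iterL P s k := ih hjk
        rw [iterL_succ]
        calc p ∈ stepL s (iterL P s j) ↔ p ∈ stepL s (iterL P s k) := stepL_congr this p
          _ ↔ p ∈ iterL P s (k+1) := Iff.rfl
          _ ↔ p ∈ iterL P s k := hfix p
      · rw [Nat.le_antisymm hj hkj]; intro p; rfl
  intro p
  have h1 : ∀ q, q ∈ reachL P s ↔ q ∈ iterL P s k := hsame (s*s+1) (by omega)
  calc p ∈ stepL s (reachL P s) ↔ p ∈ stepL s (iterL P s k) :=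
        stepL_congr h1 p
    _ ↔ p ∈ iterL P s k := hfix p
    _ ↔ p ∈ reachL P s := (h1 p).symm

lemma reachB_iff {prec : ℕ → ℕ → Prop} {U : Set ℕ} {Q : ℕ → ℕ → Bool}
    (H : Approx prec U P Q) {s b a : ℕ} : reachB P s b a = true ↔ Rs P s b a := by
  rw [reachB, memB_iff]
  constructor
  · intro h
    exact iterL_sound _ h
  · intro h
    induction h with
    | single h1 =>
      have hb : Nat.pair b _ < s := H.pbound h1
      apply iterL_mono (Nat.zero_le _)
      rw [iterL_zero, mem_baseL]
      refine ⟨mem_univL.2 ⟨?_, ?_⟩, h1⟩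
      · exact lt_of_le_of_lt (Nat.left_le_pair _ _) (H.pbound h1)
      · exact lt_of_le_of_lt (Nat.right_le_pair _ _) (H.pbound h1)
    | @tail c d hbc hcd ih =>
      have hcd' : (c, d) ∈ reachL P s := by
        apply iterL_mono (Nat.zero_le _)
        rw [iterL_zero, mem_baseL]
        refine ⟨mem_univL.2 ⟨?_, ?_⟩, hcd⟩
        · exact lt_of_le_of_lt (Nat.left_le_pair _ _) (H.pbound hcd)
        · exact lt_of_le_of_lt (Nat.right_le_pair _ _) (H.pbound hcd)
      apply (iterL_stab (b, d)).1
      rw [mem_stepL]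
      refine Or.inr ⟨mem_univL.2 ⟨?_, ?_⟩, linkB_iff.2 ⟨c, ih, hcd'⟩⟩
      · exact mem_univL.1 (iterL_subset_univ ih) |>.1
      · exact lt_of_le_of_lt (Nat.right_le_pair _ _) (H.pbound hcd)

lemma certB_iff {prec : ℕ → ℕ → Prop} {U : Set ℕ} {Q : ℕ → ℕ → Bool}
    (H : Approx prec U P Q) {a s : ℕ} : certB P Q a s = true ↔ Cert P Q a s := by
  rw [certB, foldr_and_iff]
  constructor
  · intro h y hy hya
    have hys : y < s := H.qbound hy
    have h2 := h y (List.mem_range.2 hys)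
    rw [Bool.not_eq_true'] at h2
    rw [hy, Bool.true_and] at h2
    rw [Bool.or_eq_false_iff, decide_eq_false_iff_not] at h2
    rcases hya with rfl | hya
    · exact h2.1 rfl
    · have := (reachB_iff H).2 hya
      rw [h2.2] at this
      exact Bool.false_ne_true this
  · intro h y _
    rw [Bool.not_eq_true']
    by_cases hQ : Q s y = true
    · rw [hQ, Bool.true_and, Bool.or_eq_false_iff, decide_eq_false_iff_not]
      have hn := h y hQ
      constructor
      · intro hya
        exact hn (Or.inl hya)
      · rcases hr : reachB P s y a with _ | _
        · rfl
        · exact absurd (Or.inr ((reachB_iff H).1 hr)) hn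
    · have hqf : Q s y = false := by
        cases hqq : Q s y
        · rfl
        · exact absurd hqq hQ
      rw [hqf, Bool.false_and]

end Comp

end Stmt3Aux

namespace Stmt3Aux

section Prim

open Primrec

lemma memB_primrec : Primrec₂ memB := by
  have hh : Primrec₂ fun (x : List (ℕ × ℕ) × (ℕ × ℕ)) (y : (ℕ × ℕ) × Bool) =>
      ((decide (y.1 = x.2)) || y.2) :=
    Primrec.or.comp₂ (Primrec.eq.comp₂ (Primrec.fst.comp₂ Primrec₂.right)
      (Primrec.snd.comp₂ Primrec₂.left)).decide (Primrec.snd.comp₂ Primrec₂.right)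
  exact (Primrec.list_foldr Primrec.fst (Primrec.const false) hh).to₂.of_eq fun L p => rfl

lemma univL_primrec : Primrec univL := by
  have hg : Primrec₂ fun (x : ℕ) (a : ℕ) => (List.range x).map fun b => (a, b) := by
    have : Primrec fun x : ℕ × ℕ => (List.range x.1).map fun b => (x.2, b) :=
      Primrec.list_map (Primrec.list_range.comp Primrec.fst)
        (Primrec₂.pair.comp₂ (Primrec.snd.comp₂ Primrec₂.left) Primrec₂.right)
    exact this.to₂
  exact Primrec.list_flatMap Primrec.list_range hg

lemma linkB_primrec : Primrec₂ linkB := by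
  have hh : Primrec₂ fun (x : List (ℕ × ℕ) × (ℕ × ℕ)) (y : (ℕ × ℕ) × Bool) =>
      (((decide (y.1.1 = x.2.1)) && memB x.1 (y.1.2, x.2.2)) || y.2) := by
    have hr1 : Primrec₂ fun (x : List (ℕ × ℕ) × (ℕ × ℕ)) (y : (ℕ × ℕ) × Bool) => y.1.1 :=
      Primrec.fst.comp₂ (Primrec.fst.comp₂ Primrec₂.right)
    have hr2 : Primrec₂ fun (x : List (ℕ × ℕ) × (ℕ × ℕ)) (y : (ℕ × ℕ) × Bool) => y.1.2 :=
      Primrec.snd.comp₂ (Primrec.fst.comp₂ Primrec₂.right)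
    have hq1 : Primrec₂ fun (x : List (ℕ × ℕ) × (ℕ × ℕ)) (y : (ℕ × ℕ) × Bool) => x.2.1 :=
      Primrec.fst.comp₂ (Primrec.snd.comp₂ Primrec₂.left)
    have hq2 : Primrec₂ fun (x : List (ℕ × ℕ) × (ℕ × ℕ)) (y : (ℕ × ℕ) × Bool) => x.2.2 :=
      Primrec.snd.comp₂ (Primrec.snd.comp₂ Primrec₂.left)
    have hL : Primrec₂ fun (x : List (ℕ × ℕ) × (ℕ × ℕ)) (y : (ℕ × ℕ) × Bool) => x.1 :=
      Primrec.fst.comp₂ Primrec₂.left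
    exact Primrec.or.comp₂
      (Primrec.and.comp₂ (Primrec.eq.comp₂ hr1 hq1).decide
        (memB_primrec.comp₂ hL (Primrec₂.pair.comp₂ hr2 hq2)))
      (Primrec.snd.comp₂ Primrec₂.right)
  exact (Primrec.list_foldr Primrec.fst (Primrec.const false) hh).to₂.of_eq fun L p => rfl

lemma stepL_primrec : Primrec₂ stepL := by
  have hfold : Primrec fun x : ℕ × List (ℕ × ℕ) =>
      (univL x.1).foldr (fun q acc => if linkB x.2 q then q :: acc else acc) [] := by
    have hh : Primrec₂ fun (x : ℕ × List (ℕ × ℕ)) (y : (ℕ × ℕ) × List (ℕ × ℕ)) =>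
        if linkB x.2 y.1 then y.1 :: y.2 else y.2 := by
      have hcond : PrimrecPred fun z : (ℕ × List (ℕ × ℕ)) × ((ℕ × ℕ) × List (ℕ × ℕ)) =>
          (linkB z.1.2 z.2.1 = true) :=
        PrimrecRel.comp Primrec.eq
          (linkB_primrec.comp (Primrec.snd.comp Primrec.fst) (Primrec.fst.comp Primrec.snd))
          (Primrec.const true)
      exact (Primrec.ite hcond
        (Primrec.list_cons.comp (Primrec.fst.comp Primrec.snd) (Primrec.snd.comp Primrec.snd))
        (Primrec.snd.comp Primrec.snd)).to₂
    exact Primrec.list_foldr (univL_primrec.comp Primrec.fst) (Primrec.const []) hh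
  exact (Primrec.list_append.comp Primrec.snd hfold).to₂.of_eq fun s L => rfl

variable {P : ℕ → ℕ → ℕ → Bool} {Q : ℕ → ℕ → Bool}

lemma baseL_primrec (hP : Primrec fun x : ℕ × ℕ × ℕ => P x.1 x.2.1 x.2.2) :
    Primrec (baseL P) := by
  have hh : Primrec₂ fun (s : ℕ) (y : (ℕ × ℕ) × List (ℕ × ℕ)) =>
      if P s y.1.1 y.1.2 then y.1 :: y.2 else y.2 := by
    have hcond : PrimrecPred fun z : ℕ × ((ℕ × ℕ) × List (ℕ × ℕ)) =>
        (P z.1 z.2.1.1 z.2.1.2 = true) :=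
      PrimrecRel.comp Primrec.eq
        (hP.comp (Primrec.pair Primrec.fst
          (Primrec.pair (Primrec.fst.comp (Primrec.fst.comp Primrec.snd))
            (Primrec.snd.comp (Primrec.fst.comp Primrec.snd)))))
        (Primrec.const true)
    exact (Primrec.ite hcond
      (Primrec.list_cons.comp (Primrec.fst.comp Primrec.snd) (Primrec.snd.comp Primrec.snd))
      (Primrec.snd.comp Primrec.snd)).to₂
  exact (Primrec.list_foldr univL_primrec (Primrec.const []) hh).of_eq fun s => rfl

lemma reachL_primrec (hP : Primrec fun x : ℕ × ℕ × ℕ => P x.1 x.2.1 x.2.2) :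
    Primrec (reachL P) := by
  have := Primrec.nat_rec' (f := fun s : ℕ => s * s + 1) (g := baseL P)
    (h := fun (s : ℕ) (p : ℕ × List (ℕ × ℕ)) => stepL s p.2)
    (Primrec.succ.comp (Primrec.nat_mul.comp Primrec.id Primrec.id))
    (baseL_primrec hP)
    ((stepL_primrec.comp Primrec.fst (Primrec.snd.comp Primrec.snd)).to₂)
  exact this.of_eq fun s => rfl

lemma reachB_primrec (hP : Primrec fun x : ℕ × ℕ × ℕ => P x.1 x.2.1 x.2.2) :
    Primrec fun x : ℕ × ℕ × ℕ => reachB P x.1 x.2.1 x.2.2 :=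
  memB_primrec.comp ((reachL_primrec hP).comp Primrec.fst)
    (Primrec.pair (Primrec.fst.comp Primrec.snd) (Primrec.snd.comp Primrec.snd))

lemma certB_primrec (hP : Primrec fun x : ℕ × ℕ × ℕ => P x.1 x.2.1 x.2.2)
    (hQ : Primrec₂ Q) : Primrec₂ (certB P Q) := by
  have hh : Primrec₂ fun (x : ℕ × ℕ) (y : ℕ × Bool) =>
      ((!(Q x.2 y.1 && ((decide (y.1 = x.1)) || reachB P x.2 y.1 x.1))) && y.2) := by
    have hy1 : Primrec fun z : (ℕ × ℕ) × (ℕ × Bool) => z.2.1 :=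
      Primrec.fst.comp Primrec.snd
    have ha : Primrec fun z : (ℕ × ℕ) × (ℕ × Bool) => z.1.1 :=
      Primrec.fst.comp Primrec.fst
    have hs : Primrec fun z : (ℕ × ℕ) × (ℕ × Bool) => z.1.2 :=
      Primrec.snd.comp Primrec.fst
    have hQ' : Primrec fun z : (ℕ × ℕ) × (ℕ × Bool) => Q z.1.2 z.2.1 :=
      hQ.comp hs hy1
    have hre : Primrec fun z : (ℕ × ℕ) × (ℕ × Bool) => reachB P z.1.2 z.2.1 z.1.1 :=
      (reachB_primrec hP).comp (Primrec.pair hs (Primrec.pair hy1 ha))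
    exact (Primrec.and.comp
      (Primrec.not.comp (Primrec.and.comp hQ'
        (Primrec.or.comp (PrimrecRel.comp Primrec.eq hy1 ha).decide hre)))
      (Primrec.snd.comp Primrec.snd)).to₂
  exact ((Primrec.list_foldr (Primrec.list_range.comp Primrec.snd) (Primrec.const true)
    hh).to₂.of_eq fun a s => rfl)

/-- Boolean version of `sqR`. -/
def sqB (P : ℕ → ℕ → ℕ → Bool) (Q : ℕ → ℕ → Bool) (m n : ℕ) : Bool :=
  cond (decide (m % 2 = 0))
    (cond (decide (n % 2 = 0))
      (reachB P (n / 2).unpair.2 (m / 2).unpair.1 (n / 2).unpair.1 &&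
        decide ((m / 2).unpair.2 < (n / 2).unpair.2) &&
        !(certB P Q (n / 2).unpair.1 (n / 2).unpair.2))
      (((decide ((m / 2).unpair.1 = (n / 2).unpair.1)) ||
          reachB P (n / 2).unpair.2 (m / 2).unpair.1 (n / 2).unpair.1) &&
        decide ((m / 2).unpair.2 < (n / 2).unpair.2) &&
        certB P Q (n / 2).unpair.1 (n / 2).unpair.2))
    (cond (decide (n % 2 = 0)) false
      (reachB P (n / 2).unpair.2 (m / 2).unpair.1 (n / 2).unpair.1 &&
        decide ((m / 2).unpair.2 < (n / 2).unpair.2) &&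
        certB P Q (n / 2).unpair.1 (n / 2).unpair.2))

lemma sqB_primrec (hP : Primrec fun x : ℕ × ℕ × ℕ => P x.1 x.2.1 x.2.2)
    (hQ : Primrec₂ Q) : Primrec₂ (sqB P Q) := by
  have hm : Primrec fun x : ℕ × ℕ => decide (x.1 % 2 = 0) :=
    (PrimrecRel.comp Primrec.eq (Primrec.nat_mod.comp Primrec.fst (Primrec.const 2))
      (Primrec.const 0)).decide
  have hn : Primrec fun x : ℕ × ℕ => decide (x.2 % 2 = 0) :=
    (PrimrecRel.comp Primrec.eq (Primrec.nat_mod.comp Primrec.snd (Primrec.const 2))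
      (Primrec.const 0)).decide
  have hb : Primrec fun x : ℕ × ℕ => (x.1 / 2).unpair.1 :=
    Primrec.fst.comp (Primrec.unpair.comp (Primrec.nat_div.comp Primrec.fst (Primrec.const 2)))
  have ht : Primrec fun x : ℕ × ℕ => (x.1 / 2).unpair.2 :=
    Primrec.snd.comp (Primrec.unpair.comp (Primrec.nat_div.comp Primrec.fst (Primrec.const 2)))
  have ha : Primrec fun x : ℕ × ℕ => (x.2 / 2).unpair.1 :=
    Primrec.fst.comp (Primrec.unpair.comp (Primrec.nat_div.comp Primrec.snd (Primrec.const 2)))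
  have hs : Primrec fun x : ℕ × ℕ => (x.2 / 2).unpair.2 :=
    Primrec.snd.comp (Primrec.unpair.comp (Primrec.nat_div.comp Primrec.snd (Primrec.const 2)))
  have hre : Primrec fun x : ℕ × ℕ =>
      reachB P (x.2 / 2).unpair.2 (x.1 / 2).unpair.1 (x.2 / 2).unpair.1 :=
    (reachB_primrec hP).comp (Primrec.pair hs (Primrec.pair hb ha))
  have hlt : Primrec fun x : ℕ × ℕ => decide ((x.1 / 2).unpair.2 < (x.2 / 2).unpair.2) :=
    (PrimrecRel.comp Primrec.nat_lt ht hs).decide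
  have hcert : Primrec fun x : ℕ × ℕ => certB P Q (x.2 / 2).unpair.1 (x.2 / 2).unpair.2 :=
    (certB_primrec hP hQ).comp ha hs
  have hbeq : Primrec fun x : ℕ × ℕ => decide ((x.1 / 2).unpair.1 = (x.2 / 2).unpair.1) :=
    (PrimrecRel.comp Primrec.eq hb ha).decide
  exact (Primrec.cond hm
    (Primrec.cond hn
      (Primrec.and.comp (Primrec.and.comp hre hlt) (Primrec.not.comp hcert))
      (Primrec.and.comp (Primrec.and.comp (Primrec.or.comp hbeq hre) hlt) hcert))
    (Primrec.cond hn (Primrec.const false)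
      (Primrec.and.comp (Primrec.and.comp hre hlt) hcert))).to₂

lemma sqB_iff {prec : ℕ → ℕ → Prop} {U : Set ℕ} (H : Approx prec U P Q) (m n : ℕ) :
    sqB P Q m n = true ↔ sqR P Q m n := by
  have hC : ∀ a s, certB P Q a s = false ↔ ¬ Cert P Q a s := by
    intro a s
    rw [← certB_iff H]
    cases certB P Q a s <;> simp
  by_cases h1 : m % 2 = 0 <;> by_cases h2 : n % 2 = 0
  · simp [sqB, sqR, h1, h2, Bool.and_eq_true, decide_eq_true_eq, reachB_iff H,
      certB_iff H, Bool.not_eq_true', hC, and_assoc]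
  · simp [sqB, sqR, h1, h2, Bool.and_eq_true, Bool.or_eq_true, decide_eq_true_eq,
      reachB_iff H, certB_iff H, hC, and_assoc]
  · simp [sqB, sqR, h1, h2, Bool.and_eq_true, decide_eq_true_eq, reachB_iff H,
      certB_iff H, hC, and_assoc]
  · simp [sqB, sqR, h1, h2, Bool.and_eq_true, decide_eq_true_eq, reachB_iff H,
      certB_iff H, hC, and_assoc]

end Prim

end Stmt3Aux

namespace Stmt3Aux

section Topo

variable {prec : ℕ → ℕ → Prop} {U : Set ℕ} {P : ℕ → ℕ → ℕ → Bool} {Q : ℕ → ℕ → Bool}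

lemma isOpen_basic {S : Type*} (r : S → S → Prop) (z : S) :
    IsOpen {J : IdealSpace r | z ∈ J.1} :=
  TopologicalSpace.isOpen_generateFrom_of_mem ⟨z, rfl⟩

lemma isOpen_piSet_mem (a : ℕ) :
    IsOpen {J : IdealSpace (sqR P Q) | a ∈ piSet J.1} := by
  have he : {J : IdealSpace (sqR P Q) | a ∈ piSet J.1} =
      ⋃ t, ({J : IdealSpace (sqR P Q) | dd a t ∈ J.1} ∪
        {J : IdealSpace (sqR P Q) | ffe a t ∈ J.1}) := by
    ext J
    simp only [Set.mem_setOf_eq, Set.mem_iUnion, Set.mem_union]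
    exact Iff.rfl
  rw [he]
  exact isOpen_iUnion fun t => (isOpen_basic _ _).union (isOpen_basic _ _)

lemma isOpen_ffe_exists :
    IsOpen {J : IdealSpace (sqR P Q) | ∃ a t, ffe a t ∈ J.1} := by
  have he : {J : IdealSpace (sqR P Q) | ∃ a t, ffe a t ∈ J.1} =
      ⋃ a, ⋃ t, {J : IdealSpace (sqR P Q) | ffe a t ∈ J.1} := by
    ext J
    simp only [Set.mem_setOf_eq, Set.mem_iUnion]
  rw [he]
  exact isOpen_iUnion fun a => isOpen_iUnion fun t => isOpen_basic _ _

lemma ffe_exists_iff (H : Approx prec U P Q) (htrans : Transitive prec)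
    (J : IdealSpace (sqR P Q)) :
    (∃ a t, ffe a t ∈ J.1) ↔ ∀ x ∈ U, x ∉ piSet J.1 := by
  constructor
  · rintro ⟨a, t, h⟩
    exact disjoint_of_ffe H J.2 h
  · intro hd
    obtain ⟨z, hz⟩ := J.2.1
    rcases code_cases z with ⟨a, t, rfl⟩ | ⟨a, t, rfl⟩
    · exact ⟨a, 0, (mem_ffe_iff H htrans J.2).2 ⟨⟨t, Or.inl hz⟩, hd⟩⟩
    · exact ⟨a, t, hz⟩

/-- The bijection between the two ideal spaces. -/
def homeoEquiv (H : Approx prec U P Q) (htrans : Transitive prec) :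
    IdealSpace (sqR P Q) ≃ IdealSpace prec where
  toFun J := ⟨piSet J.1, piSet_ideal H htrans J.2⟩
  invFun I := ⟨FJ U I.1, FJ_ideal H htrans I.2⟩
  left_inv J := Subtype.ext (FJ_piSet H htrans J.2)
  right_inv I := Subtype.ext (piSet_FJ I.2)

theorem main (H : Approx prec U P Q) (htrans : Transitive prec) :
    Nonempty (@Homeomorph (IdealSpace (sqR P Q)) (IdealSpace prec) _
      (TopologicalSpace.generateFrom
        ({s : Set (IdealSpace prec) | IsOpen s} ∪
          {{I : IdealSpace prec | ∀ x ∈ U, x ∉ I.1}}))) := by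
  refine ⟨@Homeomorph.mk _ _ _ (TopologicalSpace.generateFrom _) (homeoEquiv H htrans) ?_ ?_⟩
  · -- continuity of the forward map
    refine continuous_generateFrom_iff.mpr ?_
    intro s hs
    rcases hs with hs | hs
    · -- s is open in the original topology
      have hcont_old : Continuous (homeoEquiv H htrans) := by
        refine continuous_generateFrom_iff.mpr ?_
        rintro s' ⟨a, rfl⟩
        exact isOpen_piSet_mem a
      exact hcont_old.isOpen_preimage s hs
    · -- s is the new open set
      rw [Set.mem_singleton_iff] at hs
      subst hs
      have he : (homeoEquiv H htrans).toFun ⁻¹'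
          {I : IdealSpace prec | ∀ x ∈ U, x ∉ I.1} =
          {J : IdealSpace (sqR P Q) | ∃ a t, ffe a t ∈ J.1} := by
        ext J
        simp only [Set.mem_preimage, Set.mem_setOf_eq]
        exact (ffe_exists_iff H htrans J).symm
      rw [he]
      exact isOpen_ffe_exists
  · -- continuity of the inverse map
    refine continuous_generateFrom_iff.mpr ?_
    rintro s ⟨z, rfl⟩
    rcases code_cases z with ⟨a, t, rfl⟩ | ⟨a, t, rfl⟩
    · have he : (homeoEquiv H htrans).invFun ⁻¹'
          {J : IdealSpace (sqR P Q) | dd a t ∈ J.1} = {I : IdealSpace prec | a ∈ I.1} := by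
        ext I
        simp only [Set.mem_preimage, Set.mem_setOf_eq]
        exact mem_dd_FJ
      rw [he]
      exact TopologicalSpace.GenerateOpen.basic _ (Or.inl (isOpen_basic prec a))
    · have he : (homeoEquiv H htrans).invFun ⁻¹'
          {J : IdealSpace (sqR P Q) | ffe a t ∈ J.1} =
          {I : IdealSpace prec | a ∈ I.1} ∩
            {I : IdealSpace prec | ∀ x ∈ U, x ∉ I.1} := by
        ext I
        simp only [Set.mem_preimage, Set.mem_setOf_eq, Set.mem_inter_iff]
        exact mem_ffe_FJ
      rw [he]
      exact TopologicalSpace.GenerateOpen.inter _ _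
        (TopologicalSpace.GenerateOpen.basic _ (Or.inl (isOpen_basic prec a)))
        (TopologicalSpace.GenerateOpen.basic _ (Or.inr rfl))

theorem sqR_re (H : Approx prec U P Q)
    (hP : Primrec fun x : ℕ × ℕ × ℕ => P x.1 x.2.1 x.2.2) (hQ : Primrec₂ Q) :
    REPred' fun p : ℕ × ℕ => sqR P Q p.1 p.2 :=
  rePred_of_bool (B := fun p : ℕ × ℕ => sqB P Q p.1 p.2)
    ((sqB_primrec hP hQ).to_comp) (fun p => (sqB_iff H p.1 p.2).symm)

end Topo

end Stmt3Aux

theorem stmt3 (prec : ℕ → ℕ → Prop)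
    (hce : REPred' fun p : ℕ × ℕ => prec p.1 p.2)
    (htrans : Transitive prec)
    (U : Set ℕ) (hU : REPred' (· ∈ U)) :
    ∃ sq : ℕ → ℕ → Prop,
      (REPred' fun p : ℕ × ℕ => sq p.1 p.2) ∧ Transitive sq ∧
      Nonempty (@Homeomorph (IdealSpace sq) (IdealSpace prec) _
        (TopologicalSpace.generateFrom
          ({s : Set (IdealSpace prec) | IsOpen s} ∪
            {{I : IdealSpace prec | ∀ x ∈ U, x ∉ I.1}}))) := by
  obtain ⟨BP, hBPmono, hBPbound, hBPiff, hBPprim⟩ := hce.exists_approx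
  obtain ⟨BU, hBUmono, hBUbound, hBUiff, hBUprim⟩ := hU.exists_approx
  have H : Stmt3Aux.Approx prec U (fun s a b => BP s (a, b)) BU :=
    { pmono := fun h1 h2 => hBPmono h1 h2
      pbound := fun h => hBPbound h
      piff := fun a b => hBPiff (a, b)
      qmono := fun h1 h2 => hBUmono h1 h2
      qbound := fun h => hBUbound h
      qiff := fun x => hBUiff x }
  have hPprim : Primrec fun x : ℕ × ℕ × ℕ => BP x.1 (x.2.1, x.2.2) := hBPprim
  have hQprim : Primrec₂ BU := hBUprim
  exact ⟨Stmt3Aux.sqR (fun s a b => BP s (a, b)) BU,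
    Stmt3Aux.sqR_re H hPprim hQprim, Stmt3Aux.sqR_trans H,
    Stmt3Aux.main H htrans⟩
end

section
/- Let ≺ be a computably enumerable transitive relation on ℕ and let U ⊆ ℕ × ℕ be a computably enumerable set, and for each i ∈ ℕ let A_i = {I ∈ I(≺) | ∀ x, (i, x) ∈ U → x ∉ I}. Then there exists a computably enumerable transitive relation ⊏ on ℕ such that I(⊏) is homeomorphic to the topological space whose underlying set is I(≺) and whose topology is generated by the open sets of I(≺) together with all the sets A_i for i ∈ ℕ. -/
set_option maxHeartbeats 1000000
open Nat.Partrec (Code)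
open Nat.Partrec.Code


namespace Stmt4Aux



/-- staged approximation to the c.e. relation coded by `c`. -/
def pB (c : Code) (t a b : ℕ) : Bool := (evaln t c (Nat.pair a b)).isSome

lemma pB_mono {c : Code} {t t' a b : ℕ} (h : t ≤ t') (hp : pB c t a b = true) :
    pB c t' a b = true := by
  rcases Option.isSome_iff_exists.1 hp with ⟨x, hx⟩
  exact Option.isSome_iff_exists.2 ⟨x, evaln_mono h hx⟩

lemma pB_lt {c : Code} {t a b : ℕ} (hp : pB c t a b = true) : a < t ∧ b < t := by
  rcases Option.isSome_iff_exists.1 hp with ⟨x, hx⟩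
  have := evaln_bound hx
  exact ⟨lt_of_le_of_lt (Nat.left_le_pair a b) this, lt_of_le_of_lt (Nat.right_le_pair a b) this⟩

/-- base list: 1-step reachable from `a`, staged `t`. -/
def baseL (c : Code) (t a : ℕ) : List ℕ := (List.range t).filter fun y => pB c t a y

/-- one saturation step. -/
def stepL (c : Code) (t : ℕ) (L : List ℕ) : List ℕ :=
  (List.range t).filter fun y =>
    (L.any fun z => decide (z = y)) || L.any fun x => pB c t x y

/-- iterated saturation. -/
def FL (c : Code) (t a : ℕ) : ℕ → List ℕ :=
  fun k => Nat.rec (baseL c t a) (fun _ ih => stepL c t ih) k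

lemma mem_baseL {c t a y} : y ∈ baseL c t a ↔ y < t ∧ pB c t a y = true := by
  simp [baseL, List.mem_filter, List.mem_range]

lemma mem_stepL {c t L y} :
    y ∈ stepL c t L ↔ y < t ∧ (y ∈ L ∨ ∃ x ∈ L, pB c t x y = true) := by
  simp [stepL, List.mem_filter, List.mem_range]

lemma FL_succ (c t a k) : FL c t a (k + 1) = stepL c t (FL c t a k) := rfl

lemma FL_sound {c t a k b} (h : b ∈ FL c t a k) :
    Relation.TransGen (fun x y => pB c t x y = true) a b := by
  induction k generalizing b with
  | zero => exact Relation.TransGen.single (mem_baseL.1 h).2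
  | succ k ih =>
    rcases (mem_stepL.1 h).2 with h' | ⟨x, hx, hxb⟩
    · exact ih h'
    · exact Relation.TransGen.tail (ih hx) hxb

lemma FL_lt {c t a k y} (h : y ∈ FL c t a k) : y < t := by
  cases k with
  | zero => exact (mem_baseL.1 h).1
  | succ k => exact (mem_stepL.1 h).1

lemma FL_mono_succ {c t a k} : ∀ {y}, y ∈ FL c t a k → y ∈ FL c t a (k + 1) := by
  intro y h
  exact mem_stepL.2 ⟨FL_lt h, Or.inl h⟩

lemma FL_mono {c t a} {k k'} (h : k ≤ k') : ∀ {y}, y ∈ FL c t a k → y ∈ FL c t a k' := by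
  induction h with
  | refl => exact fun h => h
  | step _ ih => exact fun h => FL_mono_succ (ih h)

/-- every `FL` is a filter of `range t`. -/
lemma FL_eq_filter (c t a k) : ∃ p : ℕ → Bool, FL c t a k = (List.range t).filter p := by
  cases k with
  | zero => exact ⟨_, rfl⟩
  | succ k => exact ⟨_, rfl⟩

lemma exists_fixpoint (c t a) : ∃ k ≤ t, FL c t a (k + 1) = FL c t a k := by
  by_contra hcon
  push_neg at hcon
  have grow : ∀ k ≤ t, (FL c t a k).length < (FL c t a (k + 1)).length := by
    intro k hk
    rcases FL_eq_filter c t a k with ⟨p, hp⟩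
    -- FL (k+1) = (range t).filter q, and filter p sublist filter q:
    have hsub : List.Sublist (FL c t a k) (FL c t a (k + 1)) := by
      rw [hp, FL_succ]
      unfold stepL
      rw [show (List.range t).filter p
            = (List.range t).filter (fun y => decide (y ∈ List.range t) && p y) from ?_]
      · apply List.monotone_filter_right
        intro y hy
        simp only [Bool.and_eq_true, decide_eq_true_eq] at hy
        have : y ∈ FL c t a k := by rw [hp]; exact List.mem_filter.2 ⟨hy.1, hy.2⟩
        simp only [Bool.or_eq_true, List.any_eq_true, decide_eq_true_eq]
        exact Or.inl ⟨y, this, rfl⟩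
      · apply List.filter_congr
        intro y hy
        simp [hy]
    rcases Nat.lt_or_ge (FL c t a k).length (FL c t a (k + 1)).length with h | h
    · exact h
    · exact absurd (hsub.eq_of_length (le_antisymm hsub.length_le h)).symm (hcon k hk)
  have hlen : ∀ k ≤ t + 1, k ≤ (FL c t a k).length := by
    intro k hk
    induction k with
    | zero => exact Nat.zero_le _
    | succ k ih =>
      have h1 := ih (le_trans (Nat.le_succ k) hk)
      have h2 := grow k (Nat.lt_succ_iff.1 hk)
      omega
  have h1 := hlen (t + 1) le_rfl
  rcases FL_eq_filter c t a (t + 1) with ⟨p, hp⟩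
  have h2 : (FL c t a (t + 1)).length ≤ t := by
    rw [hp]
    calc ((List.range t).filter p).length ≤ (List.range t).length := List.length_filter_le _ _
    _ = t := List.length_range
  omega

lemma FL_saturated (c t a) : ∀ k, FL c t a (t + 1 + k) = FL c t a (t + 1) := by
  rcases exists_fixpoint c t a with ⟨k₀, hk₀, hfix⟩
  have stable : ∀ j, k₀ ≤ j → FL c t a j = FL c t a k₀ := by
    intro j hj
    induction j with
    | zero => cases Nat.le_zero.1 hj; rfl
    | succ j ih =>
      rcases Nat.lt_or_ge k₀ (j+1) with h | h
      · have := ih (Nat.lt_succ_iff.1 h)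
        rw [FL_succ, this, ← FL_succ, hfix]
      · cases le_antisymm hj h; rfl
  intro k
  rw [stable (t+1+k) (by omega), stable (t+1) (by omega)]

lemma FL_closed {c t a b z} (hb : b ∈ FL c t a (t + 1)) (hz : pB c t b z = true) :
    z ∈ FL c t a (t + 1) := by
  have h1 : z ∈ FL c t a (t + 1 + 1) :=
    mem_stepL.2 ⟨(pB_lt hz).2, Or.inr ⟨b, hb, hz⟩⟩
  have := FL_saturated c t a 1
  rw [← this]; exact h1

lemma FL_complete {c t a b} (h : Relation.TransGen (fun x y => pB c t x y = true) a b) :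
    b ∈ FL c t a (t + 1) := by
  induction h with
  | single hab => exact FL_mono (Nat.zero_le _) (mem_baseL.2 ⟨(pB_lt hab).2, hab⟩)
  | tail _ hxb ih => exact FL_closed ih hxb

/-- staged transitive reachability. -/
def reachB (c : Code) (t a b : ℕ) : Bool := (FL c t a (t + 1)).any fun z => decide (z = b)

lemma reachB_iff {c t a b} :
    reachB c t a b = true ↔ Relation.TransGen (fun x y => pB c t x y = true) a b := by
  constructor
  · intro h
    simp only [reachB, List.any_eq_true, decide_eq_true_eq] at h
    rcases h with ⟨z, hz, rfl⟩
    exact FL_sound hz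
  · intro h
    simp only [reachB, List.any_eq_true, decide_eq_true_eq]
    exact ⟨b, FL_complete h, rfl⟩

lemma reachB_mono {c t t' a b} (h : t ≤ t') (hr : reachB c t a b = true) :
    reachB c t' a b = true :=
  reachB_iff.2 ((reachB_iff.1 hr).lift id fun _ _ hp => pB_mono h hp)

lemma reachB_trans {c t a b d} (h1 : reachB c t a b = true) (h2 : reachB c t b d = true) :
    reachB c t a d = true :=
  reachB_iff.2 ((reachB_iff.1 h1).trans (reachB_iff.1 h2))

lemma reachB_of_pB {c t a b} (h : pB c t a b = true) : reachB c t a b = true :=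
  reachB_iff.2 (Relation.TransGen.single h)








def tri (a n s : ℕ) : ℕ := Nat.pair a (Nat.pair n s)
def fstN (e : ℕ) : ℕ := e.unpair.1
def capN (e : ℕ) : ℕ := e.unpair.2.unpair.1
def stgN (e : ℕ) : ℕ := e.unpair.2.unpair.2

@[simp] lemma fstN_tri (a n s : ℕ) : fstN (tri a n s) = a := by simp [fstN, tri]
@[simp] lemma capN_tri (a n s : ℕ) : capN (tri a n s) = n := by simp [capN, tri]
@[simp] lemma stgN_tri (a n s : ℕ) : stgN (tri a n s) = s := by simp [stgN, tri]
@[simp] lemma tri_eta (e : ℕ) : tri (fstN e) (capN e) (stgN e) = e := by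
  simp [tri, fstN, capN, stgN]

def safeB (cP cU : Code) (i b t : ℕ) : Bool :=
  (List.range t).all fun x =>
    !(pB cU t i x) || (!(decide (x = b)) && !(reachB cP t x b))



def sqB (cP cU : Code) (e f : ℕ) : Bool :=
  decide (stgN e < stgN f) && (decide (capN e < capN f) &&
  (reachB cP (stgN f) (fstN e) (fstN f) &&
  (List.range (capN e + 1)).all fun i =>
    !(safeB cP cU i (fstN e) (stgN e)) || safeB cP cU i (fstN f) (stgN f)))

section Prim

variable {α : Type*} [Primcodable α]

private lemma any_eq_foldr (p : β → Bool) (l : List β) :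
    l.any p = l.foldr (fun a r => p a || r) false := by
  induction l with
  | nil => rfl
  | cons a l ih => simp [ih]

private lemma all_eq_foldr (p : β → Bool) (l : List β) :
    l.all p = l.foldr (fun a r => p a && r) true := by
  induction l with
  | nil => rfl
  | cons a l ih => simp [ih]

lemma prim_pB (c : Code) {t a b : α → ℕ} (ht : Primrec t) (ha : Primrec a) (hb : Primrec b) :
    Primrec fun x => pB c (t x) (a x) (b x) :=
  Primrec.option_isSome.comp
    (primrec_evaln.comp ((ht.pair (Primrec.const c)).pair (Primrec₂.natPair.comp ha hb)))

lemma prim_any {l : α → List ℕ} {p : α → ℕ → Bool} (hl : Primrec l) (hp : Primrec₂ p) :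
    Primrec fun x => (l x).any (p x) := by
  have hh : Primrec₂ (fun (x : α) (q : ℕ × Bool) => p x q.1 || q.2) :=
    Primrec.to₂ ((Primrec.dom_bool₂ (· || ·)).comp
      (hp.comp Primrec.fst (Primrec.fst.comp Primrec.snd))
      (Primrec.snd.comp Primrec.snd))
  exact (Primrec.list_foldr hl (Primrec.const false) hh).of_eq fun x =>
    (any_eq_foldr (p x) (l x)).symm

lemma prim_all {l : α → List ℕ} {p : α → ℕ → Bool} (hl : Primrec l) (hp : Primrec₂ p) :
    Primrec fun x => (l x).all (p x) := by
  have hh : Primrec₂ (fun (x : α) (q : ℕ × Bool) => p x q.1 && q.2) :=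
    Primrec.to₂ ((Primrec.dom_bool₂ (· && ·)).comp
      (hp.comp Primrec.fst (Primrec.fst.comp Primrec.snd))
      (Primrec.snd.comp Primrec.snd))
  exact (Primrec.list_foldr hl (Primrec.const true) hh).of_eq fun x =>
    (all_eq_foldr (p x) (l x)).symm

lemma prim_filter_range {n : α → ℕ} {p : α → ℕ → Bool} (hn : Primrec n) (hp : Primrec₂ p) :
    Primrec fun x => (List.range (n x)).filter (p x) := by
  have hh : Primrec₂ (fun (x : α) (q : ℕ × List ℕ) => bif p x q.1 then q.1 :: q.2 else q.2) :=
    Primrec.to₂ (Primrec.cond (hp.comp Primrec.fst (Primrec.fst.comp Primrec.snd))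
      (Primrec.list_cons.comp (Primrec.fst.comp Primrec.snd) (Primrec.snd.comp Primrec.snd))
      (Primrec.snd.comp Primrec.snd))
  exact (Primrec.list_foldr (Primrec.list_range.comp hn) (Primrec.const []) hh).of_eq fun x =>
    (List.filter_eq_foldr (p x) (List.range (n x))).symm

lemma prim_stepL (c : Code) {t : α → ℕ} {L : α → List ℕ} (ht : Primrec t) (hL : Primrec L) :
    Primrec fun x => stepL c (t x) (L x) := by
  have any1 : Primrec fun (q : α × ℕ) => (L q.1).any fun z => decide (z = q.2) :=
    prim_any (hL.comp Primrec.fst)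
      (Primrec.to₂ (Primrec.eq.comp Primrec.snd (Primrec.snd.comp Primrec.fst)).decide)
  have any2 : Primrec fun (q : α × ℕ) => (L q.1).any fun z => pB c (t q.1) z q.2 :=
    prim_any (hL.comp Primrec.fst)
      (Primrec.to₂ (prim_pB c (ht.comp (Primrec.fst.comp Primrec.fst)) Primrec.snd
        (Primrec.snd.comp Primrec.fst)))
  exact prim_filter_range ht
    (Primrec.to₂ ((Primrec.dom_bool₂ (· || ·)).comp any1 any2))

lemma prim_FL (c : Code) {t a k : α → ℕ} (ht : Primrec t) (ha : Primrec a) (hk : Primrec k) :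
    Primrec fun x => FL c (t x) (a x) (k x) := by
  have hbase : Primrec fun x => baseL c (t x) (a x) :=
    prim_filter_range ht
      (Primrec.to₂ (prim_pB c (ht.comp Primrec.fst) (ha.comp Primrec.fst) Primrec.snd))
  have hh : Primrec₂ (fun (x : α) (q : ℕ × List ℕ) => stepL c (t x) q.2) :=
    Primrec.to₂ (prim_stepL c (ht.comp Primrec.fst) (Primrec.snd.comp Primrec.snd))
  exact (Primrec.nat_rec' hk hbase hh).of_eq fun x => rfl

lemma prim_reachB (c : Code) {t a b : α → ℕ} (ht : Primrec t) (ha : Primrec a)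
    (hb : Primrec b) : Primrec fun x => reachB c (t x) (a x) (b x) :=
  prim_any (prim_FL c ht ha (Primrec.succ.comp ht))
    (Primrec.to₂ (Primrec.eq.comp Primrec.snd (hb.comp Primrec.fst)).decide)

lemma prim_safeB (cP cU : Code) {i b t : α → ℕ} (hi : Primrec i) (hb : Primrec b)
    (ht : Primrec t) : Primrec fun x => safeB cP cU (i x) (b x) (t x) := by
  have n1 : Primrec fun (q : α × ℕ) => !(pB cU (t q.1) (i q.1) q.2) :=
    (Primrec.dom_bool (!·)).comp
      (prim_pB cU (ht.comp Primrec.fst) (hi.comp Primrec.fst) Primrec.snd)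
  have n2 : Primrec fun (q : α × ℕ) => !(decide (q.2 = b q.1)) :=
    (Primrec.dom_bool (!·)).comp (Primrec.eq.comp Primrec.snd (hb.comp Primrec.fst)).decide
  have n3 : Primrec fun (q : α × ℕ) => !(reachB cP (t q.1) q.2 (b q.1)) :=
    (Primrec.dom_bool (!·)).comp
      (prim_reachB cP (ht.comp Primrec.fst) Primrec.snd (hb.comp Primrec.fst))
  exact prim_all (Primrec.list_range.comp ht)
    (Primrec.to₂ ((Primrec.dom_bool₂ (· || ·)).comp n1
      ((Primrec.dom_bool₂ (· && ·)).comp n2 n3)))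

lemma prim_fstN : Primrec fstN := Primrec.fst.comp Primrec.unpair
lemma prim_capN : Primrec capN := Primrec.fst.comp (Primrec.unpair.comp (Primrec.snd.comp Primrec.unpair))
lemma prim_stgN : Primrec stgN := Primrec.snd.comp (Primrec.unpair.comp (Primrec.snd.comp Primrec.unpair))

lemma prim_sqB (cP cU : Code) : Primrec₂ (sqB cP cU) := by
  have hse : Primrec fun (q : ℕ × ℕ) => stgN q.1 := prim_stgN.comp Primrec.fst
  have hsf : Primrec fun (q : ℕ × ℕ) => stgN q.2 := prim_stgN.comp Primrec.snd
  have hce : Primrec fun (q : ℕ × ℕ) => capN q.1 := prim_capN.comp Primrec.fst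
  have hcf : Primrec fun (q : ℕ × ℕ) => capN q.2 := prim_capN.comp Primrec.snd
  have hfe : Primrec fun (q : ℕ × ℕ) => fstN q.1 := prim_fstN.comp Primrec.fst
  have hff : Primrec fun (q : ℕ × ℕ) => fstN q.2 := prim_fstN.comp Primrec.snd
  have d1 : Primrec fun (q : ℕ × ℕ) => decide (stgN q.1 < stgN q.2) :=
    (Primrec.nat_lt.comp hse hsf).decide
  have d2 : Primrec fun (q : ℕ × ℕ) => decide (capN q.1 < capN q.2) :=
    (Primrec.nat_lt.comp hce hcf).decide
  have r : Primrec fun (q : ℕ × ℕ) => reachB cP (stgN q.2) (fstN q.1) (fstN q.2) :=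
    prim_reachB cP hsf hfe hff
  have s1 : Primrec fun (w : (ℕ × ℕ) × ℕ) => !(safeB cP cU w.2 (fstN w.1.1) (stgN w.1.1)) :=
    (Primrec.dom_bool (!·)).comp (prim_safeB cP cU Primrec.snd (hfe.comp Primrec.fst)
      (hse.comp Primrec.fst))
  have s2 : Primrec fun (w : (ℕ × ℕ) × ℕ) => safeB cP cU w.2 (fstN w.1.2) (stgN w.1.2) :=
    prim_safeB cP cU Primrec.snd (hff.comp Primrec.fst) (hsf.comp Primrec.fst)
  have tr : Primrec fun (q : ℕ × ℕ) => (List.range (capN q.1 + 1)).all fun i =>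
      !(safeB cP cU i (fstN q.1) (stgN q.1)) || safeB cP cU i (fstN q.2) (stgN q.2) :=
    prim_all (Primrec.list_range.comp (Primrec.succ.comp hce))
      (Primrec.to₂ ((Primrec.dom_bool₂ (· || ·)).comp s1 s2))
  exact Primrec.to₂ ((Primrec.dom_bool₂ (· && ·)).comp d1
    ((Primrec.dom_bool₂ (· && ·)).comp d2 ((Primrec.dom_bool₂ (· && ·)).comp r tr)))

end Prim

/-- staged safety of index `i` at element `b`, stage `t`. -/


lemma safeB_iff {cP cU i b t} :
    safeB cP cU i b t = true ↔
      ∀ x, pB cU t i x = true → x ≠ b ∧ reachB cP t x b = false := by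
  constructor
  · intro h x hx
    have hxt : x < t := (pB_lt hx).2
    have := (List.all_eq_true.1 h) x (List.mem_range.2 hxt)
    simp only [Bool.or_eq_true, Bool.not_eq_true', Bool.and_eq_true, decide_eq_true_eq] at this
    rcases this with h' | h'
    · rw [hx] at h'; exact absurd h' (by simp)
    · exact ⟨of_decide_eq_false h'.1, by simpa using h'.2⟩
  · intro h
    apply List.all_eq_true.2
    intro x _
    by_cases hx : pB cU t i x = true
    · rcases h x hx with ⟨h1, h2⟩
      simp [h1, h2, hx]
    · simp only [Bool.or_eq_true, Bool.not_eq_true']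
      exact Or.inl (eq_false_of_ne_true hx)





lemma sqB_iff {cP cU e f} :
    sqB cP cU e f = true ↔
      stgN e < stgN f ∧ capN e < capN f ∧
      reachB cP (stgN f) (fstN e) (fstN f) = true ∧
      ∀ i ≤ capN e, safeB cP cU i (fstN e) (stgN e) = true →
        safeB cP cU i (fstN f) (stgN f) = true := by
  simp only [sqB, Bool.and_eq_true, decide_eq_true_eq, List.all_eq_true, List.mem_range,
    Bool.or_eq_true, Bool.not_eq_true']
  constructor
  · rintro ⟨h1, h2, h3, h4⟩
    refine ⟨h1, h2, h3, fun i hi hs => ?_⟩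
    rcases h4 i (Nat.lt_succ_of_le hi) with h | h
    · rw [hs] at h; cases h
    · exact h
  · rintro ⟨h1, h2, h3, h4⟩
    refine ⟨h1, h2, h3, fun i hi => ?_⟩
    by_cases hs : safeB cP cU i (fstN e) (stgN e) = true
    · exact Or.inr (h4 i (Nat.lt_succ_iff.1 hi) hs)
    · exact Or.inl (by simpa using hs)





lemma exists_code_of_re {p : ℕ × ℕ → Prop}
    (h : Partrec fun a => Part.assert (p a) fun _ => Part.some ()) :
    ∃ c : Code, ∀ a b, p (a, b) ↔ ∃ t, pB c t a b = true := by
  rcases Code.exists_code.1 h with ⟨c, hc⟩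
  refine ⟨c, fun a b => ?_⟩
  have h1 : (∃ t, pB c t a b = true) ↔ (eval c (Nat.pair a b)).Dom := by
    constructor
    · rintro ⟨t, ht⟩
      rcases Option.isSome_iff_exists.1 ht with ⟨x, hx⟩
      exact Part.dom_iff_mem.2 ⟨x, evaln_sound hx⟩
    · intro hd
      rcases Part.dom_iff_mem.1 hd with ⟨x, hx⟩
      rcases evaln_complete.1 hx with ⟨t, ht⟩
      exact ⟨t, Option.isSome_iff_exists.2 ⟨x, ht⟩⟩
  rw [h1, hc]
  have : Nat.pair a b = Encodable.encode (a, b) := (Encodable.encode_prod_val a b).symm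
  rw [this]
  simp [Part.assert, Encodable.encodek]

section Main

variable {cP cU : Code} {prec : ℕ → ℕ → Prop} {U : Set (ℕ × ℕ)}

/-- the pinned definition of ideals, restated locally -/
def IsIdl (r : ℕ → ℕ → Prop) (I : Set ℕ) : Prop :=
  I.Nonempty ∧ (∀ a ∈ I, ∀ b, r b a → b ∈ I) ∧
    ∀ a ∈ I, ∀ b ∈ I, ∃ c ∈ I, r a c ∧ r b c

variable (htrans : Transitive prec)
variable (hP : ∀ a b, prec a b ↔ ∃ t, pB cP t a b = true)
variable (hU : ∀ i x, (i, x) ∈ U ↔ ∃ t, pB cU t i x = true)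

section Basic
include htrans hP

lemma reach_sound {t a b : ℕ} (h : reachB cP t a b = true) : prec a b := by
  have h1 : Relation.TransGen prec a b :=
    (reachB_iff.1 h).lift id fun x y hp => (hP x y).2 ⟨t, hp⟩
  haveI : IsTrans ℕ prec := ⟨fun _ _ _ => @htrans _ _ _⟩
  rwa [Relation.transGen_eq_self] at h1

omit htrans

lemma prec_staged {a b : ℕ} (h : prec a b) : ∃ t, reachB cP t a b = true := by
  rcases (hP a b).1 h with ⟨t, ht⟩
  exact ⟨t, reachB_of_pB ht⟩

end Basic

/-- the local form of the relation `⊏`. -/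
def sqR (cP cU : Code) (e f : ℕ) : Prop := sqB cP cU e f = true

lemma sqR_trans : Transitive (sqR cP cU) := by
  intro e f g hef hfg
  rcases sqB_iff.1 hef with ⟨h1, h2, h3, h4⟩
  rcases sqB_iff.1 hfg with ⟨g1, g2, g3, g4⟩
  refine sqB_iff.2 ⟨h1.trans g1, h2.trans g2, ?_, ?_⟩
  · exact reachB_trans (reachB_mono (le_of_lt g1) h3) g3
  · intro i hi hs
    exact g4 i (le_of_lt (lt_of_le_of_lt hi h2)) (h4 i hi hs)

section IdealJ

variable {J : Set ℕ} (hJ : IsIdl (sqR cP cU) J)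
include hJ

lemma unbounded : ∀ N, ∃ e ∈ J, N < stgN e ∧ N < capN e := by
  intro N
  induction N with
  | zero =>
    rcases hJ.1 with ⟨e₀, he₀⟩
    rcases hJ.2.2 e₀ he₀ e₀ he₀ with ⟨f, hf, hef, -⟩
    rcases sqB_iff.1 hef with ⟨h1, h2, -, -⟩
    exact ⟨f, hf, by omega, by omega⟩
  | succ N ih =>
    rcases ih with ⟨e, he, hs, hc⟩
    rcases hJ.2.2 e he e he with ⟨f, hf, hef, -⟩
    rcases sqB_iff.1 hef with ⟨h1, h2, -, -⟩
    exact ⟨f, hf, by omega, by omega⟩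

lemma upper_two {e₁ e₂ : ℕ} (h₁ : e₁ ∈ J) (h₂ : e₂ ∈ J) (N : ℕ) :
    ∃ f ∈ J, sqR cP cU e₁ f ∧ sqR cP cU e₂ f ∧ N < stgN f ∧ N < capN f := by
  rcases hJ.2.2 e₁ h₁ e₂ h₂ with ⟨d, hd, hd₁, hd₂⟩
  rcases unbounded hJ N with ⟨g, hg, hgs, hgc⟩
  rcases hJ.2.2 d hd g hg with ⟨f, hf, hdf, hgf⟩
  rcases sqB_iff.1 hgf with ⟨j1, j2, -, -⟩
  exact ⟨f, hf, sqR_trans hd₁ hdf, sqR_trans hd₂ hdf, by omega, by omega⟩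

/-- the ideal of `prec` induced by an ideal of `sqR`. -/
def Ifn (J : Set ℕ) : Set ℕ := {x | ∃ e ∈ J, x = fstN e ∨ prec x (fstN e)}

include htrans hP

lemma isIdl_Ifn : IsIdl prec (Ifn (prec := prec) J) := by
  refine ⟨?_, ?_, ?_⟩
  · rcases hJ.1 with ⟨e, he⟩
    exact ⟨fstN e, e, he, Or.inl rfl⟩
  · rintro a ⟨e, he, ha⟩ b hba
    refine ⟨e, he, Or.inr ?_⟩
    rcases ha with rfl | ha
    · exact hba
    · exact htrans hba ha
  · rintro a ⟨e₁, he₁, ha⟩ b ⟨e₂, he₂, hb⟩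
    rcases upper_two hJ he₁ he₂ 0 with ⟨f, hf, hef₁, hef₂, -, -⟩
    rcases sqB_iff.1 hef₁ with ⟨-, -, hr₁, -⟩
    rcases sqB_iff.1 hef₂ with ⟨-, -, hr₂, -⟩
    have hp₁ : prec (fstN e₁) (fstN f) := reach_sound htrans hP hr₁
    have hp₂ : prec (fstN e₂) (fstN f) := reach_sound htrans hP hr₂
    refine ⟨fstN f, ⟨f, hf, Or.inl rfl⟩, ?_, ?_⟩
    · rcases ha with rfl | ha
      · exact hp₁
      · exact htrans ha hp₁
    · rcases hb with rfl | hb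
      · exact hp₂
      · exact htrans hb hp₂

include hU

omit htrans in
lemma commit {e i : ℕ} (he : e ∈ J) (hi : i ≤ capN e)
    (hsafe : safeB cP cU i (fstN e) (stgN e) = true) :
    ∀ x, (i, x) ∈ U → x ∉ Ifn (prec := prec) J := by
  rintro x hxU ⟨e', he', hx⟩
  rcases (hU i x).1 hxU with ⟨τ₁, hτ₁⟩
  have hx' : ∃ τ₂, x = fstN e' ∨ reachB cP τ₂ x (fstN e') = true := by
    rcases hx with rfl | hx
    · exact ⟨0, Or.inl rfl⟩
    · rcases prec_staged hP hx with ⟨τ₂, h⟩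
      exact ⟨τ₂, Or.inr h⟩
  rcases hx' with ⟨τ₂, hx'⟩
  rcases upper_two hJ he he' (max τ₁ τ₂) with ⟨f, hf, hef, hef', hstg, -⟩
  rcases sqB_iff.1 hef with ⟨-, -, -, htrans'⟩
  rcases sqB_iff.1 hef' with ⟨-, -, hr', -⟩
  have hsafef : safeB cP cU i (fstN f) (stgN f) = true := htrans' i hi hsafe
  have hUf : pB cU (stgN f) i x = true := pB_mono (by omega) hτ₁
  have hreach : reachB cP (stgN f) x (fstN f) = true := by
    rcases hx' with rfl | hx'
    · exact hr'
    · exact reachB_trans (reachB_mono (by omega) hx') hr'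
  rcases safeB_iff.1 hsafef x hUf with ⟨-, hne⟩
  rw [hreach] at hne
  cases hne

lemma forced {i : ℕ} (h : ∀ x, (i, x) ∈ U → x ∉ Ifn (prec := prec) J) :
    ∃ e ∈ J, i ≤ capN e ∧ ∀ s, safeB cP cU i (fstN e) s = true := by
  rcases unbounded hJ i with ⟨e, he, -, hc⟩
  refine ⟨e, he, le_of_lt hc, fun s => ?_⟩
  apply safeB_iff.2
  intro x hx
  have hxU : (i, x) ∈ U := (hU i x).2 ⟨s, hx⟩
  have hxI := h x hxU
  constructor
  · rintro rfl
    exact hxI ⟨e, he, Or.inl rfl⟩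
  · by_contra hr
    rw [Bool.not_eq_false] at hr
    exact hxI ⟨e, he, Or.inr (reach_sound htrans hP hr)⟩

end IdealJ

section IdealI

/-- index `i` is avoided by `I`. -/
def Tset (U : Set (ℕ × ℕ)) (I : Set ℕ) (i : ℕ) : Prop := ∀ x, (i, x) ∈ U → x ∉ I

/-- the ideal of `sqR` induced by an ideal of `prec`. -/
def Jfn (cP cU : Code) (U : Set (ℕ × ℕ)) (I : Set ℕ) : Set ℕ :=
  {e | fstN e ∈ I ∧ ∀ i ≤ capN e,
    safeB cP cU i (fstN e) (stgN e) = true → Tset U I i}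

variable {I : Set ℕ} (hI : IsIdl prec I)

include htrans in
lemma ideal_upper (hI : IsIdl prec I) :
    ∀ l : List ℕ, l ≠ [] → (∀ y ∈ l, y ∈ I) → ∃ c ∈ I, ∀ y ∈ l, prec y c := by
  intro l
  induction l with
  | nil => intro h; exact absurd rfl h
  | cons y l ih =>
    intro _ hmem
    rcases l.eq_nil_or_concat with rfl | hne
    · rcases hI.2.2 y (hmem y (by simp)) y (hmem y (by simp)) with ⟨c, hc, hyc, -⟩
      exact ⟨c, hc, by simpa using hyc⟩
    · have hlne : l ≠ [] := by rcases hne with ⟨l', a, rfl⟩; simp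
      rcases ih hlne (fun z hz => hmem z (List.mem_cons_of_mem _ hz)) with ⟨c', hc', hall⟩
      rcases hI.2.2 y (hmem y (by simp)) c' hc' with ⟨c, hc, hyc, hc'c⟩
      refine ⟨c, hc, fun z hz => ?_⟩
      rcases List.mem_cons.1 hz with rfl | hz
      · exact hyc
      · exact htrans (hall z hz) hc'c

include htrans hP hU hI

lemma safe_of_T {c i : ℕ} (hc : c ∈ I) (hT : Tset U I i) :
    ∀ u, safeB cP cU i c u = true := by
  intro u
  apply safeB_iff.2
  intro x hx
  have hxU : (i, x) ∈ U := (hU i x).2 ⟨u, hx⟩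
  have hxI : x ∉ I := hT x hxU
  constructor
  · rintro rfl; exact hxI hc
  · by_contra hr
    rw [Bool.not_eq_false] at hr
    exact hxI (hI.2.1 c hc x (reach_sound htrans hP hr))

lemma exists_elem {x : ℕ} (hx : x ∈ I) :
    ∃ e ∈ Jfn cP cU U I, capN e = 0 ∧ prec x (fstN e) := by
  by_cases hT : Tset U I 0
  · rcases hI.2.2 x hx x hx with ⟨a, ha, hxa, -⟩
    refine ⟨tri a 0 0, ⟨by simpa using ha, ?_⟩, by simp, by simpa using hxa⟩
    intro i hi _
    simp only [capN_tri] at hi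
    interval_cases i
    exact hT
  · simp only [Tset, not_forall] at hT
    rcases hT with ⟨x₀, hx₀U, hx₀I⟩
    have hx₀I : x₀ ∈ I := not_not.1 hx₀I
    rcases ideal_upper htrans hI [x, x₀] (by simp) (by simp [hx, hx₀I]) with ⟨c, hc, hall⟩
    rcases (hU 0 x₀).1 hx₀U with ⟨τ₁, hτ₁⟩
    rcases prec_staged hP (hall x₀ (by simp)) with ⟨τ₂, hτ₂⟩
    refine ⟨tri c 0 (max τ₁ τ₂), ⟨by simpa using hc, ?_⟩, by simp, by simpa using hall x (by simp)⟩
    intro i hi hsafe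
    simp only [capN_tri] at hi
    interval_cases i
    simp only [fstN_tri, stgN_tri] at hsafe
    rcases safeB_iff.1 hsafe x₀ (pB_mono (le_max_left _ _) hτ₁) with ⟨-, hne⟩
    rw [reachB_mono (le_max_right _ _) hτ₂] at hne
    cases hne

lemma isIdl_Jfn : IsIdl (sqR cP cU) (Jfn cP cU U I) := by
  classical
  refine ⟨?_, ?_, ?_⟩
  · rcases hI.1 with ⟨x, hx⟩
    rcases exists_elem htrans hP hU hI hx with ⟨e, he, -, -⟩
    exact ⟨e, he⟩
  · rintro e ⟨heI, heT⟩ e' he'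
    rcases sqB_iff.1 he' with ⟨-, hcap, hreach, htr⟩
    refine ⟨hI.2.1 _ heI _ (reach_sound htrans hP hreach), ?_⟩
    intro i hi hsafe
    exact heT i (le_of_lt (lt_of_le_of_lt hi hcap)) (htr i hi hsafe)
  · rintro e₁ ⟨h₁I, h₁T⟩ e₂ ⟨h₂I, h₂T⟩
    set k := max (capN e₁) (capN e₂) + 1 with hk
    -- witnesses for non-avoided indices
    have hwit : ∀ i, ∃ w, ¬ Tset U I i → ((i, w) ∈ U ∧ w ∈ I) := by
      intro i
      by_cases h : Tset U I i
      · exact ⟨0, fun h' => absurd h h'⟩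
      · simp only [Tset, not_forall] at h
        rcases h with ⟨w, hwU, hwI⟩
        exact ⟨w, fun _ => ⟨hwU, not_not.1 hwI⟩⟩
    choose w hw using hwit
    -- upper bound in I
    set L : List ℕ := fstN e₁ :: fstN e₂ ::
      (((List.range (k + 1)).filter fun i => ¬ Tset U I i).map w) with hL
    have hLmem : ∀ y ∈ L, y ∈ I := by
      intro y hy
      rcases List.mem_cons.1 hy with rfl | hy
      · exact h₁I
      rcases List.mem_cons.1 hy with rfl | hy
      · exact h₂I
      rcases List.mem_map.1 hy with ⟨i, hi, rfl⟩
      exact (hw i (by simpa using (List.mem_filter.1 hi).2)).2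
    rcases ideal_upper htrans hI L (by simp [hL]) hLmem with ⟨c, hc, hcall⟩
    have hc₁ : prec (fstN e₁) c := hcall _ (by simp [hL])
    have hc₂ : prec (fstN e₂) c := hcall _ (by simp [hL])
    -- staging times
    have hstagei : ∀ i, ∃ τ, i ≤ k → ¬ Tset U I i →
        (pB cU τ i (w i) = true ∧ (w i = c ∨ reachB cP τ (w i) c = true)) := by
      intro i
      by_cases hik : i ≤ k
      · by_cases h : Tset U I i
        · exact ⟨0, fun _ h' => absurd h h'⟩
        · have hwi := hw i h
          rcases (hU i (w i)).1 hwi.1 with ⟨τ₁, hτ₁⟩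
          by_cases hwc : w i = c
          · exact ⟨τ₁, fun _ _ => ⟨hτ₁, Or.inl hwc⟩⟩
          · have : prec (w i) c := hcall (w i) (by
              simp only [hL, List.mem_cons]
              refine Or.inr (Or.inr (List.mem_map.2 ⟨i, ?_, rfl⟩))
              exact List.mem_filter.2 ⟨List.mem_range.2 (by omega), by simpa using h⟩)
            rcases prec_staged hP this with ⟨τ₂, hτ₂⟩
            exact ⟨max τ₁ τ₂, fun _ _ => ⟨pB_mono (le_max_left _ _) hτ₁,
              Or.inr (reachB_mono (le_max_right _ _) hτ₂)⟩⟩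
      · exact ⟨0, fun h' => absurd h' hik⟩
    choose τ hτ using hstagei
    rcases prec_staged hP hc₁ with ⟨τA, hτA⟩
    rcases prec_staged hP hc₂ with ⟨τB, hτB⟩
    set u := (Finset.range (k + 1)).sup τ + τA + τB + stgN e₁ + stgN e₂ + 1 with hu
    have hτle : ∀ i ≤ k, τ i ≤ u := by
      intro i hik
      have : τ i ≤ (Finset.range (k + 1)).sup τ :=
        Finset.le_sup (Finset.mem_range.2 (by omega))
      omega
    set f := tri c k u with hf
    have hfI : f ∈ Jfn cP cU U I := by
      refine ⟨by simpa [hf] using hc, ?_⟩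
      intro i hi hsafe
      by_contra hTi
      rcases hτ i (by simpa [hf] using hi) hTi with ⟨hτ1, hτ2⟩
      simp only [hf, fstN_tri, stgN_tri] at hsafe
      rcases safeB_iff.1 hsafe (w i) (pB_mono (hτle i (by simpa [hf] using hi)) hτ1)
        with ⟨hne, hnr⟩
      rcases hτ2 with heq | hr
      · exact hne heq
      · rw [reachB_mono (hτle i (by simpa [hf] using hi)) hr] at hnr
        cases hnr
    have hrel : ∀ e, fstN e ∈ I → capN e < k → stgN e < u →
        reachB cP u (fstN e) c = true →
        (∀ i ≤ capN e, safeB cP cU i (fstN e) (stgN e) = true → Tset U I i) →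
        sqR cP cU e f := by
      intro e heI hek hes hre heT
      refine sqB_iff.2 ⟨by simpa [hf] using hes, by simpa [hf] using hek, ?_, ?_⟩
      · simpa [hf] using hre
      · intro i hi hsafe
        simp only [hf, fstN_tri, stgN_tri]
        exact safe_of_T htrans hP hU hI hc (heT i hi hsafe) u
    refine ⟨f, hfI, ?_, ?_⟩
    · exact hrel e₁ h₁I (by omega) (by omega) (reachB_mono (by omega) hτA) h₁T
    · exact hrel e₂ h₂I (by omega) (by omega) (reachB_mono (by omega) hτB) h₂T

lemma Ifn_Jfn : Ifn (prec := prec) (Jfn cP cU U I) = I := by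
  apply Set.eq_of_subset_of_subset
  · rintro x ⟨e, ⟨heI, -⟩, hx⟩
    rcases hx with rfl | hx
    · exact heI
    · exact hI.2.1 _ heI _ hx
  · intro x hx
    rcases exists_elem htrans hP hU hI hx with ⟨e, he, -, hprec⟩
    exact ⟨e, he, Or.inr hprec⟩

end IdealI

section RoundTrip

variable {J : Set ℕ} (hJ : IsIdl (sqR cP cU) J)
include htrans hP hU hJ

lemma Jfn_Ifn : Jfn cP cU U (Ifn (prec := prec) J) = J := by
  apply Set.eq_of_subset_of_subset
  · rintro e ⟨heI, heT⟩
    rcases heI with ⟨e₀, he₀, hfst⟩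
    have hτ : ∃ τ, fstN e = fstN e₀ ∨ reachB cP τ (fstN e) (fstN e₀) = true := by
      rcases hfst with h | h
      · exact ⟨0, Or.inl h⟩
      · rcases prec_staged hP h with ⟨τ, hτ⟩
        exact ⟨τ, Or.inr hτ⟩
    rcases hτ with ⟨τ, hτ⟩
    rcases upper_two hJ he₀ he₀ (max (max τ (stgN e)) (capN e)) with ⟨f, hf, hef, -, hfs, hfc⟩
    rcases sqB_iff.1 hef with ⟨-, -, hre, -⟩
    have hsq : sqR cP cU e f := by
      refine sqB_iff.2 ⟨by omega, by omega, ?_, ?_⟩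
      · rcases hτ with h | h
        · rw [h]; exact hre
        · exact reachB_trans (reachB_mono (by omega) h) hre
      · intro i hi hsafe
        have hTi : Tset U (Ifn (prec := prec) J) i := heT i hi hsafe
        exact safe_of_T htrans hP hU (isIdl_Ifn htrans hP hJ)
          ⟨f, hf, Or.inl rfl⟩ hTi (stgN f)
    exact hJ.2.1 f hf e hsq
  · intro e he
    refine ⟨⟨e, he, Or.inl rfl⟩, ?_⟩
    intro i hi hsafe
    exact commit hP hU hJ he hi hsafe

end RoundTrip


end Main

section Topo

open TopologicalSpace

lemma isIdeal_iff_isIdl (r : ℕ → ℕ → Prop) (I : Set ℕ) : IsIdeal r I ↔ IsIdl r I := Iff.rfl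

lemma basic_open {S : Type*} (r : S → S → Prop) (a : S) :
    IsOpen {I : IdealSpace r | a ∈ I.1} :=
  TopologicalSpace.isOpen_generateFrom_of_mem ⟨a, rfl⟩

lemma genOpen_biInter_finset {X : Type*} (g : Set (Set X)) (s : ℕ → Set X)
    (h : ∀ i, TopologicalSpace.GenerateOpen g (s i)) (F : Finset ℕ) :
    TopologicalSpace.GenerateOpen g (⋂ i ∈ F, s i) := by
  classical
  induction F using Finset.induction with
  | empty => rw [show (⋂ i ∈ (∅ : Finset ℕ), s i) = Set.univ by simp]
             exact TopologicalSpace.GenerateOpen.univ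
  | insert _ _ hni ih =>
      rw [Finset.set_biInter_insert]
      exact TopologicalSpace.GenerateOpen.inter _ _ (h _) ih

variable {cP cU : Code} {prec : ℕ → ℕ → Prop} {U : Set (ℕ × ℕ)}
variable (htrans : Transitive prec)
variable (hP : ∀ a b, prec a b ↔ ∃ t, pB cP t a b = true)
variable (hU : ∀ i x, (i, x) ∈ U ↔ ∃ t, pB cU t i x = true)

/-- the refined topology on the ideal space of `prec`. -/
def tau' (cP cU : Code) (prec : ℕ → ℕ → Prop) (U : Set (ℕ × ℕ)) :
    TopologicalSpace (IdealSpace prec) :=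
  TopologicalSpace.generateFrom
    ({s : Set (IdealSpace prec) | IsOpen s} ∪
      {s : Set (IdealSpace prec) | ∃ i : ℕ,
        s = {I : IdealSpace prec | ∀ x, (i, x) ∈ U → x ∉ I.1}})

include htrans hP hU

noncomputable def theEquiv : IdealSpace (sqR cP cU) ≃ IdealSpace prec where
  toFun J := ⟨Ifn (prec := prec) J.1, (isIdl_Ifn htrans hP J.2 : IsIdl prec _)⟩
  invFun I := ⟨Jfn cP cU U I.1, (isIdl_Jfn htrans hP hU I.2 : IsIdl (sqR cP cU) _)⟩
  left_inv J := Subtype.ext (Jfn_Ifn htrans hP hU J.2)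
  right_inv I := Subtype.ext (Ifn_Jfn htrans hP hU I.2)

lemma continuous_toFun_old :
    Continuous (fun J : IdealSpace (sqR cP cU) => (theEquiv htrans hP hU J : IdealSpace prec)) := by
  rw [show (instTopologicalSpaceIdealSpace prec)
      = TopologicalSpace.generateFrom {V | ∃ a : ℕ, V = {I : IdealSpace prec | a ∈ I.1}} from rfl,
    continuous_generateFrom_iff]
  rintro V ⟨a, rfl⟩
  have : (fun J : IdealSpace (sqR cP cU) => theEquiv htrans hP hU J) ⁻¹'
      {I : IdealSpace prec | a ∈ I.1}
      = ⋃ e ∈ {e : ℕ | a = fstN e ∨ prec a (fstN e)},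
          {J : IdealSpace (sqR cP cU) | e ∈ J.1} := by
    ext J
    simp only [Set.mem_preimage, Set.mem_setOf_eq, Set.mem_iUnion]
    constructor
    · rintro ⟨e, he, hx⟩
      exact ⟨e, hx, he⟩
    · rintro ⟨e, hx, he⟩
      exact ⟨e, he, hx⟩
  rw [this]
  exact isOpen_biUnion fun e _ => basic_open _ e

lemma continuous_toFun :
    @Continuous _ _ _ (tau' cP cU prec U)
      (fun J : IdealSpace (sqR cP cU) => (theEquiv htrans hP hU J : IdealSpace prec)) := by
  rw [tau', continuous_generateFrom_iff]
  rintro V (hV | ⟨i, rfl⟩)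
  · exact (continuous_toFun_old htrans hP hU).isOpen_preimage V hV
  · have : (fun J : IdealSpace (sqR cP cU) => theEquiv htrans hP hU J) ⁻¹'
        {I : IdealSpace prec | ∀ x, (i, x) ∈ U → x ∉ I.1}
        = ⋃ e ∈ {e : ℕ | i ≤ capN e ∧ safeB cP cU i (fstN e) (stgN e) = true},
            {J : IdealSpace (sqR cP cU) | e ∈ J.1} := by
      ext J
      simp only [Set.mem_preimage, Set.mem_setOf_eq, Set.mem_iUnion]
      constructor
      · intro h
        rcases forced htrans hP hU J.2 h with ⟨e, he, hic, hsafe⟩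
        exact ⟨e, ⟨hic, hsafe (stgN e)⟩, he⟩
      · rintro ⟨e, ⟨hic, hsafe⟩, he⟩
        exact commit hP hU J.2 he hic hsafe
    rw [this]
    exact isOpen_biUnion fun e _ => basic_open _ e

lemma continuous_invFun :
    @Continuous _ _ (tau' cP cU prec U) _
      (fun I : IdealSpace prec => (theEquiv htrans hP hU).symm I) := by
  classical
  rw [show (instTopologicalSpaceIdealSpace (sqR cP cU))
      = TopologicalSpace.generateFrom
          {V | ∃ e : ℕ, V = {J : IdealSpace (sqR cP cU) | e ∈ J.1}} from rfl,
    continuous_generateFrom_iff]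
  rintro V ⟨e, rfl⟩
  have heq : (fun I : IdealSpace prec => (theEquiv htrans hP hU).symm I) ⁻¹'
      {J : IdealSpace (sqR cP cU) | e ∈ J.1}
      = {I : IdealSpace prec | fstN e ∈ I.1} ∩
        ⋂ i ∈ Finset.range (capN e + 1),
          (if safeB cP cU i (fstN e) (stgN e) = true
            then {I : IdealSpace prec | ∀ x, (i, x) ∈ U → x ∉ I.1}
            else Set.univ) := by
    ext I
    simp only [Set.mem_preimage, Set.mem_inter_iff, Set.mem_setOf_eq, Set.mem_iInter,
      Finset.mem_range]
    constructor
    · rintro ⟨h1, h2⟩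
      refine ⟨h1, fun i hi => ?_⟩
      by_cases hs : safeB cP cU i (fstN e) (stgN e) = true
      · simpa [hs, Tset] using h2 i (Nat.lt_succ_iff.1 hi) hs
      · simp [hs]
    · rintro ⟨h1, h2⟩
      refine ⟨h1, fun i hi hs => ?_⟩
      have := h2 i (Nat.lt_succ_of_le hi)
      rw [if_pos hs] at this
      exact this
  rw [heq]
  apply TopologicalSpace.GenerateOpen.inter
  · exact TopologicalSpace.GenerateOpen.basic _ (Or.inl (basic_open prec (fstN e)))
  · apply genOpen_biInter_finset
    intro i
    by_cases hs : safeB cP cU i (fstN e) (stgN e) = true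
    · rw [if_pos hs]
      exact TopologicalSpace.GenerateOpen.basic _ (Or.inr ⟨i, rfl⟩)
    · rw [if_neg hs]
      exact TopologicalSpace.GenerateOpen.univ

noncomputable def theHomeo :
    @Homeomorph (IdealSpace (sqR cP cU)) (IdealSpace prec) _ (tau' cP cU prec U) :=
  @Homeomorph.mk _ _ _ (tau' cP cU prec U) (theEquiv htrans hP hU)
    (continuous_toFun htrans hP hU) (continuous_invFun htrans hP hU)

end Topo

end Stmt4Aux

theorem stmt4 (prec : ℕ → ℕ → Prop)
    (hce : REPred' fun p : ℕ × ℕ => prec p.1 p.2)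
    (htrans : Transitive prec)
    (U : Set (ℕ × ℕ)) (hU : REPred' (· ∈ U)) :
    ∃ sq : ℕ → ℕ → Prop,
      (REPred' fun p : ℕ × ℕ => sq p.1 p.2) ∧ Transitive sq ∧
      Nonempty (@Homeomorph (IdealSpace sq) (IdealSpace prec) _
        (TopologicalSpace.generateFrom
          ({s : Set (IdealSpace prec) | IsOpen s} ∪
            {s : Set (IdealSpace prec) | ∃ i : ℕ,
              s = {I : IdealSpace prec | ∀ x, (i, x) ∈ U → x ∉ I.1}}))) := by
  obtain ⟨cP, hP⟩ := Stmt4Aux.exists_code_of_re hce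
  obtain ⟨cU, hU'⟩ := Stmt4Aux.exists_code_of_re hU
  refine ⟨Stmt4Aux.sqR cP cU, ?_, Stmt4Aux.sqR_trans, ?_⟩
  · have hc : ComputablePred fun p : ℕ × ℕ => Stmt4Aux.sqR cP cU p.1 p.2 :=
      ComputablePred.computable_iff.2
        ⟨fun p => Stmt4Aux.sqB cP cU p.1 p.2, (Stmt4Aux.prim_sqB cP cU).to_comp, rfl⟩
    exact hc.to_re
  · exact ⟨Stmt4Aux.theHomeo htrans (fun a b => hP a b) (fun i x => hU' i x)⟩
end

section
/- There is a computable function t : ℕ → ℕ such that for every n: the relation V_{t(n)} is transitive; if V_n is transitive then V_{t(n)} = V_n; and for all m, n, if V_m = V_n (as relations) then V_{t(m)} = V_{t(n)}. -/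
set_option maxHeartbeats 1000000

/-- The `e`-th c.e. binary relation on `ℕ`: `i V_e j` iff `Nat.pair i j` lies in the
domain of the `e`-th partial computable function. -/
def V (e : ℕ) : ℕ → ℕ → Prop := fun i j =>
  ((Denumerable.ofNat Nat.Partrec.Code e).eval (Nat.pair i j)).Dom

open Nat.Partrec (Code)
open Nat.Partrec.Code

/-- Fold checking a chain of `evaln`-successes ending at `j`. -/
def chainFold (s : ℕ) (c : Code) (j : ℕ) (l : List ℕ) : Bool × ℕ :=
  l.foldr (fun a r => ((evaln s c (Nat.pair a r.2)).isSome && r.1, a)) (true, j)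

/-- The semidecision predicate for the transitive closure. -/
def chk (x k : ℕ) : Bool :=
  (chainFold (Denumerable.ofNat (ℕ × List ℕ) k).1 (Denumerable.ofNat Code x.unpair.1)
    x.unpair.2.unpair.2
    (x.unpair.2.unpair.1 :: (Denumerable.ofNat (ℕ × List ℕ) k).2)).1

lemma chainFold_nil (s : ℕ) (c : Code) (j : ℕ) : chainFold s c j [] = (true, j) := rfl

lemma chainFold_cons (s : ℕ) (c : Code) (j a : ℕ) (l : List ℕ) :
    chainFold s c j (a :: l) =
      ((evaln s c (Nat.pair a (chainFold s c j l).2)).isSome && (chainFold s c j l).1, a) := rfl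

lemma chainFold_snd (s : ℕ) (c : Code) (j : ℕ) (l : List ℕ) :
    (chainFold s c j l).2 = l.headD j := by
  cases l
  · rfl
  · rfl


lemma chainFold_iff (s : ℕ) (c : Code) (j : ℕ) :
    ∀ (l : List ℕ) (a : ℕ),
      (chainFold s c j (a :: l)).1 = true ↔
        List.Chain (fun u v => (evaln s c (Nat.pair u v)).isSome = true) a (l ++ [j]) := by
  intro l
  induction l with
  | nil =>
      intro a
      rw [chainFold_cons, chainFold_nil]
      simp [List.Chain, List.isChain_cons_cons]
  | cons b l ih =>
      intro a
      rw [chainFold_cons, chainFold_snd]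
      simp only [List.headD_cons, List.cons_append, Bool.and_eq_true, ih b, List.Chain, List.isChain_cons_cons]

lemma chk_prim : Primrec₂ chk := by
  have hsL : Primrec fun p : ℕ × ℕ => Denumerable.ofNat (ℕ × List ℕ) p.2 :=
    (Primrec.ofNat _).comp Primrec.snd
  have hs : Primrec fun p : ℕ × ℕ => (Denumerable.ofNat (ℕ × List ℕ) p.2).1 :=
    Primrec.fst.comp hsL
  have hL : Primrec fun p : ℕ × ℕ => (Denumerable.ofNat (ℕ × List ℕ) p.2).2 :=
    Primrec.snd.comp hsL
  have hc : Primrec fun p : ℕ × ℕ => Denumerable.ofNat Code p.1.unpair.1 :=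
    (Primrec.ofNat Code).comp (Primrec.fst.comp (Primrec.unpair.comp Primrec.fst))
  have hij : Primrec fun p : ℕ × ℕ => p.1.unpair.2.unpair :=
    Primrec.unpair.comp (Primrec.snd.comp (Primrec.unpair.comp Primrec.fst))
  have hi : Primrec fun p : ℕ × ℕ => p.1.unpair.2.unpair.1 := Primrec.fst.comp hij
  have hj : Primrec fun p : ℕ × ℕ => p.1.unpair.2.unpair.2 := Primrec.snd.comp hij
  have hf : Primrec fun p : ℕ × ℕ =>
      (p.1.unpair.2.unpair.1 :: (Denumerable.ofNat (ℕ × List ℕ) p.2).2) :=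
    Primrec.list_cons.comp hi hL
  have hg : Primrec fun p : ℕ × ℕ => ((true, p.1.unpair.2.unpair.2) : Bool × ℕ) :=
    (Primrec.const true).pair hj
  have he : Primrec fun q : (ℕ × ℕ) × (ℕ × (Bool × ℕ)) =>
      (evaln (Denumerable.ofNat (ℕ × List ℕ) q.1.2).1
        (Denumerable.ofNat Code q.1.1.unpair.1) (Nat.pair q.2.1 q.2.2.2)) :=
    primrec_evaln.comp
      (((hs.comp Primrec.fst).pair (hc.comp Primrec.fst)).pair
        (Primrec₂.natPair.comp (Primrec.fst.comp Primrec.snd)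
          (Primrec.snd.comp (Primrec.snd.comp Primrec.snd))))
  have hstep : Primrec₂ fun (p : ℕ × ℕ) (bs : ℕ × (Bool × ℕ)) =>
      (((evaln (Denumerable.ofNat (ℕ × List ℕ) p.2).1
          (Denumerable.ofNat Code p.1.unpair.1) (Nat.pair bs.1 bs.2.2)).isSome
        && bs.2.1, bs.1) : Bool × ℕ) :=
    ((Primrec.and.comp (Primrec.option_isSome.comp he)
        (Primrec.fst.comp (Primrec.snd.comp Primrec.snd))).pair
        (Primrec.fst.comp Primrec.snd)).to₂
  have hfold := Primrec.list_foldr hf hg hstep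
  exact (Primrec.fst.comp hfold).to₂

/-- The partial function whose sections semidecide the transitive closure. -/
def G : ℕ →. ℕ := fun x => Nat.rfind fun k => Part.some (chk x k)

lemma G_partrec : Partrec G :=
  Partrec.rfind (Primrec₂.to_comp chk_prim).partrec₂

lemma G_dom (x : ℕ) : (G x).Dom ↔ ∃ k, chk x k = true := by
  refine (Nat.rfind_dom (p := fun k => Part.some (chk x k))).trans ?_
  constructor
  · rintro ⟨k, hk, -⟩
    exact ⟨k, (Part.mem_some_iff.1 hk).symm⟩
  · rintro ⟨k, hk⟩
    exact ⟨k, Part.mem_some_iff.2 hk.symm, fun _ => trivial⟩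

lemma chk_iff (n i j : ℕ) :
    (∃ k, chk (Nat.pair n (Nat.pair i j)) k = true) ↔ Relation.TransGen (V n) i j := by
  set c := Denumerable.ofNat Code n with hcdef
  have hchk : ∀ k, chk (Nat.pair n (Nat.pair i j)) k
      = (chainFold (Denumerable.ofNat (ℕ × List ℕ) k).1 c j
          (i :: (Denumerable.ofNat (ℕ × List ℕ) k).2)).1 := by
    intro k; simp [chk, Nat.unpair_pair, hcdef]
  have hVrel : ∀ (s a b : ℕ), (evaln s c (Nat.pair a b)).isSome = true → V n a b := by
    intro s a b h
    obtain ⟨x, hx⟩ := Option.isSome_iff_exists.1 h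
    exact Part.dom_iff_mem.2 ⟨x, evaln_sound hx⟩
  have hrelV : ∀ a b, V n a b → ∃ s, (evaln s c (Nat.pair a b)).isSome = true := by
    intro a b h
    obtain ⟨s, hs⟩ := evaln_complete.1 (Part.get_mem h)
    exact ⟨s, Option.isSome_iff_exists.2 ⟨_, hs⟩⟩
  have hmono : ∀ {s s' a b : ℕ}, s ≤ s' →
      (evaln s c (Nat.pair a b)).isSome = true → (evaln s' c (Nat.pair a b)).isSome = true := by
    intro s s' a b hss h
    obtain ⟨x, hx⟩ := Option.isSome_iff_exists.1 h
    exact Option.isSome_iff_exists.2 ⟨x, evaln_mono hss hx⟩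
  constructor
  · rintro ⟨k, hk⟩
    rw [hchk, chainFold_iff] at hk
    set s := (Denumerable.ofNat (ℕ × List ℕ) k).1 with hsdef
    set L := (Denumerable.ofNat (ℕ × List ℕ) k).2 with hLdef
    clear_value s L
    clear hchk hsdef hLdef
    induction L generalizing i with
    | nil =>
        simp only [List.nil_append, List.Chain, List.isChain_cons_cons] at hk
        exact Relation.TransGen.single (hVrel s i j hk.1)
    | cons b L ih =>
        simp only [List.cons_append, List.Chain, List.isChain_cons_cons] at hk
        exact Relation.TransGen.head (hVrel s i b hk.1) (ih b hk.2)
  · intro h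
    clear hchk
    have main : ∃ (s : ℕ) (L : List ℕ),
        List.Chain (fun u v => (evaln s c (Nat.pair u v)).isSome = true) i (L ++ [j]) := by
      induction h with
      | single hr =>
          obtain ⟨s, hs⟩ := hrelV _ _ hr
          exact ⟨s, [], by simpa [List.Chain, List.isChain_cons_cons] using hs⟩
      | tail hab hbj ih =>
          rename_i b' j'
          obtain ⟨s, L, hch⟩ := ih
          obtain ⟨s', hs'⟩ := hrelV _ _ hbj
          refine ⟨max s s', L ++ [b'], ?_⟩
          rw [List.append_assoc, List.singleton_append]
          simp only [List.Chain]
          rw [List.isChain_cons_split]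
          exact ⟨List.IsChain.imp (fun u v hv => hmono (le_max_left s s') hv) hch,
            by simpa [List.Chain, List.isChain_cons_cons] using hmono (le_max_right s s') hs'⟩
    obtain ⟨s, L, hch⟩ := main
    refine ⟨Encodable.encode ((s, L) : ℕ × List ℕ), ?_⟩
    rw [show chk (Nat.pair n (Nat.pair i j)) (Encodable.encode ((s, L) : ℕ × List ℕ))
        = (chainFold s c j (i :: L)).1 by
      simp [chk, Nat.unpair_pair, Denumerable.ofNat_encode, hcdef]]
    rw [chainFold_iff]
    exact hch

theorem stmt5 :
    ∃ t : ℕ → ℕ, Computable t ∧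
      (∀ n, Transitive (V (t n)) ∧ (Transitive (V n) → V (t n) = V n)) ∧
      (∀ m n, V m = V n → V (t m) = V (t n)) := by
  obtain ⟨c₀, hc₀⟩ := exists_code.1 (Partrec.nat_iff.1 G_partrec)
  have key : ∀ n i j, V (Encodable.encode (curry c₀ n)) i j ↔ Relation.TransGen (V n) i j := by
    intro n i j
    have h1 : V (Encodable.encode (curry c₀ n)) i j
        = (G (Nat.pair n (Nat.pair i j))).Dom := by
      simp only [V, Denumerable.ofNat_encode, eval_curry, hc₀]
    rw [h1, G_dom, chk_iff]
  refine ⟨fun n => Encodable.encode (curry c₀ n), ?_, ?_, ?_⟩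
  · exact (Primrec.encode.comp
      (primrec₂_curry.comp (Primrec.const c₀) Primrec.id)).to_comp
  · intro n
    constructor
    · intro a b d hab hbd
      exact (key n a d).2 (((key n a b).1 hab).trans ((key n b d).1 hbd))
    · intro htr
      have h2 := @Relation.transGen_eq_self ℕ (V n) ⟨fun _ _ _ => @htr _ _ _⟩
      funext i j
      exact propext ((key n i j).trans (by rw [h2]))
  · intro m n hmn
    funext i j
    exact propext (((key m i j).trans (by rw [hmn])).trans ((key n i j).symm))
end

section
/- There is a computable function p : ℕ → ℕ such that for every n: the relation V_{p(n)} is a preorder (reflexive and transitive); if V_n is a preorder then V_{p(n)} = V_n; and for all m, n, if V_m = V_n (as relations) then V_{p(m)} = V_{p(n)}. -/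
open Nat.Partrec (Code)
open Nat.Partrec.Code

namespace S6

/-- boolean chain check -/
def chk : ℕ → ℕ → Bool := fun x k =>
  let L := Denumerable.ofNat (List ℕ) k.unpair.2
  (decide (L.head? = some x.unpair.2.unpair.1) &&
   decide (L.reverse.head? = some x.unpair.2.unpair.2)) &&
  Nat.rec true (fun t b => b &&
    (evaln k.unpair.1
      (Denumerable.ofNat Code x.unpair.1)
      (Nat.pair (L.getD t 0) (L.getD (t+1) 0))).isSome) (L.length - 1)

lemma rec_all (f : ℕ → Bool) : ∀ m,
    ((Nat.rec true (fun t b => b && f t) m : Bool) = true ↔ ∀ t < m, f t = true) := by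
  intro m
  induction m with
  | zero => simp
  | succ m ih =>
    simp only [Bool.and_eq_true, ih, Nat.lt_succ_iff_lt_or_eq]
    constructor
    · rintro ⟨h1, h2⟩ t (ht | rfl)
      · exact h1 t ht
      · exact h2
    · intro h
      exact ⟨fun t ht => h t (Or.inl ht), h m (Or.inr rfl)⟩

lemma chk_iff (n i j s : ℕ) (L : List ℕ) :
    chk (Nat.pair n (Nat.pair i j)) (Nat.pair s (Encodable.encode L)) = true ↔
    L.head? = some i ∧ L.getLast? = some j ∧
      ∀ t < L.length - 1,
        (evaln s (Denumerable.ofNat Code n)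
          (Nat.pair (L.getD t 0) (L.getD (t+1) 0))).isSome = true := by
  simp [chk, Nat.unpair_pair, Denumerable.ofNat_encode, rec_all, and_assoc,
    List.head?_reverse]

lemma chk_primrec : Primrec₂ chk := by
  have hL : Primrec fun a : ℕ × ℕ => Denumerable.ofNat (List ℕ) a.2.unpair.2 :=
    (Primrec.ofNat _).comp (Primrec.snd.comp (Primrec.unpair.comp Primrec.snd))
  have hi : Primrec fun a : ℕ × ℕ => a.1.unpair.2.unpair.1 :=
    Primrec.fst.comp (Primrec.unpair.comp (Primrec.snd.comp (Primrec.unpair.comp Primrec.fst)))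
  have hj : Primrec fun a : ℕ × ℕ => a.1.unpair.2.unpair.2 :=
    Primrec.snd.comp (Primrec.unpair.comp (Primrec.snd.comp (Primrec.unpair.comp Primrec.fst)))
  have hn : Primrec fun a : ℕ × ℕ => a.1.unpair.1 :=
    Primrec.fst.comp (Primrec.unpair.comp Primrec.fst)
  have hs : Primrec fun a : ℕ × ℕ => a.2.unpair.1 :=
    Primrec.fst.comp (Primrec.unpair.comp Primrec.snd)
  have h1 : Primrec fun a : ℕ × ℕ =>
      decide ((Denumerable.ofNat (List ℕ) a.2.unpair.2).head? = some a.1.unpair.2.unpair.1) :=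
    (Primrec.eq.comp (Primrec.list_head?.comp hL) (Primrec.option_some.comp hi)).decide
  have h2 : Primrec fun a : ℕ × ℕ =>
      decide ((Denumerable.ofNat (List ℕ) a.2.unpair.2).reverse.head?
        = some a.1.unpair.2.unpair.2) :=
    (Primrec.eq.comp (Primrec.list_head?.comp (Primrec.list_reverse.comp hL))
      (Primrec.option_some.comp hj)).decide
  -- the step function
  have hF : Primrec₂ fun (a : ℕ × ℕ) (t : ℕ) =>
      (evaln a.2.unpair.1 (Denumerable.ofNat Code a.1.unpair.1)
        (Nat.pair ((Denumerable.ofNat (List ℕ) a.2.unpair.2).getD t 0)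
          ((Denumerable.ofNat (List ℕ) a.2.unpair.2).getD (t+1) 0))).isSome := by
    have hpack : Primrec fun p : (ℕ × ℕ) × ℕ =>
        ((p.1.2.unpair.1, Denumerable.ofNat Code p.1.1.unpair.1),
          Nat.pair ((Denumerable.ofNat (List ℕ) p.1.2.unpair.2).getD p.2 0)
            ((Denumerable.ofNat (List ℕ) p.1.2.unpair.2).getD (p.2+1) 0)) :=
      Primrec.pair
        (Primrec.pair (hs.comp Primrec.fst)
          ((Primrec.ofNat Code).comp (hn.comp Primrec.fst)))
        (Primrec₂.natPair.comp
          ((Primrec.list_getD 0).comp (hL.comp Primrec.fst) Primrec.snd)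
          ((Primrec.list_getD 0).comp (hL.comp Primrec.fst)
            (Primrec.succ.comp Primrec.snd)))
    exact Primrec.to₂ (Primrec.option_isSome.comp (primrec_evaln.comp hpack))
  have hrec : Primrec fun a : ℕ × ℕ =>
      (Nat.rec true (fun t b => b &&
        (evaln a.2.unpair.1 (Denumerable.ofNat Code a.1.unpair.1)
          (Nat.pair ((Denumerable.ofNat (List ℕ) a.2.unpair.2).getD t 0)
            ((Denumerable.ofNat (List ℕ) a.2.unpair.2).getD (t+1) 0))).isSome)
        ((Denumerable.ofNat (List ℕ) a.2.unpair.2).length - 1) : Bool) := by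
    have := Primrec.nat_rec' (f := fun a : ℕ × ℕ =>
        (Denumerable.ofNat (List ℕ) a.2.unpair.2).length - 1)
      (g := fun _ : ℕ × ℕ => true)
      (h := fun (a : ℕ × ℕ) (p : ℕ × Bool) => p.2 &&
        (evaln a.2.unpair.1 (Denumerable.ofNat Code a.1.unpair.1)
          (Nat.pair ((Denumerable.ofNat (List ℕ) a.2.unpair.2).getD p.1 0)
            ((Denumerable.ofNat (List ℕ) a.2.unpair.2).getD (p.1+1) 0))).isSome)
      (Primrec.nat_sub.comp (Primrec.list_length.comp hL) (Primrec.const 1))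
      (Primrec.const true)
      (Primrec.and.comp (Primrec.snd.comp Primrec.snd)
        (hF.comp Primrec.fst (Primrec.fst.comp Primrec.snd))).to₂
    exact this
  exact Primrec₂.mk (Primrec.and.comp (Primrec.and.comp h1 h2) hrec)


lemma chain_to_rtg (r : ℕ → ℕ → Prop) :
    ∀ (L : List ℕ) (i j : ℕ), L.head? = some i → L.getLast? = some j →
      (∀ t < L.length - 1, r (L.getD t 0) (L.getD (t+1) 0)) →
      Relation.ReflTransGen r i j := by
  intro L
  induction L with
  | nil => intro i j h; simp at h
  | cons a M ih =>
    intro i j h1 h2 h3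
    have hia : a = i := by simpa using h1
    subst hia
    cases M with
    | nil =>
      have hj : a = j := by simpa using h2
      subst hj
      exact Relation.ReflTransGen.refl
    | cons b M' =>
      have hab : r a b := by
        have := h3 0 (by simp)
        simpa using this
      have htail : Relation.ReflTransGen r b j := by
        refine ih b j rfl (by simpa using h2) ?_
        intro t ht
        have := h3 (t+1) (by simp at ht ⊢; omega)
        simpa using this
      exact Relation.ReflTransGen.head hab htail

lemma evaln_isSome_mono {s s' : ℕ} {c : Code} {x : ℕ} (h : s ≤ s')
    (hs : (evaln s c x).isSome = true) : (evaln s' c x).isSome = true := by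
  obtain ⟨a, ha⟩ := Option.isSome_iff_exists.1 hs
  exact Option.isSome_iff_exists.2 ⟨a, evaln_mono h ha⟩

lemma rtg_to_chain (n i j : ℕ)
    (h : Relation.ReflTransGen
      (fun a b => ((Denumerable.ofNat Code n).eval (Nat.pair a b)).Dom) i j) :
    ∃ (s : ℕ) (L : List ℕ), L.head? = some i ∧ L.getLast? = some j ∧
      ∀ t < L.length - 1,
        (evaln s (Denumerable.ofNat Code n)
          (Nat.pair (L.getD t 0) (L.getD (t+1) 0))).isSome = true := by
  induction h with
  | refl => exact ⟨0, [i], rfl, rfl, by simp⟩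
  | @tail b c hib hbc ih =>
    obtain ⟨s, L, h1, h2, h3⟩ := ih
    have hLne : L ≠ [] := by rintro rfl; simp at h1
    have hlen : 1 ≤ L.length := List.length_pos_iff.2 hLne
    -- get a stage where eval (pair b c) converges
    have hmem : ((Denumerable.ofNat Code n).eval (Nat.pair b c)).get hbc
        ∈ (Denumerable.ofNat Code n).eval (Nat.pair b c) := Part.get_mem hbc
    obtain ⟨s', hs'⟩ := evaln_complete.1 hmem
    refine ⟨max s s', L ++ [c], ?_, ?_, ?_⟩
    · rw [List.head?_append_of_ne_nil _ hLne]
      exact h1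
    · simp [List.getLast?_concat]
    · intro t ht
      simp only [List.length_append, List.length_singleton] at ht
      have ht' : t < L.length := by omega
      by_cases hcase : t < L.length - 1
      · have e1 : (L ++ [c]).getD t 0 = L.getD t 0 := List.getD_append _ _ _ _ ht'
        have e2 : (L ++ [c]).getD (t+1) 0 = L.getD (t+1) 0 :=
          List.getD_append _ _ _ _ (by omega)
        rw [e1, e2]
        exact evaln_isSome_mono (le_max_left _ _) (h3 t hcase)
      · have hteq : t = L.length - 1 := by omega
        have e1 : (L ++ [c]).getD t 0 = b := by
          rw [List.getD_append _ _ _ _ ht']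
          have : L.getLast? = L[L.length - 1]? := List.getLast?_eq_getElem?
          rw [h2] at this
          simp [List.getD, hteq, ← this]
        have e2 : (L ++ [c]).getD (t+1) 0 = c := by
          have : t + 1 = L.length := by omega
          rw [this]
          simp [List.getD, List.getElem?_append_right (le_refl L.length)]
        rw [e1, e2]
        refine evaln_isSome_mono (le_max_right _ _) ?_
        exact Option.isSome_iff_exists.2 ⟨_, hs'⟩


noncomputable def f : ℕ →. ℕ := fun x => Nat.rfind (fun k => Part.some (chk x k))

lemma f_partrec : Nat.Partrec f := by
  have hc : Computable₂ chk := Primrec₂.to_comp chk_primrec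
  have : Partrec f := Partrec.rfind hc.partrec₂
  exact Partrec.nat_iff.1 this

noncomputable def cc : Code := (exists_code.1 f_partrec).choose

lemma cc_eval : cc.eval = f := (exists_code.1 f_partrec).choose_spec

noncomputable def p : ℕ → ℕ := fun n => Encodable.encode (cc.curry n)

lemma p_computable : Computable p :=
  Primrec.to_comp (Primrec.encode.comp (primrec₂_curry.comp (Primrec.const cc) Primrec.id))

lemma V_p (n i j : ℕ) : V (p n) i j ↔ Relation.ReflTransGen (V n) i j := by
  have h1 : V (p n) i j ↔ (f (Nat.pair n (Nat.pair i j))).Dom := by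
    unfold V p
    rw [Denumerable.ofNat_encode, eval_curry, cc_eval]
  rw [h1]
  have h2 : (f (Nat.pair n (Nat.pair i j))).Dom ↔
      ∃ k, chk (Nat.pair n (Nat.pair i j)) k = true := by
    unfold f
    refine Nat.rfind_dom.trans ?_
    constructor
    · rintro ⟨k, hk, -⟩
      exact ⟨k, by simpa [Part.eq_some_iff] using hk⟩
    · rintro ⟨k, hk⟩
      exact ⟨k, by simpa [Part.eq_some_iff] using hk, fun _ => trivial⟩
  rw [h2]
  constructor
  · rintro ⟨k, hk⟩
    have : k = Nat.pair k.unpair.1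
        (Encodable.encode (Denumerable.ofNat (List ℕ) k.unpair.2)) := by
      simp [Denumerable.encode_ofNat, Nat.pair_unpair]
    rw [this] at hk
    obtain ⟨h1', h2', h3'⟩ := (chk_iff _ _ _ _ _).1 hk
    refine chain_to_rtg (V n) _ i j h1' h2' ?_
    intro t ht
    have := h3' t ht
    obtain ⟨a, ha⟩ := Option.isSome_iff_exists.1 this
    unfold V
    exact Part.dom_iff_mem.2 ⟨a, evaln_sound ha⟩
  · intro h
    obtain ⟨s, L, h1', h2', h3'⟩ := rtg_to_chain n i j h
    exact ⟨Nat.pair s (Encodable.encode L), (chk_iff _ _ _ _ _).2 ⟨h1', h2', h3'⟩⟩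

lemma rtg_eq_self {r : ℕ → ℕ → Prop} (hr : Reflexive r) (ht : Transitive r) {a b : ℕ}
    (h : Relation.ReflTransGen r a b) : r a b := by
  induction h with
  | refl => exact hr a
  | tail _ hbc ih => exact ht ih hbc

end S6

theorem stmt6 :
    ∃ p : ℕ → ℕ, Computable p ∧
      (∀ n, (Reflexive (V (p n)) ∧ Transitive (V (p n))) ∧
        ((Reflexive (V n) ∧ Transitive (V n)) → V (p n) = V n)) ∧
      (∀ m n, V m = V n → V (p m) = V (p n)) := by
  refine ⟨S6.p, S6.p_computable, fun n => ⟨⟨?_, ?_⟩, ?_⟩, ?_⟩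
  · intro i
    exact (S6.V_p n i i).2 Relation.ReflTransGen.refl
  · intro i j k hij hjk
    exact (S6.V_p n i k).2 (((S6.V_p n i j).1 hij).trans ((S6.V_p n j k).1 hjk))
  · rintro ⟨hr, ht⟩
    funext i j
    apply propext
    rw [S6.V_p]
    exact ⟨fun h => S6.rtg_eq_self hr ht h, fun h => Relation.ReflTransGen.single h⟩
  · intro m n hmn
    funext i j
    apply propext
    rw [S6.V_p, S6.V_p, hmn]
end

section
/- There is a computable function o : ℕ → ℕ such that for every n: the relation V_{o(n)} is a partial order (reflexive, transitive, and antisymmetric), and if V_n is a partial order then V_{o(n)} = V_n. -/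
open Relation

namespace PO7

/-- one squaring step of transitive closure on a list of encoded pairs -/
def sqStep (X : List ℕ) : List ℕ :=
  X ++ X.flatMap fun q => X.filterMap fun p =>
    bif q.unpair.2 == p.unpair.1 then some (Nat.pair q.unpair.1 p.unpair.2) else none

lemma mem_sqStep {X : List ℕ} {k : ℕ} :
    k ∈ sqStep X ↔ k ∈ X ∨ ∃ a b c, Nat.pair a b ∈ X ∧ Nat.pair b c ∈ X ∧ k = Nat.pair a c := by
  simp only [sqStep, List.mem_append, List.mem_flatMap, List.mem_filterMap]
  constructor
  · rintro (h | ⟨q, hq, p, hp, h⟩)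
    · exact Or.inl h
    · refine Or.inr ⟨q.unpair.1, q.unpair.2, p.unpair.2, ?_⟩
      cases hbc : (q.unpair.2 == p.unpair.1) with
      | false => simp [hbc] at h
      | true =>
        simp only [hbc, cond_true, Option.some.injEq] at h
        have hbc' : q.unpair.2 = p.unpair.1 := by simpa using hbc
        exact ⟨by simpa [Nat.pair_unpair] using hq,
          by rw [hbc']; simpa [Nat.pair_unpair] using hp, h.symm⟩
  · rintro (h | ⟨a, b, c, h1, h2, rfl⟩)
    · exact Or.inl h
    · exact Or.inr ⟨Nat.pair a b, h1, Nat.pair b c, h2, by simp [Nat.unpair_pair]⟩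

lemma subset_sqStep (X : List ℕ) : X ⊆ sqStep X := fun _ h => List.mem_append.2 (Or.inl h)

lemma sqStep_congr {X Y : List ℕ} (h : ∀ x, x ∈ X ↔ x ∈ Y) :
    ∀ k, k ∈ sqStep X ↔ k ∈ sqStep Y := by
  intro k
  simp only [mem_sqStep, h]

def iterSq (m : ℕ) (L : List ℕ) : List ℕ := Nat.rec L (fun _ ih => sqStep ih) m

@[simp] lemma iterSq_zero (L : List ℕ) : iterSq 0 L = L := rfl
@[simp] lemma iterSq_succ (m : ℕ) (L : List ℕ) : iterSq (m + 1) L = sqStep (iterSq m L) := rfl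

lemma iterSq_mono {m m' : ℕ} (h : m ≤ m') (L : List ℕ) : iterSq m L ⊆ iterSq m' L := by
  induction h with
  | refl => exact fun _ h => h
  | step _ ih => exact fun x hx => subset_sqStep _ (by exact ih hx)

lemma subset_iterSq (m : ℕ) (L : List ℕ) : L ⊆ iterSq m L := iterSq_mono (Nat.zero_le m) L

lemma iterSq_sound {L : List ℕ} {m a b : ℕ} (h : Nat.pair a b ∈ iterSq m L) :
    TransGen (fun a b => Nat.pair a b ∈ L) a b := by
  induction m generalizing a b with
  | zero => exact TransGen.single h
  | succ m ih =>
    rcases mem_sqStep.1 h with h | ⟨a', b', c', h1, h2, he⟩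
    · exact ih h
    · obtain ⟨rfl, rfl⟩ := Nat.pair_eq_pair.1 he
      exact (ih h1).trans (ih h2)

lemma transGen_exists {L : List ℕ} {a b : ℕ}
    (h : TransGen (fun a b => Nat.pair a b ∈ L) a b) : ∃ m, Nat.pair a b ∈ iterSq m L := by
  induction h with
  | single h => exact ⟨0, h⟩
  | tail _ h ih =>
    obtain ⟨m, hm⟩ := ih
    exact ⟨m + 1, mem_sqStep.2 (Or.inr ⟨_, _, _, hm, subset_iterSq m L h, rfl⟩)⟩


def compF (L : List ℕ) : Finset ℕ := (L.flatMap fun k => [k.unpair.1, k.unpair.2]).toFinset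

def PF (L : List ℕ) : Finset ℕ := (compF L ×ˢ compF L).image fun p => Nat.pair p.1 p.2

lemma mem_PF {L : List ℕ} {k : ℕ} (h1 : k.unpair.1 ∈ compF L) (h2 : k.unpair.2 ∈ compF L) :
    k ∈ PF L := by
  refine Finset.mem_image.2 ⟨(k.unpair.1, k.unpair.2), Finset.mem_product.2 ⟨h1, h2⟩, ?_⟩
  simp [Nat.pair_unpair]

lemma compF_of_mem_PF {L : List ℕ} {a b : ℕ} (h : Nat.pair a b ∈ PF L) :
    a ∈ compF L ∧ b ∈ compF L := by
  obtain ⟨p, hp, he⟩ := Finset.mem_image.1 h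
  obtain ⟨rfl, rfl⟩ := Nat.pair_eq_pair.1 he.symm
  exact Finset.mem_product.1 hp

lemma iterSq_subset_PF (m : ℕ) (L : List ℕ) : ∀ k ∈ iterSq m L, k ∈ PF L := by
  induction m with
  | zero =>
    intro k hk
    refine mem_PF ?_ ?_ <;>
    · simp only [compF, List.mem_toFinset, List.mem_flatMap]
      exact ⟨k, hk, by simp⟩
  | succ m ih =>
    intro k hk
    rcases mem_sqStep.1 hk with hk | ⟨a, b, c, h1, h2, rfl⟩
    · exact ih k hk
    · exact mem_PF (by simpa [Nat.unpair_pair] using (compF_of_mem_PF (ih _ h1)).1)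
        (by simpa [Nat.unpair_pair] using (compF_of_mem_PF (ih _ h2)).2)

lemma compF_card_le (L : List ℕ) : (compF L).card ≤ 2 * L.length := by
  calc (compF L).card ≤ (L.flatMap fun k => [k.unpair.1, k.unpair.2]).length :=
        List.toFinset_card_le _
    _ = 2 * L.length := by
        induction L with
        | nil => simp
        | cons x L ih => simp [List.flatMap_cons, ih]; ring

lemma PF_card_le (L : List ℕ) : (PF L).card ≤ 4 * (L.length * L.length) := by
  calc (PF L).card ≤ (compF L ×ˢ compF L).card := Finset.card_image_le
    _ = (compF L).card * (compF L).card := Finset.card_product _ _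
    _ ≤ (2 * L.length) * (2 * L.length) :=
        Nat.mul_le_mul (compF_card_le L) (compF_card_le L)
    _ = 4 * (L.length * L.length) := by ring

lemma exists_stable (L : List ℕ) :
    ∃ m ≤ 4 * (L.length * L.length),
      (iterSq (m + 1) L).toFinset = (iterSq m L).toFinset := by
  set N := 4 * (L.length * L.length) with hN
  by_contra h
  push_neg at h
  have hsub : ∀ m, (iterSq m L).toFinset ⊆ (iterSq (m + 1) L).toFinset := by
    intro m
    intro x hx
    simp only [List.mem_toFinset] at hx ⊢
    exact subset_sqStep _ hx
  have hstrict : ∀ m ≤ N, (iterSq m L).toFinset ⊂ (iterSq (m + 1) L).toFinset := by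
    intro m hm
    exact (Finset.ssubset_iff_of_subset (hsub m)).2 (by
      rcases Finset.exists_of_ssubset (((hsub m).ssubset_of_ne (fun he => h m hm he.symm))) with
        ⟨x, hx1, hx2⟩
      exact ⟨x, hx1, hx2⟩)
  have hcard : ∀ m ≤ N + 1, m ≤ (iterSq m L).toFinset.card := by
    intro m hm
    induction m with
    | zero => exact Nat.zero_le _
    | succ m ih =>
      have h1 := ih (le_trans (Nat.le_succ m) hm)
      have h2 := Finset.card_lt_card (hstrict m (Nat.lt_succ_iff.1 hm))
      omega
  have hle : (iterSq (N + 1) L).toFinset.card ≤ N := by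
    rw [hN]
    refine le_trans (Finset.card_le_card ?_) (PF_card_le L)
    intro x hx
    exact iterSq_subset_PF _ _ x (List.mem_toFinset.1 hx)
  have := hcard (N + 1) le_rfl
  omega

def tcl (L : List ℕ) : List ℕ := iterSq (4 * (L.length * L.length) + 1) L

lemma subset_tcl (L : List ℕ) : L ⊆ tcl L := subset_iterSq _ L

lemma mem_tcl_of_iterSq {L : List ℕ} {j k : ℕ} (h : k ∈ iterSq j L) : k ∈ tcl L := by
  obtain ⟨m, hm, hstab⟩ := exists_stable L
  set N := 4 * (L.length * L.length) with hN
  have hstab' : ∀ i, m ≤ i → ∀ x, x ∈ iterSq i L ↔ x ∈ iterSq m L := by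
    intro i hi
    induction hi with
    | refl => exact fun x => Iff.rfl
    | @step i' hle ih =>
      have h2 : ∀ y, y ∈ sqStep (iterSq i' L) ↔ y ∈ sqStep (iterSq m L) := sqStep_congr ih
      have h3 : ∀ y, y ∈ sqStep (iterSq m L) ↔ y ∈ iterSq m L := by
        intro y
        constructor
        · intro hy
          have : y ∈ (iterSq (m+1) L).toFinset := List.mem_toFinset.2 hy
          rw [hstab] at this
          exact List.mem_toFinset.1 this
        · exact fun hy => subset_sqStep _ hy
      exact fun x => ((h2 x).trans (h3 x))
  by_cases hj : j ≤ N + 1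
  · exact iterSq_mono hj L h
  · have hmj : m ≤ j := by omega
    have : k ∈ iterSq m L := (hstab' j hmj k).1 h
    exact iterSq_mono (by omega) L this

lemma mem_tcl_iff {L : List ℕ} {a b : ℕ} :
    Nat.pair a b ∈ tcl L ↔ TransGen (fun a b => Nat.pair a b ∈ L) a b :=
  ⟨iterSq_sound, fun h => by
    obtain ⟨m, hm⟩ := transGen_exists h
    exact mem_tcl_of_iterSq hm⟩

lemma tcl_mono_of_subset {L L' : List ℕ} (h : ∀ x, x ∈ L → x ∈ L') :
    ∀ k, k ∈ tcl L → k ∈ tcl L' := by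
  intro k hk
  have : k = Nat.pair k.unpair.1 k.unpair.2 := (Nat.pair_unpair k).symm
  rw [this] at hk ⊢
  exact mem_tcl_iff.2 (Relation.TransGen.mono (p := fun a b => Nat.pair a b ∈ L') (fun a b hab => h _ hab) _ _ (mem_tcl_iff.1 hk))

/-! ### stages -/

def cde (n : ℕ) : Nat.Partrec.Code := Denumerable.ofNat Nat.Partrec.Code n

def stage (n s : ℕ) : List ℕ := (List.range s).filterMap fun k =>
  bif (Nat.Partrec.Code.evaln s (cde n) k).isSome then some k else none

lemma mem_stage {n s k : ℕ} :
    k ∈ stage n s ↔ (Nat.Partrec.Code.evaln s (cde n) k).isSome = true := by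
  constructor
  · intro h
    obtain ⟨x, hx, he⟩ := List.mem_filterMap.1 h
    cases hb : (Nat.Partrec.Code.evaln s (cde n) x).isSome with
    | false => simp [hb] at he
    | true => simp only [hb, cond_true, Option.some.injEq] at he; rwa [he] at hb
  · intro h
    refine List.mem_filterMap.2 ⟨k, ?_, by simp [h]⟩
    obtain ⟨x, hx⟩ := Option.isSome_iff_exists.1 h
    exact List.mem_range.2 (Nat.Partrec.Code.evaln_bound hx)

lemma stage_mono {n s s' : ℕ} (h : s ≤ s') : ∀ k, k ∈ stage n s → k ∈ stage n s' := by
  intro k hk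
  have := mem_stage.1 hk
  obtain ⟨x, hx⟩ := Option.isSome_iff_exists.1 this
  exact mem_stage.2 (Option.isSome_iff_exists.2 ⟨x, Nat.Partrec.Code.evaln_mono h hx⟩)

lemma stage_sub_V {n s a b : ℕ} (h : Nat.pair a b ∈ stage n s) : V n a b := by
  have := mem_stage.1 h
  obtain ⟨x, hx⟩ := Option.isSome_iff_exists.1 this
  exact Part.dom_iff_mem.2 ⟨x, Nat.Partrec.Code.evaln_sound hx⟩

lemma V_exists_stage {n a b : ℕ} (h : V n a b) : ∃ s, Nat.pair a b ∈ stage n s := by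
  obtain ⟨x, hx⟩ := Part.dom_iff_mem.1 h
  obtain ⟨s, hs⟩ := Nat.Partrec.Code.evaln_complete.1 hx
  exact ⟨s, mem_stage.2 (Option.isSome_iff_exists.2 ⟨x, hs⟩)⟩

def Dlist (n s : ℕ) : List ℕ := tcl (stage n s)

lemma Dlist_mono {n s s' : ℕ} (h : s ≤ s') : ∀ k, k ∈ Dlist n s → k ∈ Dlist n s' :=
  tcl_mono_of_subset (stage_mono h)

lemma mem_Dlist_iff {n s a b : ℕ} :
    Nat.pair a b ∈ Dlist n s ↔ TransGen (fun a b => Nat.pair a b ∈ stage n s) a b :=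
  mem_tcl_iff

lemma Dlist_sub_V {n s a b : ℕ} (ht : Transitive (V n)) (h : Nat.pair a b ∈ Dlist n s) :
    V n a b := by
  have := Relation.TransGen.mono (p := V n) (fun a b hab => stage_sub_V hab) _ _ (mem_Dlist_iff.1 h)
  haveI hT : IsTrans ℕ (V n) := ⟨fun _ _ _ h1 h2 => ht h1 h2⟩
  rwa [Relation.transGen_eq_self] at this

/-! ### the boolean checks -/

def memB (L : List ℕ) (k : ℕ) : Bool :=
  decide (0 < (L.filterMap fun x => bif x == k then some x else none).length)

lemma memB_iff {L : List ℕ} {k : ℕ} : memB L k = true ↔ k ∈ L := by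
  rw [memB, decide_eq_true_eq]
  constructor
  · intro h
    by_contra hk
    have he : (L.filterMap fun x => bif x == k then some x else none) = [] := by
      refine List.filterMap_eq_nil_iff.2 fun x hx => ?_
      cases hxk : (x == k) with
      | false => simp
      | true => exact absurd ((beq_iff_eq).1 hxk ▸ hx) hk
    rw [he] at h
    simp at h
  · intro hk
    have hmem : k ∈ (L.filterMap fun x => bif x == k then some x else none) :=
      List.mem_filterMap.2 ⟨k, hk, by simp⟩
    exact List.length_pos_of_mem hmem

def goodB (n s : ℕ) : Bool :=
  ((Dlist n s).filterMap fun k =>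
    bif (!(k.unpair.1 == k.unpair.2)) && memB (Dlist n s) (Nat.pair k.unpair.2 k.unpair.1)
    then some k else none).length == 0

lemma goodB_iff {n s : ℕ} :
    goodB n s = true ↔
      ∀ a b, a ≠ b → Nat.pair a b ∈ Dlist n s → Nat.pair b a ∈ Dlist n s → False := by
  rw [goodB, beq_iff_eq, List.length_eq_zero_iff, List.filterMap_eq_nil_iff]
  constructor
  · intro h a b hab h1 h2
    have := h (Nat.pair a b) h1
    rw [Nat.unpair_pair] at this
    rw [show (a == b) = false from beq_eq_false_iff_ne.2 hab] at this
    simp [memB_iff.2 h2] at this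
  · intro h k hk
    cases hb : (!(k.unpair.1 == k.unpair.2)) && memB (Dlist n s) (Nat.pair k.unpair.2 k.unpair.1) with
    | false => simp [hb]
    | true =>
      simp only [Bool.and_eq_true, Bool.not_eq_true', beq_eq_false_iff_ne, ne_eq] at hb
      exact (h k.unpair.1 k.unpair.2 hb.1
        (by rw [Nat.pair_unpair]; exact hk) (memB_iff.1 hb.2)).elim

def H (x s : ℕ) : Bool :=
  (x.unpair.2.unpair.1 == x.unpair.2.unpair.2) ||
    (goodB x.unpair.1 s && memB (Dlist x.unpair.1 s) x.unpair.2)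

def f : ℕ →. ℕ := fun x => Nat.rfind fun s => Part.some (H x s)

lemma f_dom {x : ℕ} :
    (f x).Dom ↔ x.unpair.2.unpair.1 = x.unpair.2.unpair.2 ∨
      ∃ s, goodB x.unpair.1 s = true ∧ x.unpair.2 ∈ Dlist x.unpair.1 s := by
  rw [f]
  refine Nat.rfind_dom.trans ?_
  constructor
  · rintro ⟨s, hs, -⟩
    simp only [Part.mem_some_iff] at hs
    have hs' : H x s = true := hs.symm
    simp only [H, Bool.or_eq_true, Bool.and_eq_true, beq_iff_eq] at hs'
    rcases hs' with h | ⟨h1, h2⟩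
    · exact Or.inl h
    · exact Or.inr ⟨s, h1, memB_iff.1 h2⟩
  · rintro (h | ⟨s, h1, h2⟩)
    · exact ⟨0, by simp [H, h], fun _ => trivial⟩
    · exact ⟨s, by simp [H, h1, memB_iff.2 h2], fun _ => trivial⟩

/-! ### computability -/

open Primrec in
lemma sqStep_primrec : Primrec sqStep := by
  have hh : Primrec₂ fun (Xq : List ℕ × ℕ) (p : ℕ) =>
      bif Xq.2.unpair.2 == p.unpair.1 then some (Nat.pair Xq.2.unpair.1 p.unpair.2) else none :=
    Primrec.to₂ <| Primrec.cond
      (Primrec.beq.comp (snd.comp (unpair.comp (snd.comp fst)))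
        (fst.comp (unpair.comp snd)))
      (option_some.comp (Primrec₂.natPair.comp
        (fst.comp (unpair.comp (snd.comp fst))) (snd.comp (unpair.comp snd))))
      (const none)
  have hg : Primrec₂ fun (X : List ℕ) (q : ℕ) => X.filterMap fun p =>
      bif q.unpair.2 == p.unpair.1 then some (Nat.pair q.unpair.1 p.unpair.2) else none :=
    Primrec.listFilterMap Primrec.fst hh
  exact list_append.comp Primrec.id (list_flatMap Primrec.id hg)

open Primrec in
lemma tcl_primrec : Primrec tcl := by
  have hlen : Primrec fun L : List ℕ => 4 * (L.length * L.length) + 1 :=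
    succ.comp (nat_mul.comp (const 4) (nat_mul.comp list_length list_length))
  exact (nat_rec' hlen Primrec.id
    (Primrec.to₂ (sqStep_primrec.comp (snd.comp snd)))).of_eq fun L => rfl

open Primrec in
lemma stage_primrec : Primrec₂ stage := by
  have hc : Primrec fun q : (ℕ × ℕ) × ℕ =>
      (Nat.Partrec.Code.evaln q.1.2 (cde q.1.1) q.2).isSome :=
    option_isSome.comp (Nat.Partrec.Code.primrec_evaln.comp
      (Primrec.pair (Primrec.pair (snd.comp fst)
        ((Primrec.ofNat Nat.Partrec.Code).comp (fst.comp fst))) snd))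
  exact Primrec.to₂ <| Primrec.listFilterMap (list_range.comp snd)
    (Primrec.to₂ <| Primrec.cond hc (option_some.comp snd) (const none))

open Primrec in
lemma memB_primrec : Primrec₂ memB := by
  have hlist : Primrec fun p : List ℕ × ℕ =>
      p.1.filterMap fun x => bif x == p.2 then some x else none :=
    Primrec.listFilterMap Primrec.fst
      (Primrec.to₂ <| Primrec.cond (Primrec.beq.comp snd (snd.comp fst))
        (option_some.comp snd) (const none))
  exact Primrec.to₂ <| (nat_lt.comp (const 0) (list_length.comp hlist)).decide

open Primrec in
lemma Dlist_primrec : Primrec₂ Dlist :=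
  Primrec.to₂ <| tcl_primrec.comp stage_primrec

open Primrec in
lemma goodB_primrec : Primrec₂ goodB := by
  have hD : Primrec fun p : ℕ × ℕ => Dlist p.1 p.2 := Dlist_primrec
  have hF : Primrec₂ fun (p : ℕ × ℕ) (k : ℕ) =>
      bif (!(k.unpair.1 == k.unpair.2)) && memB (Dlist p.1 p.2) (Nat.pair k.unpair.2 k.unpair.1)
      then some k else none := by
    have hcond : Primrec fun q : (ℕ × ℕ) × ℕ =>
        (!(q.2.unpair.1 == q.2.unpair.2)) &&
          memB (Dlist q.1.1 q.1.2) (Nat.pair q.2.unpair.2 q.2.unpair.1) :=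
      Primrec.and.comp
        (Primrec.not.comp (Primrec.beq.comp (fst.comp (unpair.comp snd))
          (snd.comp (unpair.comp snd))))
        (memB_primrec.comp (hD.comp fst)
          (Primrec₂.natPair.comp (snd.comp (unpair.comp snd)) (fst.comp (unpair.comp snd))))
    exact Primrec.to₂ <| Primrec.cond hcond (option_some.comp snd) (const (none : Option ℕ))
  have hfm : Primrec fun p : ℕ × ℕ => (Dlist p.1 p.2).filterMap fun k =>
      bif (!(k.unpair.1 == k.unpair.2)) && memB (Dlist p.1 p.2) (Nat.pair k.unpair.2 k.unpair.1)
      then some k else none := Primrec.listFilterMap hD hF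
  exact Primrec.to₂ <| Primrec.beq.comp (list_length.comp hfm) (const 0)

set_option maxHeartbeats 1000000 in
open Primrec in
lemma H_primrec : Primrec₂ H := by
  have hk : Primrec fun p : ℕ × ℕ => p.1.unpair.2 := snd.comp (unpair.comp fst)
  have hn : Primrec fun p : ℕ × ℕ => p.1.unpair.1 := fst.comp (unpair.comp fst)
  have h1 : Primrec fun p : ℕ × ℕ => (p.1.unpair.2.unpair.1 == p.1.unpair.2.unpair.2) :=
    Primrec.beq.comp (fst.comp (unpair.comp hk)) (snd.comp (unpair.comp hk))
  have h2 : Primrec fun p : ℕ × ℕ => goodB p.1.unpair.1 p.2 := goodB_primrec.comp hn snd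
  have h3 : Primrec fun p : ℕ × ℕ => memB (Dlist p.1.unpair.1 p.2) p.1.unpair.2 :=
    memB_primrec.comp (Dlist_primrec.comp hn snd) hk
  exact Primrec.to₂ <| Primrec.or.comp h1 (Primrec.and.comp h2 h3)

lemma f_partrec : Nat.Partrec f := by
  rw [← Partrec.nat_iff]
  exact Partrec.rfind (Computable₂.partrec₂ (Primrec₂.to_comp H_primrec))

end PO7

theorem stmt7 :
    ∃ o : ℕ → ℕ, Computable o ∧
      ∀ n, (Reflexive (V (o n)) ∧ Transitive (V (o n)) ∧
              (∀ a b, V (o n) a b → V (o n) b a → a = b)) ∧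
        ((Reflexive (V n) ∧ Transitive (V n) ∧ (∀ a b, V n a b → V n b a → a = b)) →
          V (o n) = V n) := by
  obtain ⟨c, hc⟩ := Nat.Partrec.Code.exists_code.1 PO7.f_partrec
  refine ⟨fun n => Encodable.encode (Nat.Partrec.Code.curry c n), ?_, ?_⟩
  · exact Primrec.to_comp (Primrec.encode.comp
      (Nat.Partrec.Code.primrec₂_curry.comp (Primrec.const c) Primrec.id))
  intro n
  have key : ∀ i j, V (Encodable.encode (Nat.Partrec.Code.curry c n)) i j ↔
      (i = j ∨ ∃ s, PO7.goodB n s = true ∧ Nat.pair i j ∈ PO7.Dlist n s) := by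
    intro i j
    show ((Denumerable.ofNat Nat.Partrec.Code
      (Encodable.encode (Nat.Partrec.Code.curry c n))).eval (Nat.pair i j)).Dom ↔ _
    rw [Denumerable.ofNat_encode, Nat.Partrec.Code.eval_curry, hc, PO7.f_dom]
    simp [Nat.unpair_pair]
  constructor
  · refine ⟨fun i => (key i i).2 (Or.inl rfl), ?_, ?_⟩
    · intro x y z hxy hyz
      rcases (key x y).1 hxy with rfl | ⟨s1, hg1, hm1⟩
      · exact hyz
      rcases (key y z).1 hyz with rfl | ⟨s2, hg2, hm2⟩
      · exact hxy
      by_cases hxz : x = z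
      · exact (key x z).2 (Or.inl hxz)
      refine (key x z).2 (Or.inr ⟨max s1 s2, ?_, ?_⟩)
      · rcases max_choice s1 s2 with h | h <;> rw [h] <;> assumption
      · have h1 : Nat.pair x y ∈ PO7.Dlist n (max s1 s2) :=
          PO7.Dlist_mono (le_max_left _ _) _ hm1
        have h2 : Nat.pair y z ∈ PO7.Dlist n (max s1 s2) :=
          PO7.Dlist_mono (le_max_right _ _) _ hm2
        exact PO7.mem_Dlist_iff.2 ((PO7.mem_Dlist_iff.1 h1).trans (PO7.mem_Dlist_iff.1 h2))
    · intro a b hab hba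
      by_contra hne
      rcases (key a b).1 hab with rfl | ⟨s1, hg1, hm1⟩
      · exact hne rfl
      rcases (key b a).1 hba with he | ⟨s2, hg2, hm2⟩
      · exact hne he.symm
      have h1 := PO7.Dlist_mono (le_max_left s1 s2) _ hm1
      have h2 := PO7.Dlist_mono (le_max_right s1 s2) _ hm2
      have hg : PO7.goodB n (max s1 s2) = true := by
        rcases max_choice s1 s2 with h | h <;> rw [h] <;> assumption
      exact PO7.goodB_iff.1 hg a b hne h1 h2
  · rintro ⟨hrefl, htrans, hanti⟩
    funext i j
    apply propext
    constructor
    · intro h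
      rcases (key i j).1 h with rfl | ⟨s, hg, hm⟩
      · exact hrefl i
      · exact PO7.Dlist_sub_V htrans hm
    · intro h
      by_cases hij : i = j
      · exact (key i j).2 (Or.inl hij)
      obtain ⟨s, hs⟩ := PO7.V_exists_stage h
      refine (key i j).2 (Or.inr ⟨s, ?_, PO7.subset_tcl _ hs⟩)
      refine PO7.goodB_iff.2 fun a b hab h1 h2 => ?_
      exact hab (hanti a b (PO7.Dlist_sub_V htrans h1) (PO7.Dlist_sub_V htrans h2))
end
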